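/- arXiv:1007.0418 — 4 statements merged into one kernel-verified Lean document; each statement's English description precedes it below -/
import Mathlib

section
/- If K is a clique complex (i.e., every set of vertices that are pairwise joined by edges of K is a simplex of K), σ is a simplex of K, and σ₀, σ₁, …, σ_r is a collection of faces of σ, then the union over i of the intersections ⋂_{v ∈ σ_i} st_K(v) of the closed simplicial stars of the vertices of σ_i is a contractible subcomplex of K. -/
attribute [local instance] Classical.propDecidable

/-- A finite abstract simplicial complex on vertex type `V`:
a downward-closed family of nonempty finite vertex sets. -/
structure ASC (V : Type) where
  faces : Set (Finset V)
  nonempty_of_mem : ∀ s ∈ faces, s.Nonempty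
  down_closed : ∀ s ∈ faces, ∀ t : Finset V, t ⊆ s → t.Nonempty → t ∈ faces

namespace ASC

variable {V : Type}

/-- The geometric realization of `K`, as a subspace of `V → ℝ`. -/
def space [Fintype V] (K : ASC V) : Type :=
  {f : V → ℝ // (∃ s ∈ K.faces, ∀ v, f v ≠ 0 → v ∈ s) ∧ (∀ v, 0 ≤ f v) ∧ ∑ v, f v = 1}

noncomputable instance [Fintype V] (K : ASC V) : TopologicalSpace K.space :=
  instTopologicalSpaceSubtype

/-- `K` is a clique (flag) complex: every nonempty vertex set which pairwise spans
edges of `K` is a face of `K`. -/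
def IsClique (K : ASC V) : Prop :=
  ∀ s : Finset V, s.Nonempty →
    (∀ v ∈ s, ∀ w ∈ s, ({v, w} : Finset V) ∈ K.faces) → s ∈ K.faces

/-- The closed star of a vertex `v`: faces `τ` with `τ ∪ {v}` a face. -/
def star (K : ASC V) (v : V) : ASC V where
  faces := {s | s ∈ K.faces ∧ insert v s ∈ K.faces}
  nonempty_of_mem s hs := K.nonempty_of_mem s hs.1
  down_closed s hs t hts htne :=
    ⟨K.down_closed s hs.1 t hts htne,
     K.down_closed _ hs.2 _ (Finset.insert_subset_insert v hts) (Finset.insert_nonempty _ _)⟩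

/-- The intersection `⋂_{v ∈ σ} st_K(v)` of the stars of the vertices of `σ`. -/
def interStars (K : ASC V) (σ : Finset V) : ASC V where
  faces := {s | s ∈ K.faces ∧ ∀ v ∈ σ, insert v s ∈ K.faces}
  nonempty_of_mem s hs := K.nonempty_of_mem s hs.1
  down_closed s hs t hts htne :=
    ⟨K.down_closed s hs.1 t hts htne, fun v hv =>
      K.down_closed _ (hs.2 v hv) _ (Finset.insert_subset_insert v hts)
        (Finset.insert_nonempty _ _)⟩

/-- The star cluster `SC_K(σ) = ⋃_{v ∈ σ} st_K(v)` of a simplex `σ`. -/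
def starCluster (K : ASC V) (σ : Finset V) : ASC V where
  faces := {s | s ∈ K.faces ∧ ∃ v ∈ σ, insert v s ∈ K.faces}
  nonempty_of_mem s hs := K.nonempty_of_mem s hs.1
  down_closed s hs t hts htne :=
    ⟨K.down_closed s hs.1 t hts htne, by
      obtain ⟨v, hv, hins⟩ := hs.2
      exact ⟨v, hv, K.down_closed _ hins _ (Finset.insert_subset_insert v hts)
        (Finset.insert_nonempty _ _)⟩⟩

/-- Intersection of two simplicial complexes. -/
def inter (K₁ K₂ : ASC V) : ASC V where
  faces := K₁.faces ∩ K₂.faces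
  nonempty_of_mem s hs := K₁.nonempty_of_mem s hs.1
  down_closed s hs t hts htne :=
    ⟨K₁.down_closed s hs.1 t hts htne, K₂.down_closed s hs.2 t hts htne⟩

end ASC

/-- The relation on `X × [0,1]` collapsing `X × {0}` and `X × {1}` to points. -/
def SuspRel (X : Type) [TopologicalSpace X] :
    X × unitInterval → X × unitInterval → Prop := fun a b =>
  (a.2 = 0 ∧ b.2 = 0) ∨ (a.2 = 1 ∧ b.2 = 1)

/-- The unreduced suspension of a topological space. -/
def Susp (X : Type) [TopologicalSpace X] : Type := Quot (SuspRel X)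

noncomputable instance Susp.ts (X : Type) [TopologicalSpace X] : TopologicalSpace (Susp X) :=
  instTopologicalSpaceQuot

/-- The independence complex of a graph: faces are the nonempty independent vertex sets. -/
def SimpleGraph.indepComplex (G : SimpleGraph V) : ASC V where
  faces := {s | s.Nonempty ∧ ∀ v ∈ s, ∀ w ∈ s, ¬ G.Adj v w}
  nonempty_of_mem s hs := hs.1
  down_closed s hs t hts htne := ⟨htne, fun v hv w hw => hs.2 v (hts hv) w (hts hw)⟩

/-- `X` is `n`-connected (`n : ℤ`): nonempty when `n ≥ -1`, and all homotopy
groups `π_k` for `0 ≤ k ≤ n` are trivial (triviality of `π_0` meaning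
path-connectedness). -/
def NConnected (n : ℤ) (X : Type) [TopologicalSpace X] : Prop :=
  (-1 ≤ n → Nonempty X) ∧
    ∀ k : ℕ, (k : ℤ) ≤ n → ∀ x : X, Subsingleton (HomotopyGroup (Fin k) X x)

/- ===== auxiliary development for statement0 ===== -/

namespace SCAux

open Finset Set

variable {V : Type} [Fintype V]

set_option linter.unusedVariables false
set_option linter.unusedSectionVars false

/-- support of a function as a finset -/
noncomputable def supp (f : V → ℝ) : Finset V := Finset.univ.filter (fun v => f v ≠ 0)

lemma mem_supp {f : V → ℝ} {v : V} : v ∈ supp f ↔ f v ≠ 0 := by simp [supp]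

/-- downward closed family -/
def DC (F : Set (Finset V)) : Prop :=
  ∀ s ∈ F, ∀ t : Finset V, t ⊆ s → t.Nonempty → t ∈ F

lemma DC.iUnion {ι : Type*} {F : ι → Set (Finset V)} (h : ∀ i, DC (F i)) :
    DC (⋃ i, F i) := by
  rintro s hs t hts htne
  obtain ⟨i, hi⟩ := Set.mem_iUnion.mp hs
  exact Set.mem_iUnion.mpr ⟨i, h i s hi t hts htne⟩

/-- the geometric realization of a family of faces, as a subset of `V → ℝ` -/
def R (F : Set (Finset V)) : Set (V → ℝ) :=
  {f | supp f ∈ F ∧ (∀ v, 0 ≤ f v) ∧ ∑ v, f v = 1}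

lemma R_mono {F G : Set (Finset V)} (h : F ⊆ G) : R F ⊆ R G :=
  fun f hf => ⟨h hf.1, hf.2⟩

lemma supp_nonempty {f : V → ℝ} (h : ∑ v, f v = 1) : (supp f).Nonempty := by
  by_contra hne
  rw [Finset.not_nonempty_iff_eq_empty] at hne
  have hz : ∀ v, f v = 0 := by
    intro v
    by_contra hv
    exact absurd (hne ▸ mem_supp.mpr hv) (Finset.notMem_empty v)
  rw [Finset.sum_congr rfl (fun v _ => hz v), Finset.sum_const_zero] at h
  exact one_ne_zero h.symm

lemma R_union {F G : Set (Finset V)} : R (F ∪ G) = R F ∪ R G := by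
  ext f
  constructor
  · rintro ⟨h1 | h1, h2⟩
    · exact Or.inl ⟨h1, h2⟩
    · exact Or.inr ⟨h1, h2⟩
  · rintro (⟨h1, h2⟩ | ⟨h1, h2⟩)
    · exact ⟨Or.inl h1, h2⟩
    · exact ⟨Or.inr h1, h2⟩

lemma mem_R_iff {F : Set (Finset V)} (hDC : DC F) {f : V → ℝ} :
    f ∈ R F ↔ (∃ s ∈ F, ∀ v, f v ≠ 0 → v ∈ s) ∧ (∀ v, 0 ≤ f v) ∧ ∑ v, f v = 1 := by
  constructor
  · rintro ⟨h1, h2, h3⟩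
    exact ⟨⟨supp f, h1, fun v hv => mem_supp.mpr hv⟩, h2, h3⟩
  · rintro ⟨⟨s, hs, hsub⟩, h2, h3⟩
    refine ⟨hDC s hs (supp f) (fun v hv => hsub v (mem_supp.mp hv)) (supp_nonempty h3), h2, h3⟩

lemma isClosed_R {F : Set (Finset V)} (hDC : DC F) : IsClosed (R F) := by
  have : R F = ⋃ s ∈ F,
      ({f : V → ℝ | ∀ v, v ∉ s → f v = 0} ∩ {f | ∀ v, 0 ≤ f v} ∩ {f | ∑ v, f v = 1}) := by
    ext f
    simp only [Set.mem_iUnion, Set.mem_inter_iff, Set.mem_setOf_eq, exists_prop]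
    constructor
    · rintro ⟨h1, h2, h3⟩
      exact ⟨supp f, h1, ⟨⟨fun v hv => by_contra fun h => hv (mem_supp.mpr h), h2⟩, h3⟩⟩
    · rintro ⟨s, hs, ⟨⟨h1, h2⟩, h3⟩⟩
      exact (mem_R_iff hDC).mpr ⟨⟨s, hs, fun v hv => by_contra fun h => hv (h1 v h)⟩, h2, h3⟩
  rw [this]
  apply Set.Finite.isClosed_biUnion (Set.toFinite F)
  intro s hs
  apply IsClosed.inter
  · apply IsClosed.inter
    · have : {f : V → ℝ | ∀ v, v ∉ s → f v = 0} = ⋂ v ∈ Finset.univ \ s,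
          {f : V → ℝ | f v = 0} := by
        ext f
        simp
      rw [this]
      apply isClosed_biInter
      intro v _
      exact isClosed_eq (continuous_apply v) continuous_const
    · have : {f : V → ℝ | ∀ v, 0 ≤ f v} = ⋂ v, {f : V → ℝ | 0 ≤ f v} := by ext f; simp
      rw [this]
      exact isClosed_iInter fun v => isClosed_le continuous_const (continuous_apply v)
  · exact isClosed_eq (continuous_finset_sum _ fun v _ => continuous_apply v) continuous_const

/-- transfer of contractibility along a homotopy retraction -/
lemma contractible_of_hretract {X Y : Type} [TopologicalSpace X] [TopologicalSpace Y]
    (hY : ContractibleSpace Y) (h : C(X, Y)) (i : C(Y, X))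
    (H : (i.comp h).Homotopic (ContinuousMap.id X)) : ContractibleSpace X := by
  obtain ⟨y, hy⟩ := id_nullhomotopic Y
  rw [contractible_iff_id_nullhomotopic]
  refine ⟨i y, H.symm.trans ?_⟩
  have h2 := ContinuousMap.Homotopic.comp
    (ContinuousMap.Homotopic.refl i)
    (ContinuousMap.Homotopic.comp hy (ContinuousMap.Homotopic.refl h))
  rw [ContinuousMap.id_comp h, ContinuousMap.const_comp, ContinuousMap.comp_const] at h2
  exact h2

/-- dirac delta -/
noncomputable def delta (a : V) : V → ℝ := fun v => if v = a then 1 else 0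

lemma sum_delta (a : V) : ∑ v, delta a v = 1 := by simp [delta]

lemma delta_nonneg (a v : V) : 0 ≤ delta a v := by
  unfold delta; split <;> norm_num

lemma supp_delta (a : V) : supp (delta a) = {a} := by
  ext v
  simp only [mem_supp, delta, Finset.mem_singleton]
  split <;> simp_all

/-- linear push towards the vertex `a` -/
noncomputable def push (a : V) (f : V → ℝ) (t : ℝ) : V → ℝ :=
  fun v => (1 - t) * f v + t * delta a v

lemma push_zero (a : V) (f : V → ℝ) : push a f 0 = f := by
  funext v; simp [push]

lemma push_one (a : V) (f : V → ℝ) : push a f 1 = delta a := by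
  funext v; simp [push]

lemma push_mem {F : Set (Finset V)} (hDC : DC F) {a : V}
    (hcone : ∀ s ∈ F, insert a s ∈ F) {f : V → ℝ} (hf : f ∈ R F)
    {t : ℝ} (ht0 : 0 ≤ t) (ht1 : t ≤ 1) : push a f t ∈ R F := by
  obtain ⟨h1, h2, h3⟩ := hf
  have hsum : ∑ v, push a f t v = 1 := by
    unfold push
    rw [Finset.sum_add_distrib, ← Finset.mul_sum, ← Finset.mul_sum, h3, sum_delta]
    ring
  refine ⟨?_, ?_, hsum⟩
  · have hsub : supp (push a f t) ⊆ insert a (supp f) := by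
      intro v hv
      rw [mem_supp] at hv
      rcases eq_or_ne v a with rfl | hva
      · exact Finset.mem_insert_self _ _
      · apply Finset.mem_insert_of_mem
        rw [mem_supp]
        intro hz
        apply hv
        simp [push, hz, delta, hva]
    exact hDC _ (hcone _ h1) _ hsub (supp_nonempty hsum)
  · intro v
    have hh1 := mul_nonneg (by linarith : (0:ℝ) ≤ 1 - t) (h2 v)
    have hh2 := mul_nonneg ht0 (delta_nonneg a v)
    simp only [push]
    linarith

end SCAux

/- ===== combinatorial layer ===== -/

namespace SCAux

open Finset Set

variable {V : Type} [Fintype V] {K : ASC V} {σ : Finset V}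

set_option linter.unusedVariables false
set_option linter.unusedSectionVars false

lemma ISF_DC (τ : Finset V) : DC ((K.interStars τ).faces) :=
  fun s hs t hts htne => (K.interStars τ).down_closed s hs t hts htne

lemma pair_sub {v w : V} (u : Finset V) (hu : u ∈ K.faces) (hvu : v ∈ u) (hwu : w ∈ u) :
    ({v, w} : Finset V) ∈ K.faces :=
  K.down_closed u hu _
    (by intro x hx; simp only [Finset.mem_insert, Finset.mem_singleton] at hx;
        rcases hx with rfl | rfl <;> assumption)
    ⟨v, by simp⟩

lemma union_face (hK : K.IsClique) (hσ : σ ∈ K.faces) {s τ : Finset V} (hτ : τ ⊆ σ)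
    (hs : s ∈ K.faces) (h : ∀ v ∈ τ, insert v s ∈ K.faces) : s ∪ τ ∈ K.faces := by
  apply hK _ ((K.nonempty_of_mem s hs).mono Finset.subset_union_left)
  intro v hv w hw
  rcases Finset.mem_union.mp hv with hv' | hv' <;> rcases Finset.mem_union.mp hw with hw' | hw'
  · exact pair_sub s hs hv' hw'
  · exact pair_sub _ (h w hw') (Finset.mem_insert_of_mem hv') (Finset.mem_insert_self _ _)
  · exact pair_sub _ (h v hv') (Finset.mem_insert_self _ _) (Finset.mem_insert_of_mem hw')
  · exact pair_sub σ hσ (hτ hv') (hτ hw')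

lemma cone_ISF (hK : K.IsClique) (hσ : σ ∈ K.faces) {τ : Finset V} (hτ : τ ⊆ σ) {a : V}
    (ha : a ∈ τ) {s : Finset V} (hs : s ∈ (K.interStars τ).faces) :
    insert a s ∈ (K.interStars τ).faces := by
  have hu : s ∪ τ ∈ K.faces := union_face hK hσ hτ hs.1 hs.2
  constructor
  · exact K.down_closed _ hu _
      (Finset.insert_subset (Finset.mem_union_right _ ha) Finset.subset_union_left)
      (Finset.insert_nonempty _ _)
  · intro v hv
    refine K.down_closed _ hu _ ?_ (Finset.insert_nonempty _ _)
    intro x hx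
    simp only [Finset.mem_insert] at hx
    rcases hx with rfl | rfl | hx
    · exact Finset.mem_union_right _ hv
    · exact Finset.mem_union_right _ ha
    · exact Finset.mem_union_left _ hx

lemma sigma_mem_ISF (hσ : σ ∈ K.faces) {τ : Finset V} (hτ : τ ⊆ σ) :
    σ ∈ (K.interStars τ).faces := by
  refine ⟨hσ, fun v hv => ?_⟩
  rw [Finset.insert_eq_self.mpr (hτ hv)]
  exact hσ

lemma singleton_mem_ISF (hσ : σ ∈ K.faces) {τ : Finset V} (hτ : τ ⊆ σ) {a : V} (ha : a ∈ σ) :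
    ({a} : Finset V) ∈ (K.interStars τ).faces :=
  ISF_DC τ σ (sigma_mem_ISF hσ hτ) {a} (Finset.singleton_subset_iff.mpr ha)
    (Finset.singleton_nonempty a)

/-- contractibility of the realization of a simplicial cone -/
lemma contractible_of_cone (F : Set (Finset V)) (hDC : DC F) (a : V)
    (hcone : ∀ s ∈ F, insert a s ∈ F) (haF : ({a} : Finset V) ∈ F) :
    ContractibleSpace ↥(R F) := by
  have hδ : delta a ∈ R F := by
    refine ⟨?_, delta_nonneg a, sum_delta a⟩
    rw [supp_delta]; exact haF
  rw [contractible_iff_id_nullhomotopic]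
  refine ⟨⟨delta a, hδ⟩, ⟨?_⟩⟩
  have hcont : Continuous (fun p : unitInterval × ↥(R F) =>
      (⟨push a p.2.1 p.1.1, push_mem hDC hcone p.2.2 p.1.2.1 p.1.2.2⟩ : ↥(R F))) := by
    apply Continuous.subtype_mk
    apply continuous_pi
    intro v
    have h1 : Continuous (fun p : unitInterval × ↥(R F) => p.2.1 v) :=
      (continuous_apply v).comp (continuous_subtype_val.comp continuous_snd)
    have h2 : Continuous (fun p : unitInterval × ↥(R F) => (p.1 : ℝ)) :=
      continuous_subtype_val.comp continuous_fst
    simp only [push]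
    continuity
  exact
    { toFun := fun p => ⟨push a p.2.1 p.1.1, push_mem hDC hcone p.2.2 p.1.2.1 p.1.2.2⟩
      continuous_toFun := hcont
      map_zero_left := by
        intro x
        apply Subtype.ext
        simp [push_zero]
      map_one_left := by
        intro x
        apply Subtype.ext
        simp [push_one] }

end SCAux

/- ===== the explicit homotopy-extension formulas ===== -/

namespace SCAux

open Finset Set

variable {V : Type} [Fintype V]

set_option linter.unusedVariables false
set_option linter.unusedSectionVars false

/-- mass on `W` -/
def cW (W : Finset V) (f : V → ℝ) : ℝ := ∑ v ∈ W, f v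

/-- restriction to `W` -/
noncomputable def chi (W : Finset V) (f : V → ℝ) : V → ℝ := fun v => if v ∈ W then f v else 0

/-- first branch of the homotopy-extension retraction -/
noncomputable def B1 (W : Finset V) (f : V → ℝ) (t : ℝ) : V → ℝ := fun v =>
  if v ∈ W then (2 / (2 - t)) * f v
  else ((2 - t - 2 * cW W f) / ((2 - t) * (1 - cW W f))) * f v

/-- second branch of the homotopy-extension retraction -/
noncomputable def B2 (W : Finset V) (a : V) (f : V → ℝ) (t : ℝ) : V → ℝ :=
  push a (fun v => chi W f v / cW W f) ((2 * cW W f + t - 2) / cW W f)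

/-- the extension of the cone-contraction of `C` over `A`, by retracting `A × I` -/
noncomputable def Efun (W : Finset V) (a : V) (f : V → ℝ) (t : ℝ) : V → ℝ :=
  if 2 * cW W f + t ≤ 2 then B1 W f t else B2 W a f t

section Elemmas

variable {A C : Set (Finset V)} {W : Finset V} {a : V}

lemma cW_nonneg {f : V → ℝ} (h : ∀ v, 0 ≤ f v) : 0 ≤ cW W f :=
  Finset.sum_nonneg fun v _ => h v

lemma cW_le_one {f : V → ℝ} (h : ∀ v, 0 ≤ f v) (hs : ∑ v, f v = 1) : cW W f ≤ 1 := by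
  rw [← hs]
  exact Finset.sum_le_sum_of_subset_of_nonneg (Finset.subset_univ W) fun v _ _ => h v

lemma sum_chi (f : V → ℝ) : ∑ v, chi W f v = cW W f := by
  unfold chi cW
  rw [Finset.sum_ite_mem, Finset.univ_inter]

lemma sum_compl_W {f : V → ℝ} (hs : ∑ v, f v = 1) :
    ∑ v ∈ Finset.univ \ W, f v = 1 - cW W f := by
  have := Finset.sum_sdiff (f := f) (Finset.subset_univ W)
  rw [hs] at this
  unfold cW
  linarith

lemma offW {f : V → ℝ} (h : ∀ v, 0 ≤ f v) (hs : ∑ v, f v = 1) (hc : cW W f = 1) :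
    ∀ v ∉ W, f v = 0 := by
  intro v hv
  have h0 : ∑ w ∈ Finset.univ \ W, f w = 0 := by rw [sum_compl_W hs, hc]; ring
  have := (Finset.sum_eq_zero_iff_of_nonneg (fun w _ => h w)).mp h0
  exact this v (Finset.mem_sdiff.mpr ⟨Finset.mem_univ v, hv⟩)

/-- `B1` at a point with all mass on `W` is the identity (this forces `t = 0` in branch 1) -/
lemma B1_eq_self_c_one {f : V → ℝ} (h : ∀ v, 0 ≤ f v) (hs : ∑ v, f v = 1)
    (hc : cW W f = 1) : B1 W f 0 = f := by
  funext v
  unfold B1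
  split
  · norm_num
  · rw [offW h hs hc v (by assumption)]; ring

lemma B1_zero {f : V → ℝ} (h : ∀ v, 0 ≤ f v) (hs : ∑ v, f v = 1) : B1 W f 0 = f := by
  rcases eq_or_lt_of_le (cW_le_one h hs) with hc | hc
  · exact B1_eq_self_c_one h hs hc
  · funext v
    unfold B1
    split
    · norm_num
    · have h1 : (1 : ℝ) - cW W f ≠ 0 := by linarith
      field_simp
      ring

lemma Efun_zero {f : V → ℝ} (h : ∀ v, 0 ≤ f v) (hs : ∑ v, f v = 1) : Efun W a f 0 = f := by
  unfold Efun
  rw [if_pos (by linarith [cW_le_one (W := W) h hs])]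
  exact B1_zero h hs

lemma B1_mem (hDCA : DC A) {f : V → ℝ} (hf : f ∈ R A) {t : ℝ} (ht0 : 0 ≤ t) (ht1 : t ≤ 1)
    (hbr : 2 * cW W f + t ≤ 2) : B1 W f t ∈ R A := by
  obtain ⟨h1, h2, h3⟩ := hf
  have h2t : (0:ℝ) < 2 - t := by linarith
  rcases eq_or_lt_of_le (cW_le_one h2 h3) with hc | hc
  · have ht : t = 0 := by nlinarith
    subst ht
    rw [B1_eq_self_c_one h2 h3 hc]
    exact ⟨h1, h2, h3⟩
  · have h1c : (0:ℝ) < 1 - cW W f := by linarith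
    have hnum : (0:ℝ) ≤ 2 - t - 2 * cW W f := by linarith
    have hsum : ∑ v, B1 W f t v = 1 := by
      unfold B1
      rw [← Finset.sum_sdiff (Finset.subset_univ W)]
      rw [Finset.sum_congr rfl (fun v hv => if_neg (Finset.mem_sdiff.mp hv).2),
        Finset.sum_congr rfl (fun v (hv : v ∈ W) => if_pos hv)]
      rw [← Finset.mul_sum, ← Finset.mul_sum, sum_compl_W h3]
      show (2 - t - 2 * cW W f) / ((2 - t) * (1 - cW W f)) * (1 - cW W f)
        + 2 / (2 - t) * cW W f = 1
      field_simp
      ring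
    refine ⟨?_, ?_, hsum⟩
    · have hsub : supp (B1 W f t) ⊆ supp f := by
        intro v hv
        rw [mem_supp] at hv ⊢
        intro hz
        apply hv
        unfold B1
        rw [hz]
        split <;> ring
      exact hDCA _ h1 _ hsub (supp_nonempty hsum)
    · intro v
      unfold B1
      have hv := h2 v
      split
      · positivity
      · positivity

lemma B2_mem (hDCA : DC A) (hDCC : DC C)
    (hfull : ∀ s ∈ A, (∀ x ∈ s, x ∈ W) → s ∈ C)
    (hconeC : ∀ s ∈ C, insert a s ∈ C) {f : V → ℝ} (hf : f ∈ R A) {t : ℝ} (ht0 : 0 ≤ t) (ht1 : t ≤ 1)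
    (hbr : ¬ (2 * cW W f + t ≤ 2)) : B2 W a f t ∈ R C := by
  obtain ⟨h1, h2, h3⟩ := hf
  push_neg at hbr
  have hcpos : (0:ℝ) < cW W f := by linarith [cW_le_one (W := W) h2 h3]
  have hgsum : ∑ v, chi W f v / cW W f = 1 := by
    rw [← Finset.sum_div, sum_chi, div_self (ne_of_gt hcpos)]
  have hg : (fun v => chi W f v / cW W f) ∈ R C := by
    refine ⟨?_, ?_, hgsum⟩
    · have hsubf : supp (fun v => chi W f v / cW W f) ⊆ supp f := by
        intro v hv
        rw [mem_supp] at hv ⊢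
        intro hz
        apply hv
        show chi W f v / cW W f = 0
        unfold chi
        rw [hz]
        split <;> simp
      have hsubW : ∀ x ∈ supp (fun v => chi W f v / cW W f), x ∈ W := by
        intro x hx
        rw [mem_supp] at hx
        by_contra hxW
        apply hx
        show chi W f x / cW W f = 0
        unfold chi
        rw [if_neg hxW]
        simp
      have hA : supp (fun v => chi W f v / cW W f) ∈ A :=
        hDCA _ h1 _ hsubf (supp_nonempty hgsum)
      exact hfull _ hA hsubW
    · intro v
      have : 0 ≤ chi W f v := by unfold chi; split; exacts [h2 v, le_refl 0]
      positivity
  have ht'0 : 0 ≤ (2 * cW W f + t - 2) / cW W f := by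
    apply div_nonneg _ (le_of_lt hcpos)
    linarith
  have ht'1 : (2 * cW W f + t - 2) / cW W f ≤ 1 := by
    rw [div_le_one hcpos]
    have := cW_le_one (W := W) h2 h3
    linarith
  exact push_mem hDCC hconeC hg ht'0 ht'1

lemma Efun_mem (hDCA : DC A) (hDCC : DC C) (hCA : C ⊆ A)
    (hfull : ∀ s ∈ A, (∀ x ∈ s, x ∈ W) → s ∈ C)
    (hconeC : ∀ s ∈ C, insert a s ∈ C) {f : V → ℝ} (hf : f ∈ R A) {t : ℝ} (ht0 : 0 ≤ t) (ht1 : t ≤ 1) :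
    Efun W a f t ∈ R A := by
  unfold Efun
  split
  · exact B1_mem hDCA hf ht0 ht1 (by assumption)
  · exact R_mono hCA (B2_mem hDCA hDCC hfull hconeC hf ht0 ht1 (by assumption))

/-- on `R C`, i.e. when all mass is on `W`, `Efun` agrees with the cone push of `C` -/
lemma Efun_push {f : V → ℝ} (h2 : ∀ v, 0 ≤ f v) (h3 : ∑ v, f v = 1)
    (hc : cW W f = 1) {t : ℝ} (ht0 : 0 ≤ t) (ht1 : t ≤ 1) :
    Efun W a f t = push a f t := by
  have hchi : chi W f = f := by
    funext v
    unfold chi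
    split
    · rfl
    · exact (offW h2 h3 hc v (by assumption)).symm
  unfold Efun
  rcases eq_or_lt_of_le ht0 with ht | ht
  · rw [if_pos (by rw [hc]; linarith), ← ht, B1_eq_self_c_one h2 h3 hc, push_zero]
  · rw [if_neg (by rw [hc]; linarith)]
    unfold B2
    rw [hchi, hc]
    norm_num

/-- the two branches agree on the separating wall `2c + t = 2` -/
lemma B1_eq_B2 {f : V → ℝ} (h2 : ∀ v, 0 ≤ f v) (h3 : ∑ v, f v = 1)
    {t : ℝ} (ht0 : 0 ≤ t) (ht1 : t ≤ 1) (hwall : 2 * cW W f + t = 2) :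
    B1 W f t = B2 W a f t := by
  have hcpos : (0:ℝ) < cW W f := by linarith
  have h2t : 2 - t = 2 * cW W f := by linarith
  have ht' : (2 * cW W f + t - 2) / cW W f = 0 := by
    rw [hwall]
    simp
  funext v
  unfold B2
  rw [ht', push_zero]
  unfold B1 chi
  split
  · rw [h2t]
    field_simp
  · have : 2 - t - 2 * cW W f = 0 := by linarith
    rw [this]
    simp

end Elemmas

end SCAux

/- ===== continuity of the retraction formulas ===== -/

namespace SCAux

open Finset Set

variable {V : Type} [Fintype V]

set_option linter.unusedVariables false
set_option linter.unusedSectionVars false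
set_option maxHeartbeats 1000000

section ContLemmas

variable {D : Type} [TopologicalSpace D] {W : Finset V} {a : V} {fm : D → V → ℝ} {tm : D → ℝ}

lemma cW_continuous (hfm : Continuous fm) : Continuous (fun p => cW W (fm p)) := by
  unfold cW
  exact continuous_finset_sum _ fun v _ => (continuous_apply v).comp hfm

lemma push_continuous (hfm : Continuous fm) (htm : Continuous tm) :
    Continuous (fun p => push a (fm p) (tm p)) := by
  apply continuous_pi
  intro v
  unfold push
  have h1 : Continuous (fun p => fm p v) := (continuous_apply v).comp hfm
  fun_prop

lemma Efun_continuous (hfm : Continuous fm) (htm : Continuous tm)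
    (hnn : ∀ p v, 0 ≤ fm p v) (hsum : ∀ p, ∑ v, fm p v = 1)
    (ht0 : ∀ p, 0 ≤ tm p) (ht1 : ∀ p, tm p ≤ 1) :
    Continuous (fun p => Efun W a (fm p) (tm p)) := by
  have hc : Continuous (fun p => cW W (fm p)) := cW_continuous hfm
  have hcle : ∀ p, cW W (fm p) ≤ 1 := fun p => cW_le_one (hnn p) (hsum p)
  have hcnn : ∀ p, 0 ≤ cW W (fm p) := fun p => cW_nonneg (hnn p)
  have h2t : ∀ p, (0:ℝ) < 2 - tm p := fun p => by linarith [ht1 p]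
  have hg : Continuous (fun p => 2 * cW W (fm p) + tm p) := by fun_prop
  unfold Efun
  apply continuous_if
  · -- agreement on the frontier of the branch region
    intro p hp
    have : p ∈ {p | 2 * cW W (fm p) + tm p = (fun _ => (2:ℝ)) p} :=
      frontier_le_subset_eq hg continuous_const hp
    have hwall : 2 * cW W (fm p) + tm p = 2 := this
    exact B1_eq_B2 (hnn p) (hsum p) (ht0 p) (ht1 p) hwall
  · -- continuity of B1 on the closed branch region
    have hcl : closure {p | 2 * cW W (fm p) + tm p ≤ 2} ⊆
        {p | 2 * cW W (fm p) + tm p ≤ 2} :=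
      closure_minimal (le_refl _) (isClosed_le hg continuous_const)
    intro p₀ hp₀
    have hp₀' := hcl hp₀
    apply ContinuousWithinAt.mono _ hcl
    rw [continuousWithinAt_pi]
    intro v
    by_cases hvW : v ∈ W
    · have : (fun p => B1 W (fm p) (tm p) v) = fun p => (2 / (2 - tm p)) * fm p v := by
        funext p; unfold B1; rw [if_pos hvW]
      rw [this]
      apply ContinuousAt.continuousWithinAt
      have h1 : Continuous (fun p => fm p v) := (continuous_apply v).comp hfm
      apply ContinuousAt.mul _ h1.continuousAt
      apply ContinuousAt.div continuousAt_const (by fun_prop)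
      exact ne_of_gt (h2t p₀)
    · have hB1v : (fun p => B1 W (fm p) (tm p) v) = fun p =>
          ((2 - tm p - 2 * cW W (fm p)) / ((2 - tm p) * (1 - cW W (fm p)))) * fm p v := by
        funext p; unfold B1; rw [if_neg hvW]
      rw [hB1v]
      rcases eq_or_lt_of_le (hcle p₀) with hc1 | hc1
      · -- degenerate corner: c = 1, squeeze
        have htz : tm p₀ = 0 := by
          have h' := hp₀'
          simp only [Set.mem_setOf_eq] at h'
          rw [hc1] at h'
          linarith [ht0 p₀]
        have hval : ((2 - tm p₀ - 2 * cW W (fm p₀)) /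
            ((2 - tm p₀) * (1 - cW W (fm p₀)))) * fm p₀ v = 0 := by
          rw [htz, hc1]
          norm_num
        have hsq : Filter.Tendsto
            (fun p => ((2 - tm p - 2 * cW W (fm p)) /
              ((2 - tm p) * (1 - cW W (fm p)))) * fm p v)
            (nhdsWithin p₀ {p | 2 * cW W (fm p) + tm p ≤ 2}) (nhds 0) := by
          apply squeeze_zero' (t₀ := nhdsWithin p₀ {p | 2 * cW W (fm p) + tm p ≤ 2})
            (g := fun p => 2 * fm p v)
          · apply eventually_nhdsWithin_of_forall
            intro p hp
            simp only [Set.mem_setOf_eq] at hp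
            have hnum : (0:ℝ) ≤ 2 - tm p - 2 * cW W (fm p) := by linarith
            rcases eq_or_lt_of_le (hcle p) with hcp | hcp
            · have hz : (1:ℝ) - cW W (fm p) = 0 := by linarith
              rw [hz]
              simp only [mul_zero, div_zero, zero_mul]
              exact le_refl 0
            · exact mul_nonneg (div_nonneg hnum
                (mul_nonneg (le_of_lt (h2t p)) (by linarith))) (hnn p v)
          · apply eventually_nhdsWithin_of_forall
            intro p hp
            simp only [Set.mem_setOf_eq] at hp
            have hnum : (0:ℝ) ≤ 2 - tm p - 2 * cW W (fm p) := by linarith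
            rcases eq_or_lt_of_le (hcle p) with hcp | hcp
            · have hz : (1:ℝ) - cW W (fm p) = 0 := by linarith
              rw [hz]
              simp only [mul_zero, div_zero, zero_mul]
              linarith [hnn p v]
            · have hfac : (2 - tm p - 2 * cW W (fm p)) /
                  ((2 - tm p) * (1 - cW W (fm p))) ≤ 2 := by
                rw [div_le_iff₀ (mul_pos (h2t p)
                  (show (0:ℝ) < 1 - cW W (fm p) by linarith))]
                nlinarith [mul_nonneg (show (0:ℝ) ≤ 1 - cW W (fm p) by linarith)
                  (show (0:ℝ) ≤ 1 - tm p by linarith [ht1 p]), ht0 p]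
              exact mul_le_mul_of_nonneg_right hfac (hnn p v)
          · have htd : Filter.Tendsto (fun p => 2 * fm p v) (nhdsWithin p₀
                {p | 2 * cW W (fm p) + tm p ≤ 2}) (nhds (2 * fm p₀ v)) :=
              ((continuous_const.mul
                ((continuous_apply v).comp hfm)).continuousAt).continuousWithinAt
            have hfv : fm p₀ v = 0 := offW (hnn p₀) (hsum p₀) hc1 v hvW
            rw [hfv] at htd
            simpa using htd
        unfold ContinuousWithinAt
        convert hsq using 2
        try exact hval
      · -- regular point: c < 1
        apply ContinuousAt.continuousWithinAt
        have h1 : Continuous (fun p => fm p v) := (continuous_apply v).comp hfm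
        apply ContinuousAt.mul _ h1.continuousAt
        apply ContinuousAt.div (by fun_prop) (by fun_prop)
        exact ne_of_gt (mul_pos (h2t p₀) (by linarith))
  · -- continuity of B2 on the closure of the complement region
    have hcl : closure {p | ¬ 2 * cW W (fm p) + tm p ≤ 2} ⊆
        {p | 2 ≤ 2 * cW W (fm p) + tm p} := by
      apply closure_minimal _ (isClosed_le continuous_const hg)
      intro p hp
      simp only [Set.mem_setOf_eq] at hp ⊢
      linarith
    apply ContinuousOn.mono _ hcl
    intro p₀ hp₀
    have hcpos : ∀ p ∈ {p | 2 ≤ 2 * cW W (fm p) + tm p}, (0:ℝ) < cW W (fm p) := by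
      intro p hp
      simp only [Set.mem_setOf_eq] at hp
      linarith [ht1 p]
    rw [continuousWithinAt_pi]
    intro v
    have hB2v : (fun p => B2 W a (fm p) (tm p) v) = fun p =>
        (1 - (2 * cW W (fm p) + tm p - 2) / cW W (fm p)) * (chi W (fm p) v / cW W (fm p)) +
        ((2 * cW W (fm p) + tm p - 2) / cW W (fm p)) * delta a v := by
      funext p; rfl
    rw [hB2v]
    have hchi : Continuous (fun p => chi W (fm p) v) := by
      unfold chi
      split
      · exact (continuous_apply v).comp hfm
      · exact continuous_const
    have hcv : ContinuousWithinAt (fun p => cW W (fm p)) {p | 2 ≤ 2 * cW W (fm p) + tm p} p₀ :=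
      hc.continuousAt.continuousWithinAt
    have hne := ne_of_gt (hcpos p₀ hp₀)
    apply ContinuousWithinAt.add
    · apply ContinuousWithinAt.mul
      · apply ContinuousWithinAt.sub continuousWithinAt_const
        exact ContinuousWithinAt.div
          ((hg.sub continuous_const).continuousAt.continuousWithinAt) hcv hne
      · exact ContinuousWithinAt.div hchi.continuousAt.continuousWithinAt hcv hne
    · apply ContinuousWithinAt.mul _ continuousWithinAt_const
      exact ContinuousWithinAt.div
        ((hg.sub continuous_const).continuousAt.continuousWithinAt) hcv hne

end ContLemmas

end SCAux

/- ===== the inductive step and the main induction ===== -/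

namespace SCAux

open Finset Set

variable {V : Type} [Fintype V] {K : ASC V} {σ : Finset V}

set_option linter.unusedVariables false
set_option linter.unusedSectionVars false
set_option maxHeartbeats 2000000

lemma step (hK : K.IsClique) (hσ : σ ∈ K.faces) {n : ℕ} (σs : Fin (n + 2) → Finset V)
    (hne : ∀ i, (σs i).Nonempty) (hsub : ∀ i, σs i ⊆ σ)
    (IH : ContractibleSpace ↥(R (⋃ i : Fin (n + 1), (K.interStars (σs i.castSucc)).faces))) :
    ContractibleSpace ↥(R (⋃ i : Fin (n + 2), (K.interStars (σs i)).faces)) := by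
  set σl := σs (Fin.last (n + 1)) with hσl
  obtain ⟨a, ha⟩ := hne (Fin.last (n + 1))
  set Af : Set (Finset V) := ⋃ i : Fin (n + 1), (K.interStars (σs i.castSucc)).faces with hAfd
  set Bf : Set (Finset V) := (K.interStars σl).faces with hBfd
  set Cf : Set (Finset V) :=
    ⋃ i : Fin (n + 1), (K.interStars (σs i.castSucc ∪ σl)).faces with hCfd
  set Xf : Set (Finset V) := ⋃ i : Fin (n + 2), (K.interStars (σs i)).faces with hXfd
  have hDCA : DC Af := DC.iUnion (fun i => ISF_DC _)
  have hDCB : DC Bf := ISF_DC _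
  have hDCC : DC Cf := DC.iUnion (fun i => ISF_DC _)
  have hDCX : DC Xf := DC.iUnion (fun i => ISF_DC _)
  have hXAB : Xf = Af ∪ Bf := by
    rw [hXfd, hAfd, hBfd]
    ext s
    simp only [Set.mem_iUnion, Set.mem_union]
    constructor
    · rintro ⟨i, hi⟩
      rcases Fin.eq_castSucc_or_eq_last i with ⟨j, rfl⟩ | rfl
      · exact Or.inl ⟨j, hi⟩
      · exact Or.inr hi
    · rintro (⟨j, hj⟩ | h)
      · exact ⟨j.castSucc, hj⟩
      · exact ⟨Fin.last (n + 1), h⟩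
  have hAX : Af ⊆ Xf := by rw [hXAB]; exact Set.subset_union_left
  have hBX : Bf ⊆ Xf := by rw [hXAB]; exact Set.subset_union_right
  have hCA : Cf ⊆ Af := by
    rintro s hs
    obtain ⟨i, hi⟩ := Set.mem_iUnion.mp hs
    exact Set.mem_iUnion.mpr ⟨i, hi.1, fun v hv => hi.2 v (Finset.mem_union_left _ hv)⟩
  have hABC : ∀ s, s ∈ Af → s ∈ Bf → s ∈ Cf := by
    intro s hsA hsB
    obtain ⟨i, hi⟩ := Set.mem_iUnion.mp hsA
    refine Set.mem_iUnion.mpr ⟨i, hi.1, fun v hv => ?_⟩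
    rcases Finset.mem_union.mp hv with hv' | hv'
    · exact hi.2 v hv'
    · exact hsB.2 v hv'
  set W : Finset V := Finset.univ.filter (fun x => ({x} : Finset V) ∈ Cf) with hWd
  have hW : ∀ x : V, x ∈ W ↔ ({x} : Finset V) ∈ Cf := by
    intro x; simp [hWd]
  have hfull : ∀ s ∈ Af, (∀ x ∈ s, x ∈ W) → s ∈ Cf := by
    intro s hsA hsW
    obtain ⟨j, hj⟩ := Set.mem_iUnion.mp hsA
    have hu : s ∪ (σs j.castSucc ∪ σl) ∈ K.faces := by
      apply hK _ ((K.nonempty_of_mem s hj.1).mono Finset.subset_union_left)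
      intro v hv w hw
      have hsl : ∀ x ∈ s, ∀ y ∈ σl, ({x, y} : Finset V) ∈ K.faces := by
        intro x hx y hy
        obtain ⟨i, hi⟩ := Set.mem_iUnion.mp ((hW x).mp (hsW x hx))
        exact pair_sub _ (hi.2 y (Finset.mem_union_right _ hy))
          (Finset.mem_insert_of_mem (Finset.mem_singleton_self x)) (Finset.mem_insert_self _ _)
      rcases Finset.mem_union.mp hv with hv' | hv' <;>
        rcases Finset.mem_union.mp hw with hw' | hw'
      · exact pair_sub s hj.1 hv' hw'
      · rcases Finset.mem_union.mp hw' with hw'' | hw''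
        · exact pair_sub _ (hj.2 w hw'') (Finset.mem_insert_of_mem hv')
            (Finset.mem_insert_self _ _)
        · exact hsl v hv' w hw''
      · rcases Finset.mem_union.mp hv' with hv'' | hv''
        · exact pair_sub _ (hj.2 v hv'') (Finset.mem_insert_self _ _)
            (Finset.mem_insert_of_mem hw')
        · have := hsl w hw' v hv''
          have hpair : ({w, v} : Finset V) = {v, w} := Finset.pair_comm w v
          rwa [hpair] at this
      · apply pair_sub σ hσ
        · rcases Finset.mem_union.mp hv' with h | h
          exacts [hsub _ h, hsub _ h]
        · rcases Finset.mem_union.mp hw' with h | h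
          exacts [hsub _ h, hsub _ h]
    refine Set.mem_iUnion.mpr ⟨j, hj.1, fun v hv => ?_⟩
    refine K.down_closed _ hu _ ?_ (Finset.insert_nonempty _ _)
    intro x hx
    rcases Finset.mem_insert.mp hx with rfl | hx'
    · exact Finset.mem_union_right _ hv
    · exact Finset.mem_union_left _ hx'
  have hconeB : ∀ s ∈ Bf, insert a s ∈ Bf := fun s hs =>
    cone_ISF hK hσ (hsub _) ha hs
  have hconeC : ∀ s ∈ Cf, insert a s ∈ Cf := by
    intro s hs
    obtain ⟨i, hi⟩ := Set.mem_iUnion.mp hs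
    refine Set.mem_iUnion.mpr ⟨i, cone_ISF hK hσ ?_ (Finset.mem_union_right _ ha) hi⟩
    exact Finset.union_subset (hsub _) (hsub _)
  have haσ : a ∈ σ := hsub _ ha
  have haA : ({a} : Finset V) ∈ Af :=
    Set.mem_iUnion.mpr ⟨0, singleton_mem_ISF hσ (hsub _) haσ⟩
  have hδA : delta a ∈ R Af := by
    refine ⟨?_, delta_nonneg a, sum_delta a⟩
    rw [supp_delta]; exact haA
  -- all mass of a point of `R Af ∩ R Bf` lives on `W`
  have hcone1 : ∀ f : V → ℝ, f ∈ R Af → f ∈ R Bf → cW W f = 1 := by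
    intro f hfA hfB
    have hsC : supp f ∈ Cf := hABC _ hfA.1 hfB.1
    have hsupW : ∀ v ∈ supp f, v ∈ W := by
      intro v hv
      exact (hW v).mpr (hDCC _ hsC {v} (Finset.singleton_subset_iff.mpr hv)
        (Finset.singleton_nonempty v))
    have h0 : ∑ v ∈ Finset.univ \ W, f v = 0 := by
      apply Finset.sum_eq_zero
      intro v hv
      by_contra hz
      exact (Finset.mem_sdiff.mp hv).2 (hsupW v (mem_supp.mpr hz))
    have := sum_compl_W (W := W) hfA.2.2
    rw [h0] at this
    linarith
  -- the homotopy
  set fm : unitInterval × ↥(R Xf) → V → ℝ := fun p => (p.2 : V → ℝ) with hfmd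
  set tm : unitInterval × ↥(R Xf) → ℝ := fun p => 1 - (p.1 : ℝ) with htmd
  have hfmc : Continuous fm := continuous_subtype_val.comp continuous_snd
  have htmc : Continuous tm :=
    continuous_const.sub (continuous_subtype_val.comp continuous_fst)
  have hnn : ∀ p, ∀ v, 0 ≤ fm p v := fun p => p.2.2.2.1
  have hsum : ∀ p, ∑ v, fm p v = 1 := fun p => p.2.2.2.2
  have ht0 : ∀ p, 0 ≤ tm p := fun p => by
    simp only [htmd]; linarith [p.1.2.2]
  have ht1 : ∀ p, tm p ≤ 1 := fun p => by
    simp only [htmd]; linarith [p.1.2.1]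
  have hXsplit : ∀ p : unitInterval × ↥(R Xf), fm p ∉ R Af → fm p ∈ R Bf := by
    intro p hp
    have : fm p ∈ R Xf := p.2.2
    rw [hXAB, R_union] at this
    exact this.resolve_left hp
  set Θ : unitInterval × ↥(R Xf) → V → ℝ := fun p =>
    if fm p ∈ R Af then Efun W a (fm p) (tm p) else push a (fm p) (tm p) with hΘd
  have hΘap : ∀ p, Θ p =
      if fm p ∈ R Af then Efun W a (fm p) (tm p) else push a (fm p) (tm p) := fun p => rfl
  have hΘc : Continuous Θ := by
    apply continuous_if
    · intro p hp
      have hSA : IsClosed {p : unitInterval × ↥(R Xf) | fm p ∈ R Af} :=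
        (isClosed_R hDCA).preimage hfmc
      have hSB : IsClosed {p : unitInterval × ↥(R Xf) | fm p ∈ R Bf} :=
        (isClosed_R hDCB).preimage hfmc
      have hpA : fm p ∈ R Af := by
        have h1 : p ∈ closure {p : unitInterval × ↥(R Xf) | fm p ∈ R Af} := hp.1
        rwa [hSA.closure_eq] at h1
      have hpB : fm p ∈ R Bf := by
        have h1 : p ∈ closure ({p : unitInterval × ↥(R Xf) | fm p ∈ R Af}ᶜ) := by
          rw [closure_compl]
          exact hp.2
        have h2 : ({p : unitInterval × ↥(R Xf) | fm p ∈ R Af}ᶜ : Set _) ⊆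
            {p | fm p ∈ R Bf} := fun q hq => hXsplit q hq
        exact (closure_minimal h2 hSB) h1
      exact Efun_push (hnn p) (hsum p) (hcone1 _ hpA hpB) (ht0 p) (ht1 p)
    · exact (Efun_continuous hfmc htmc hnn hsum ht0 ht1).continuousOn
    · exact (push_continuous hfmc htmc).continuousOn
  have hΘmem : ∀ p, Θ p ∈ R Xf := by
    intro p
    rw [hΘap p]
    split
    · exact R_mono hAX (Efun_mem hDCA hDCC hCA hfull hconeC (by assumption) (ht0 p) (ht1 p))
    · exact R_mono hBX (push_mem hDCB hconeB (hXsplit p (by assumption)) (ht0 p) (ht1 p))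
  have hΘmemA : ∀ x : ↥(R Xf), Θ (0, x) ∈ R Af := by
    intro x
    rw [hΘap (0, x)]
    split
    · exact Efun_mem hDCA hDCC hCA hfull hconeC (by assumption) (ht0 (0, x)) (ht1 (0, x))
    · have : tm (0, x) = 1 := by simp [htmd]
      rw [this, push_one]
      exact hδA
  have hΘid : ∀ x : ↥(R Xf), Θ (1, x) = (x : V → ℝ) := by
    intro x
    have ht : tm (1, x) = 0 := by simp [htmd]
    rw [hΘap (1, x)]
    split
    · rw [ht]
      exact Efun_zero (hnn (1, x)) (hsum (1, x))
    · rw [ht, push_zero]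
  -- package as a homotopy retraction onto `R Af`
  set hret : C(↥(R Xf), ↥(R Af)) :=
    ⟨fun x => ⟨Θ (0, x), hΘmemA x⟩,
      (hΘc.comp (Continuous.prodMk_right (0 : unitInterval))).subtype_mk _⟩ with hretd
  set incl : C(↥(R Af), ↥(R Xf)) :=
    ⟨fun y => ⟨(y : V → ℝ), R_mono hAX y.2⟩, continuous_subtype_val.subtype_mk _⟩ with hincld
  have hH : (incl.comp hret).Homotopic (ContinuousMap.id _) := by
    refine ⟨⟨⟨fun p => ⟨Θ p, hΘmem p⟩, hΘc.subtype_mk _⟩, ?_, ?_⟩⟩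
    · intro x
      apply Subtype.ext
      rfl
    · intro x
      apply Subtype.ext
      exact hΘid x
  exact contractible_of_hretract IH hret incl hH

lemma main (hK : K.IsClique) (hσ : σ ∈ K.faces) :
    ∀ (n : ℕ) (σs : Fin (n + 1) → Finset V), (∀ i, (σs i).Nonempty) → (∀ i, σs i ⊆ σ) →
      ContractibleSpace ↥(R (⋃ i, (K.interStars (σs i)).faces)) := by
  intro n
  induction n with
  | zero =>
    intro σs hne hsub
    have h1 : (⋃ i : Fin 1, (K.interStars (σs i)).faces) = (K.interStars (σs 0)).faces := by
      ext s
      simp only [Set.mem_iUnion]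
      exact ⟨fun ⟨i, hi⟩ => Fin.fin_one_eq_zero i ▸ hi, fun h => ⟨0, h⟩⟩
    rw [h1]
    obtain ⟨a, ha⟩ := hne 0
    exact contractible_of_cone _ (ISF_DC _) a
      (fun s hs => cone_ISF hK hσ (hsub 0) ha hs)
      (singleton_mem_ISF hσ (hsub 0) (hsub 0 ha))
  | succ n IHn =>
    intro σs hne hsub
    exact step hK hσ σs hne hsub
      (IHn (fun i => σs i.castSucc) (fun i => hne _) (fun i => hsub _))

end SCAux

namespace SCAux

variable {V : Type} [Fintype V]

lemma contractible_space_of_R {J : ASC V} (hDC : DC J.faces)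
    (hc : ContractibleSpace ↥(R J.faces)) : ContractibleSpace (ASC.space J) := by
  let h : C(ASC.space J, ↥(R J.faces)) :=
    ⟨fun x => ⟨x.1, (mem_R_iff hDC).mpr x.2⟩, Continuous.subtype_mk continuous_subtype_val _⟩
  let i : C(↥(R J.faces), ASC.space J) :=
    ⟨fun y => ⟨y.1, (mem_R_iff hDC).mp y.2⟩, Continuous.subtype_mk continuous_subtype_val _⟩
  have heq : i.comp h = ContinuousMap.id _ := ContinuousMap.ext fun x => Subtype.ext rfl
  exact contractible_of_hretract hc h i (heq ▸ ContinuousMap.Homotopic.refl _)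

end SCAux
/-- In a clique complex `K`, for faces `σ₀,…,σ_r` of a simplex `σ`,
the union `⋃ᵢ ⋂_{v ∈ σᵢ} st_K(v)` is a contractible subcomplex of `K`. -/
theorem statement0 {V : Type} [Fintype V] (K : ASC V) (hK : K.IsClique)
    (σ : Finset V) (hσ : σ ∈ K.faces) (r : ℕ) (σs : Fin (r + 1) → Finset V)
    (hface : ∀ i, σs i ∈ K.faces) (hsub : ∀ i, σs i ⊆ σ) :
    (⋃ i, (K.interStars (σs i)).faces) ⊆ K.faces ∧
    ContractibleSpace (ASC.space
      { faces := ⋃ i, (K.interStars (σs i)).faces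
        nonempty_of_mem := fun s hs => by
          obtain ⟨i, hi⟩ := Set.mem_iUnion.mp hs
          exact (K.interStars (σs i)).nonempty_of_mem s hi
        down_closed := fun s hs t hts htne => by
          obtain ⟨i, hi⟩ := Set.mem_iUnion.mp hs
          exact Set.mem_iUnion.mpr
            ⟨i, (K.interStars (σs i)).down_closed s hi t hts htne⟩ }) := by
  constructor
  · intro s hs
    obtain ⟨i, hi⟩ := Set.mem_iUnion.mp hs
    exact hi.1
  · have hne : ∀ i, (σs i).Nonempty := fun i => K.nonempty_of_mem _ (hface i)
    have hmain := SCAux.main hK hσ r σs hne hsub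
    exact SCAux.contractible_space_of_R
      (fun s hs t hts htne => by
        obtain ⟨i, hi⟩ := Set.mem_iUnion.mp hs
        exact Set.mem_iUnion.mpr ⟨i, (K.interStars (σs i)).down_closed s hi t hts htne⟩)
      hmain
end

section
/- The star cluster SC_K(σ) = ⋃_{v ∈ σ} st_K(v) of any simplex σ in a clique simplicial complex K is contractible. -/
attribute [local instance] Classical.propDecidable

namespace StarClusterProof

open Finset ContinuousMap

variable {V : Type} [Fintype V]

/-! ### Combinatorial helpers -/

lemma edge_of_face {K : ASC V} {s : Finset V} (hs : s ∈ K.faces) {u w : V}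
    (hu : u ∈ s) (hw : w ∈ s) : ({u, w} : Finset V) ∈ K.faces :=
  K.down_closed s hs _
    (by intro z hz
        rcases Finset.mem_insert.1 hz with rfl | hz
        · exact hu
        · rw [Finset.mem_singleton.1 hz]; exact hw)
    ⟨u, Finset.mem_insert_self _ _⟩

lemma clique_insert {K : ASC V} (hK : K.IsClique) {s : Finset V} (hs : s ∈ K.faces) {u : V}
    (hadj : ∀ w ∈ s, ({u, w} : Finset V) ∈ K.faces) : insert u s ∈ K.faces := by
  obtain ⟨w₀, hw₀⟩ := K.nonempty_of_mem s hs
  refine hK _ ⟨u, Finset.mem_insert_self _ _⟩ ?_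
  intro v hv w hw
  rcases Finset.mem_insert.1 hv with hvu | hv'
  · rcases Finset.mem_insert.1 hw with hwu | hw'
    · rw [hvu, hwu]
      have h := hadj w₀ hw₀
      have h1 : ({u} : Finset V) ∈ K.faces :=
        K.down_closed _ h {u}
          (fun z hz => by rw [Finset.mem_singleton.1 hz]; exact Finset.mem_insert_self _ _)
          ⟨u, Finset.mem_singleton_self u⟩
      have h2 : ({u, u} : Finset V) = {u} := by simp
      rw [h2]; exact h1
    · rw [hvu]; exact hadj w hw'
  · rcases Finset.mem_insert.1 hw with hwu | hw'
    · rw [hwu, Finset.pair_comm]; exact hadj v hv'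
    · exact edge_of_face hs hv' hw'

/-- The support of a point of the realization. -/
noncomputable def supp (x : V → ℝ) : Finset V := Finset.univ.filter (fun w => x w ≠ 0)

lemma mem_supp {x : V → ℝ} {w : V} : w ∈ supp x ↔ x w ≠ 0 := by simp [supp]

lemma supp_mem {A : ASC V} (x : A.space) : supp x.1 ∈ A.faces := by
  obtain ⟨⟨s, hs, hsup⟩, hnn, hsum⟩ := x.2
  refine A.down_closed s hs _ (fun w hw => hsup w (mem_supp.1 hw)) ?_
  by_contra h
  rw [Finset.not_nonempty_iff_eq_empty] at h
  have hz : ∀ w : V, x.1 w = 0 := by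
    intro w
    by_contra hw
    have : w ∈ supp x.1 := mem_supp.2 hw
    simp [h] at this
  rw [Finset.sum_congr rfl (fun w _ => hz w)] at hsum
  simp at hsum

/-! ### The deformation formulas -/

variable (K : ASC V)

noncomputable def cf (j : V) (x : V → ℝ) : ℝ :=
  ∑ w ∈ Finset.univ.filter (fun w => ({j, w} : Finset V) ∉ K.faces), x w

noncomputable def thf (σ' : Finset V) (h : σ'.Nonempty) (x : V → ℝ) : ℝ :=
  σ'.inf' h (fun j => cf K j x)

noncomputable def ffn (σ' : Finset V) (h : σ'.Nonempty) (j : V) (x : V → ℝ) : ℝ :=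
  if cf K j x = 0 then 0 else 1 - thf K σ' h x / cf K j x

noncomputable def Ffn (σ' : Finset V) (h : σ'.Nonempty) (w : V) (x : V → ℝ) : ℝ :=
  ∏ j ∈ σ'.filter (fun j => ({j, w} : Finset V) ∉ K.faces), ffn K σ' h j x

noncomputable def yfn (σ' : Finset V) (h : σ'.Nonempty) (a : V) (x : V → ℝ) (t : ℝ) :
    V → ℝ :=
  fun w => x w - t * (x w - x w * Ffn K σ' h w x) +
    (if w = a then t * (1 - ∑ w', x w' * Ffn K σ' h w' x) else 0)

section Bounds

variable {σ' : Finset V} (hne : σ'.Nonempty) {x : V → ℝ}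

lemma cf_nonneg (hnn : ∀ w, 0 ≤ x w) (j : V) : 0 ≤ cf K j x :=
  Finset.sum_nonneg fun w _ => hnn w

lemma le_cf (hnn : ∀ w, 0 ≤ x w) {j w : V} (hjw : ({j, w} : Finset V) ∉ K.faces) : x w ≤ cf K j x :=
  Finset.single_le_sum (fun i _ => hnn i) (by simp [hjw])

lemma thf_nonneg (hnn : ∀ w, 0 ≤ x w) : 0 ≤ thf K σ' hne x :=
  Finset.le_inf' hne _ fun j _ => cf_nonneg K hnn j

lemma thf_le {j : V} (hj : j ∈ σ') : thf K σ' hne x ≤ cf K j x :=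
  Finset.inf'_le _ hj

lemma ffn_of_ne {j : V} (hc : cf K j x ≠ 0) :
    ffn K σ' hne j x = 1 - thf K σ' hne x / cf K j x := if_neg hc

lemma ffn_nonneg (hnn : ∀ w, 0 ≤ x w) {j : V} (hj : j ∈ σ') : 0 ≤ ffn K σ' hne j x := by
  unfold ffn
  split_ifs with hc
  · exact le_refl 0
  · have hcpos : 0 < cf K j x := lt_of_le_of_ne (cf_nonneg K hnn j) (Ne.symm hc)
    have h2 : thf K σ' hne x ≤ cf K j x := thf_le K hne hj
    have h1 : thf K σ' hne x / cf K j x ≤ 1 := by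
      rw [div_le_one hcpos]; exact h2
    linarith

lemma ffn_le_one (hnn : ∀ w, 0 ≤ x w) {j : V} (hj : j ∈ σ') : ffn K σ' hne j x ≤ 1 := by
  unfold ffn
  split_ifs with hc
  · norm_num
  · have hcpos : 0 < cf K j x := lt_of_le_of_ne (cf_nonneg K hnn j) (Ne.symm hc)
    have h1 : 0 ≤ thf K σ' hne x / cf K j x :=
      div_nonneg (thf_nonneg K hne hnn) hcpos.le
    linarith

lemma Ffn_nonneg (hnn : ∀ w, 0 ≤ x w) (w : V) : 0 ≤ Ffn K σ' hne w x :=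
  Finset.prod_nonneg fun j hj => ffn_nonneg K hne hnn (Finset.mem_filter.1 hj).1

lemma Ffn_le_one (hnn : ∀ w, 0 ≤ x w) (w : V) : Ffn K σ' hne w x ≤ 1 :=
  Finset.prod_le_one (fun j hj => ffn_nonneg K hne hnn (Finset.mem_filter.1 hj).1)
    (fun j hj => ffn_le_one K hne hnn (Finset.mem_filter.1 hj).1)

lemma Ffn_eq_one_of_thf_eq_zero (hnn : ∀ w, 0 ≤ x w) (hth : thf K σ' hne x = 0) {w : V} (hw : x w ≠ 0) :
    Ffn K σ' hne w x = 1 := by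
  refine Finset.prod_eq_one fun j hj => ?_
  obtain ⟨hjσ, hjw⟩ := Finset.mem_filter.1 hj
  have hle : x w ≤ cf K j x := le_cf K hnn hjw
  have hxw : 0 < x w := lt_of_le_of_ne (hnn w) (Ne.symm hw)
  have hc : cf K j x ≠ 0 := ne_of_gt (lt_of_lt_of_le hxw hle)
  rw [ffn_of_ne K hne hc, hth]
  simp

lemma yfn_eq_self {a : V} (hnn : ∀ w, 0 ≤ x w) (hsum : ∑ w, x w = 1)
    (hth : thf K σ' hne x = 0) (t : ℝ) : yfn K σ' hne a x t = x := by
  have hxF : ∀ w, x w * Ffn K σ' hne w x = x w := by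
    intro w
    rcases eq_or_ne (x w) 0 with h | h
    · rw [h]; ring
    · rw [Ffn_eq_one_of_thf_eq_zero K hne hnn hth h, mul_one]
  funext w
  unfold yfn
  rw [hxF w]
  have hS : ∑ w', x w' * Ffn K σ' hne w' x = 1 := by
    rw [Finset.sum_congr rfl fun w' _ => hxF w']; exact hsum
  rw [hS]
  split_ifs <;> ring

lemma yfn_zero {a : V} (t : ℝ) (ht : t = 0) : yfn K σ' hne a x t = x := by
  funext w
  unfold yfn
  rw [ht]
  split_ifs <;> ring

lemma yfn_nonneg {a : V} (hnn : ∀ w, 0 ≤ x w) (hsum : ∑ w, x w = 1)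
    {t : ℝ} (ht0 : 0 ≤ t) (ht1 : t ≤ 1) (w : V) : 0 ≤ yfn K σ' hne a x t w := by
  have hF0 := Ffn_nonneg K hne hnn w
  have hF1 := Ffn_le_one K hne hnn w
  have hb0 : 0 ≤ x w - x w * Ffn K σ' hne w x := by nlinarith [hnn w]
  have h1 : 0 ≤ x w - t * (x w - x w * Ffn K σ' hne w x) := by
    have h2 : t * (x w - x w * Ffn K σ' hne w x) ≤ x w - x w * Ffn K σ' hne w x :=
      mul_le_of_le_one_left hb0 ht1
    nlinarith [mul_nonneg (hnn w) hF0]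
  have hS : ∑ w', x w' * Ffn K σ' hne w' x ≤ 1 := by
    calc ∑ w', x w' * Ffn K σ' hne w' x ≤ ∑ w', x w' := by
          refine Finset.sum_le_sum fun i _ => ?_
          nlinarith [hnn i, Ffn_le_one K hne hnn i]
    _ = 1 := hsum
  unfold yfn
  split_ifs with h
  · have h3 : 0 ≤ t * (1 - ∑ w', x w' * Ffn K σ' hne w' x) :=
      mul_nonneg ht0 (by linarith)
    linarith
  · linarith

lemma yfn_sum {a : V} (hsum : ∑ w, x w = 1) (t : ℝ) :
    ∑ w, yfn K σ' hne a x t w = 1 := by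
  unfold yfn
  rw [Finset.sum_add_distrib,
    Finset.sum_ite_eq' Finset.univ a
      (fun _ => t * (1 - ∑ w', x w' * Ffn K σ' hne w' x)),
    if_pos (Finset.mem_univ a), Finset.sum_sub_distrib, ← Finset.mul_sum,
    Finset.sum_sub_distrib, hsum]
  ring

lemma yfn_supp {a : V} {t : ℝ} {w : V} (hw : yfn K σ' hne a x t w ≠ 0) :
    x w ≠ 0 ∨ w = a := by
  by_contra h
  push_neg at h
  obtain ⟨h1, h2⟩ := h
  apply hw
  unfold yfn
  rw [if_neg h2, h1]
  ring

end Bounds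

/-! ### Membership lemmas -/

section Step

variable {σ σ' : Finset V} {a : V}

lemma adj_a_of_thf_ne (hne : σ'.Nonempty) (hins : insert a σ' = σ)
    (x : (K.starCluster σ).space) (hth : thf K σ' hne x.1 ≠ 0) :
    ∀ w, x.1 w ≠ 0 → ({a, w} : Finset V) ∈ K.faces := by
  intro w hw
  obtain ⟨⟨s, hsSC, hsup⟩, hnn, hsum⟩ := x.2
  obtain ⟨hsK, v, hv, hinsv⟩ := hsSC
  rw [← hins] at hv
  rcases Finset.mem_insert.1 hv with rfl | hv'
  · have hws : w ∈ s := hsup w hw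
    exact edge_of_face hinsv (Finset.mem_insert_self _ _) (Finset.mem_insert_of_mem hws)
  · exfalso
    apply hth
    have hcv : cf K v x.1 = 0 := by
      unfold cf
      refine Finset.sum_eq_zero fun u hu => ?_
      obtain ⟨-, hadj⟩ := Finset.mem_filter.1 hu
      by_contra hu0
      exact hadj (edge_of_face hinsv (Finset.mem_insert_self _ _)
        (Finset.mem_insert_of_mem (hsup u hu0)))
    have h1 : thf K σ' hne x.1 ≤ cf K v x.1 := thf_le K hne hv'
    have h2 : 0 ≤ thf K σ' hne x.1 := thf_nonneg K hne hnn
    rw [hcv] at h1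
    linarith

lemma yfn_mem (hK : K.IsClique) (hne : σ'.Nonempty) (hσ : σ ∈ K.faces)
    (hins : insert a σ' = σ) (x : (K.starCluster σ).space)
    {t : ℝ} (ht0 : 0 ≤ t) (ht1 : t ≤ 1) :
    (∃ s ∈ (K.starCluster σ).faces, ∀ v, yfn K σ' hne a x.1 t v ≠ 0 → v ∈ s) ∧
      (∀ v, 0 ≤ yfn K σ' hne a x.1 t v) ∧ (∑ v, yfn K σ' hne a x.1 t v) = 1 := by
  obtain ⟨hface, hnn, hsum⟩ := x.2
  refine ⟨?_, yfn_nonneg K hne hnn hsum ht0 ht1, yfn_sum K hne hsum t⟩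
  by_cases hth : thf K σ' hne x.1 = 0
  · rw [yfn_eq_self K hne hnn hsum hth t]
    exact hface
  · have hadj := adj_a_of_thf_ne K hne hins x hth
    have hsK : supp x.1 ∈ K.faces := (supp_mem x).1
    have hs1 : insert a (supp x.1) ∈ K.faces :=
      clique_insert hK hsK (fun w hw => hadj w (mem_supp.1 hw))
    have haσ : a ∈ σ := by rw [← hins]; exact Finset.mem_insert_self _ _
    refine ⟨insert a (supp x.1),
      ⟨hs1, a, haσ, by rw [Finset.insert_idem]; exact hs1⟩, ?_⟩
    intro v hv
    rcases yfn_supp K hne hv with h | h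
    · exact Finset.mem_insert_of_mem (mem_supp.2 h)
    · rw [h]; exact Finset.mem_insert_self _ _

lemma yfn_one_mem (hK : K.IsClique) (hne : σ'.Nonempty) (hσ : σ ∈ K.faces)
    (hins : insert a σ' = σ) (x : (K.starCluster σ).space) :
    (∃ s ∈ (K.starCluster σ').faces, ∀ v, yfn K σ' hne a x.1 1 v ≠ 0 → v ∈ s) ∧
      (∀ v, 0 ≤ yfn K σ' hne a x.1 1 v) ∧ (∑ v, yfn K σ' hne a x.1 1 v) = 1 := by
  obtain ⟨hface, hnn, hsum⟩ := x.2
  refine ⟨?_, yfn_nonneg K hne hnn hsum zero_le_one le_rfl,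
    yfn_sum K hne hsum 1⟩
  obtain ⟨j, hjσ, hjinf⟩ := Finset.exists_mem_eq_inf' hne (fun j => cf K j x.1)
  by_cases hth : thf K σ' hne x.1 = 0
  · rw [yfn_eq_self K hne hnn hsum hth 1]
    have hcj : cf K j x.1 = 0 := by rw [← hjinf]; exact hth
    have hsK : supp x.1 ∈ K.faces := (supp_mem x).1
    have hins2 : insert j (supp x.1) ∈ K.faces := by
      refine clique_insert hK hsK fun w hw => ?_
      by_contra hnadj
      have h1 : x.1 w ≤ cf K j x.1 := le_cf K hnn hnadj
      have h2 : 0 < x.1 w := lt_of_le_of_ne (hnn w) (Ne.symm (mem_supp.1 hw))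
      rw [hcj] at h1
      linarith
    exact ⟨supp x.1, ⟨hsK, j, hjσ, hins2⟩, fun v hv => mem_supp.2 hv⟩
  · have hcj : cf K j x.1 ≠ 0 := by rw [← hjinf]; exact hth
    set y1 : (K.starCluster σ).space :=
      ⟨yfn K σ' hne a x.1 1, yfn_mem K hK hne hσ hins x zero_le_one le_rfl⟩ with hy1
    have hsK : supp y1.1 ∈ K.faces := (supp_mem y1).1
    have haσ : a ∈ σ := by rw [← hins]; exact Finset.mem_insert_self _ _
    have hjτ : j ∈ σ := by rw [← hins]; exact Finset.mem_insert_of_mem hjσ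
    have hadj : ∀ w ∈ supp y1.1, ({j, w} : Finset V) ∈ K.faces := by
      intro w hw
      have hw' : yfn K σ' hne a x.1 1 w ≠ 0 := mem_supp.1 hw
      by_cases hwa : w = a
      · rw [hwa]; exact edge_of_face hσ hjτ haσ
      · have hcompute : yfn K σ' hne a x.1 1 w = x.1 w * Ffn K σ' hne w x.1 := by
          unfold yfn; rw [if_neg hwa]; ring
        rw [hcompute] at hw'
        have hF : Ffn K σ' hne w x.1 ≠ 0 := fun h => hw' (by rw [h]; ring)
        by_contra hnadj
        apply hF
        refine Finset.prod_eq_zero (Finset.mem_filter.2 ⟨hjσ, hnadj⟩) ?_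
        have hj2 : thf K σ' hne x.1 = cf K j x.1 := hjinf
        rw [ffn_of_ne K hne hcj, ← hj2, div_self hth]
        ring
    have hins2 : insert j (supp y1.1) ∈ K.faces := clique_insert hK hsK hadj
    exact ⟨supp y1.1, ⟨hsK, j, hjσ, hins2⟩, fun v hv => mem_supp.2 hv⟩

lemma sc_mono {s : Finset V} (hins : insert a σ' = σ)
    (hs : s ∈ (K.starCluster σ').faces) : s ∈ (K.starCluster σ).faces := by
  obtain ⟨h1, v, hv, h2⟩ := hs
  exact ⟨h1, v, by rw [← hins]; exact Finset.mem_insert_of_mem hv, h2⟩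

/-! ### Continuity lemmas -/

lemma cont_cf (j : V) : Continuous fun x : (K.starCluster σ).space => cf K j x.1 :=
  continuous_finset_sum _ fun w _ => (continuous_apply w).comp continuous_subtype_val

lemma cont_thf (hne : σ'.Nonempty) :
    Continuous fun x : (K.starCluster σ).space => thf K σ' hne x.1 :=
  Continuous.finset_inf'_apply hne fun j _ => cont_cf K j

lemma cont_mul_ffn (hne : σ'.Nonempty) {j : V} (hj : j ∈ σ')
    {g : (K.starCluster σ).space → ℝ} (hgc : Continuous g) (hg0 : ∀ x, 0 ≤ g x)
    (hgle : ∀ x : (K.starCluster σ).space, g x ≤ cf K j x.1) :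
    Continuous fun x : (K.starCluster σ).space => g x * ffn K σ' hne j x.1 := by
  rw [continuous_iff_continuousAt]
  intro x₀
  by_cases hc : cf K j x₀.1 = 0
  · have hg₀ : g x₀ = 0 := le_antisymm (by rw [← hc]; exact hgle x₀) (hg0 x₀)
    have hval : g x₀ * ffn K σ' hne j x₀.1 = 0 := by rw [hg₀]; ring
    rw [ContinuousAt, hval]
    have hub : ∀ x : (K.starCluster σ).space, g x * ffn K σ' hne j x.1 ≤ g x := by
      intro x
      have h1 := ffn_le_one K hne (x := x.1) x.2.2.1 hj
      have h2 := ffn_nonneg K hne (x := x.1) x.2.2.1 hj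
      nlinarith [hg0 x]
    have hlb : ∀ x : (K.starCluster σ).space, 0 ≤ g x * ffn K σ' hne j x.1 := fun x =>
      mul_nonneg (hg0 x) (ffn_nonneg K hne x.2.2.1 hj)
    have hgt : Filter.Tendsto g (nhds x₀) (nhds 0) := by
      rw [← hg₀]; exact hgc.continuousAt
    exact tendsto_of_tendsto_of_tendsto_of_le_of_le tendsto_const_nhds hgt hlb hub
  · have hev : ∀ᶠ x : (K.starCluster σ).space in nhds x₀, cf K j x.1 ≠ 0 :=
      (cont_cf K j).continuousAt.eventually_ne hc
    have heq : (fun x : (K.starCluster σ).space =>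
        g x * (1 - thf K σ' hne x.1 / cf K j x.1)) =ᶠ[nhds x₀]
        fun x : (K.starCluster σ).space => g x * ffn K σ' hne j x.1 :=
      hev.mono fun x hx => by simp only [ffn_of_ne K hne hx]
    exact ContinuousAt.congr (hgc.continuousAt.mul (continuousAt_const.sub
      (((cont_thf K hne).continuousAt).div ((cont_cf K j).continuousAt) hc))) heq

lemma cont_mul_prod (hne : σ'.Nonempty) (J : Finset V) :
    J ⊆ σ' → ∀ g : (K.starCluster σ).space → ℝ, Continuous g → (∀ x, 0 ≤ g x) →
    (∀ j ∈ J, ∀ x : (K.starCluster σ).space, g x ≤ cf K j x.1) →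
    Continuous fun x : (K.starCluster σ).space =>
      g x * ∏ j ∈ J, ffn K σ' hne j x.1 := by
  induction J using Finset.induction_on with
  | empty =>
    intro _ g hgc _ _
    simpa using hgc
  | @insert j J hjJ ih =>
    intro hJ g hgc hg0 hgle
    have hjσ : j ∈ σ' := hJ (Finset.mem_insert_self _ _)
    have h1 : Continuous fun x : (K.starCluster σ).space => g x * ffn K σ' hne j x.1 :=
      cont_mul_ffn K hne hjσ hgc hg0 (hgle j (Finset.mem_insert_self _ _))
    have h0 : ∀ x : (K.starCluster σ).space, 0 ≤ g x * ffn K σ' hne j x.1 := fun x =>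
      mul_nonneg (hg0 x) (ffn_nonneg K hne x.2.2.1 hjσ)
    have hle : ∀ j' ∈ J, ∀ x : (K.starCluster σ).space,
        g x * ffn K σ' hne j x.1 ≤ cf K j' x.1 := by
      intro j' hj' x
      have hf1 := ffn_le_one K hne (x := x.1) x.2.2.1 hjσ
      have h3 := hgle j' (Finset.mem_insert_of_mem hj') x
      nlinarith [hg0 x]
    have hres := ih (fun j' hj' => hJ (Finset.mem_insert_of_mem hj'))
      (fun x => g x * ffn K σ' hne j x.1) h1 h0 hle
    have heq : (fun x : (K.starCluster σ).space =>
        g x * ∏ j' ∈ insert j J, ffn K σ' hne j' x.1) =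
        fun x : (K.starCluster σ).space =>
          (g x * ffn K σ' hne j x.1) * ∏ j' ∈ J, ffn K σ' hne j' x.1 := by
      funext x; rw [Finset.prod_insert hjJ]; ring
    rw [heq]; exact hres

lemma cont_G (hne : σ'.Nonempty) (w : V) :
    Continuous fun x : (K.starCluster σ).space => x.1 w * Ffn K σ' hne w x.1 := by
  refine cont_mul_prod K hne _ (Finset.filter_subset _ _) _
    ((continuous_apply w).comp continuous_subtype_val) (fun x => x.2.2.1 w) ?_
  intro j hj x
  exact le_cf K x.2.2.1 (Finset.mem_filter.1 hj).2

lemma cont_y (hne : σ'.Nonempty) (a : V) :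
    Continuous fun p : unitInterval × (K.starCluster σ).space =>
      yfn K σ' hne a p.2.1 (p.1 : ℝ) := by
  apply continuous_pi
  intro w
  have hx : Continuous fun p : unitInterval × (K.starCluster σ).space => p.2.1 w :=
    (continuous_apply w).comp (continuous_subtype_val.comp continuous_snd)
  have ht : Continuous fun p : unitInterval × (K.starCluster σ).space => (p.1 : ℝ) :=
    continuous_subtype_val.comp continuous_fst
  have hG : ∀ u : V, Continuous fun p : unitInterval × (K.starCluster σ).space =>
      p.2.1 u * Ffn K σ' hne u p.2.1 :=
    fun u => (cont_G K hne u).comp continuous_snd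
  have hsum : Continuous fun p : unitInterval × (K.starCluster σ).space =>
      ∑ w', p.2.1 w' * Ffn K σ' hne w' p.2.1 :=
    continuous_finset_sum _ fun u _ => hG u
  unfold yfn
  by_cases hwa : w = a
  · subst hwa
    simp only [if_pos rfl]
    exact (hx.sub (ht.mul (hx.sub (hG w)))).add (ht.mul (continuous_const.sub hsum))
  · simp only [if_neg hwa, add_zero]
    exact hx.sub (ht.mul (hx.sub (hG w)))

end Step

/-! ### The main induction -/

lemma aux (K : ASC V) (hK : K.IsClique) :
    ∀ n (σ : Finset V), σ.card ≤ n → σ ∈ K.faces →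
      (ContinuousMap.id (K.starCluster σ).space).Nullhomotopic := by
  intro n
  induction n with
  | zero =>
    intro σ hle hσ
    have := Finset.card_pos.2 (K.nonempty_of_mem σ hσ)
    omega
  | succ n ih =>
    intro σ hle hσ
    by_cases hn : σ.card ≤ n
    · exact ih σ hn hσ
    have hcard : σ.card = n + 1 := by omega
    by_cases h1 : σ.card = 1
    · -- base case: a single star, which is a cone
      obtain ⟨v, rfl⟩ := Finset.card_eq_one.1 h1
      have hsing : insert v ({v} : Finset V) = {v} := by simp
      have hvSC : ({v} : Finset V) ∈ (K.starCluster {v}).faces :=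
        ⟨hσ, v, Finset.mem_singleton_self v, by rw [hsing]; exact hσ⟩
      have hpmem : (∃ s ∈ (K.starCluster {v}).faces,
          ∀ w, (if w = v then (1:ℝ) else 0) ≠ 0 → w ∈ s) ∧
          (∀ w, (0:ℝ) ≤ if w = v then 1 else 0) ∧
          (∑ w, if w = v then (1:ℝ) else 0) = 1 := by
        refine ⟨⟨{v}, hvSC, fun w hw => ?_⟩, fun w => ?_, ?_⟩
        · by_contra h
          rw [Finset.mem_singleton] at h
          rw [if_neg h] at hw
          exact hw rfl
        · split_ifs <;> norm_num
        · rw [Finset.sum_ite_eq' Finset.univ v (fun _ => (1:ℝ)),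
            if_pos (Finset.mem_univ v)]
      set p : (K.starCluster {v}).space := ⟨fun w => if w = v then 1 else 0, hpmem⟩
      have hmem : ∀ (x : (K.starCluster {v}).space) (t : unitInterval),
          (∃ s ∈ (K.starCluster {v}).faces,
            ∀ w, (x.1 w - (t:ℝ) * (x.1 w - p.1 w)) ≠ 0 → w ∈ s) ∧
          (∀ w, 0 ≤ x.1 w - (t:ℝ) * (x.1 w - p.1 w)) ∧
          (∑ w, (x.1 w - (t:ℝ) * (x.1 w - p.1 w))) = 1 := by
        intro x t
        obtain ⟨⟨s, hsSC, hsup⟩, hnn, hsum⟩ := x.2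
        obtain ⟨hsK, u, hu, hinsu⟩ := hsSC
        rw [Finset.mem_singleton] at hu
        subst hu
        have ht0 : (0:ℝ) ≤ t := t.2.1
        have ht1 : (t:ℝ) ≤ 1 := t.2.2
        refine ⟨⟨insert u s, ⟨hinsu, u, Finset.mem_singleton_self u,
          by rw [Finset.insert_idem]; exact hinsu⟩, ?_⟩, fun w => ?_, ?_⟩
        · intro w hw
          by_contra h
          rw [Finset.mem_insert] at h
          push_neg at h
          obtain ⟨hwu, hws⟩ := h
          have hxw : x.1 w = 0 := by
            by_contra hxw
            exact hws (hsup w hxw)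
          have hpw : p.1 w = 0 := if_neg hwu
          rw [hxw, hpw] at hw
          simp at hw
        · have hp0 : (0:ℝ) ≤ p.1 w := hpmem.2.1 w
          have hp1 : p.1 w ≤ 1 := by
            show (if w = u then (1:ℝ) else 0) ≤ 1
            split_ifs <;> norm_num
          nlinarith [hnn w]
        · rw [Finset.sum_sub_distrib, ← Finset.mul_sum, Finset.sum_sub_distrib, hsum]
          have : ∑ w, p.1 w = 1 := hpmem.2.2
          rw [this]
          ring
      have hcont : Continuous fun q : unitInterval × (K.starCluster {v}).space =>
          (fun w => q.2.1 w - (q.1:ℝ) * (q.2.1 w - p.1 w) : V → ℝ) := by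
        apply continuous_pi
        intro w
        have hx : Continuous fun q : unitInterval × (K.starCluster {v}).space =>
            q.2.1 w := (continuous_apply w).comp (continuous_subtype_val.comp continuous_snd)
        have ht : Continuous fun q : unitInterval × (K.starCluster {v}).space =>
            (q.1 : ℝ) := continuous_subtype_val.comp continuous_fst
        exact hx.sub (ht.mul (hx.sub continuous_const))
      refine ⟨p, ⟨⟨⟨fun q =>
          ⟨fun w => q.2.1 w - (q.1:ℝ) * (q.2.1 w - p.1 w), hmem q.2 q.1⟩,
          Continuous.subtype_mk hcont (fun q => hmem q.2 q.1)⟩, ?_, ?_⟩⟩⟩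
      · intro x
        apply Subtype.ext
        funext w
        show x.1 w - ((0:unitInterval):ℝ) * (x.1 w - p.1 w) = x.1 w
        rw [Set.Icc.coe_zero]
        ring
      · intro x
        apply Subtype.ext
        funext w
        show x.1 w - ((1:unitInterval):ℝ) * (x.1 w - p.1 w) = p.1 w
        rw [Set.Icc.coe_one]
        ring
    · -- inductive step
      have hσne : σ.Nonempty := K.nonempty_of_mem σ hσ
      obtain ⟨a, ha⟩ := hσne
      have hins : insert a (σ.erase a) = σ := Finset.insert_erase ha
      set σ' := σ.erase a with hσ'def
      have hcard' : σ'.card = n := by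
        rw [hσ'def, Finset.card_erase_of_mem ha, hcard]
        omega
      have hne : σ'.Nonempty := by
        rw [← Finset.card_pos, hcard']
        omega
      have hσ' : σ' ∈ K.faces :=
        K.down_closed σ hσ σ' (Finset.erase_subset _ _) hne
      obtain ⟨y₀, hy₀⟩ := ih σ' (le_of_eq hcard') hσ'
      obtain ⟨G⟩ := hy₀
      -- maps
      have hcont1 : Continuous fun x : (K.starCluster σ).space =>
          yfn K σ' hne a x.1 1 := by
        have h2 : Continuous fun x : (K.starCluster σ).space =>
            yfn K σ' hne a x.1 ((1 : unitInterval) : ℝ) :=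
          (cont_y K hne a).comp (Continuous.prodMk continuous_const continuous_id)
        rw [Set.Icc.coe_one] at h2
        exact h2
      set ρc : C((K.starCluster σ).space, (K.starCluster σ').space) :=
        ⟨fun x => ⟨yfn K σ' hne a x.1 1, yfn_one_mem K hK hne hσ hins x⟩,
          Continuous.subtype_mk hcont1 (fun x => yfn_one_mem K hK hne hσ hins x)⟩ with hρc
      have hmemι : ∀ y : (K.starCluster σ').space,
          (∃ s ∈ (K.starCluster σ).faces, ∀ v, y.1 v ≠ 0 → v ∈ s) ∧
            (∀ v, 0 ≤ y.1 v) ∧ (∑ v, y.1 v) = 1 := by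
        intro y
        obtain ⟨⟨s, hs, hsup⟩, hnn, hsum⟩ := y.2
        exact ⟨⟨s, sc_mono K hins hs, hsup⟩, hnn, hsum⟩
      set ιc : C((K.starCluster σ').space, (K.starCluster σ).space) :=
        ⟨fun y => ⟨y.1, hmemι y⟩,
          by apply Continuous.subtype_mk continuous_subtype_val⟩ with hιc
      set e₁ : C((K.starCluster σ).space, (K.starCluster σ).space) := ιc.comp ρc with he₁
      have H₁ : ContinuousMap.Homotopy (ContinuousMap.id (K.starCluster σ).space) e₁ := by
        refine ⟨⟨fun q => ⟨yfn K σ' hne a q.2.1 (q.1 : ℝ),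
            yfn_mem K hK hne hσ hins q.2 q.1.2.1 q.1.2.2⟩,
            Continuous.subtype_mk (cont_y K hne a)
              (fun q => yfn_mem K hK hne hσ hins q.2 q.1.2.1 q.1.2.2)⟩, ?_, ?_⟩
        · intro x
          apply Subtype.ext
          show yfn K σ' hne a x.1 ((0:unitInterval):ℝ) = x.1
          exact yfn_zero K hne _ Set.Icc.coe_zero
        · intro x
          apply Subtype.ext
          show yfn K σ' hne a x.1 ((1:unitInterval):ℝ) = (e₁ x).1
          rw [Set.Icc.coe_one]
          rfl
      have H₂ : ContinuousMap.Homotopy e₁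
          (ContinuousMap.const (K.starCluster σ).space (ιc y₀)) := by
        have step := (ContinuousMap.Homotopy.refl ιc).comp
          (G.comp (ContinuousMap.Homotopy.refl ρc))
        refine step.cast ?_ ?_
        · rw [ContinuousMap.id_comp]
        · rw [ContinuousMap.const_comp, ContinuousMap.comp_const]
      exact ⟨ιc y₀, ⟨H₁.trans H₂⟩⟩

end StarClusterProof


/-- The star cluster of any simplex in a clique complex is contractible. -/
theorem statement1 {V : Type} [Fintype V] (K : ASC V) (hK : K.IsClique)
    (σ : Finset V) (hσ : σ ∈ K.faces) :
    ContractibleSpace (K.starCluster σ).space := by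
  rw [contractible_iff_id_nullhomotopic]
  exact StarClusterProof.aux K hK σ.card σ le_rfl hσ
end

section
/- The independence complex of any finite forest (graph with no cycles) is either contractible or homotopy equivalent to a sphere. -/
attribute [local instance] Classical.propDecidable

section AuxProof

open Finset

variable {V : Type} [Fintype V]

/-- predicate: member of realization of independence complex restricted to S -/
def XP (G : SimpleGraph V) (S : Finset V) (f : V → ℝ) : Prop :=
  (∀ v, f v ≠ 0 → v ∈ S) ∧ (∀ v w, f v ≠ 0 → f w ≠ 0 → ¬ G.Adj v w) ∧
    (∀ v, 0 ≤ f v) ∧ ∑ v, f v = 1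

def Xsp (G : SimpleGraph V) (S : Finset V) : Type := {f : V → ℝ // XP G S f}

noncomputable instance (G : SimpleGraph V) (S : Finset V) : TopologicalSpace (Xsp G S) :=
  instTopologicalSpaceSubtype

lemma XP.bounds {G : SimpleGraph V} {S : Finset V} {f : V → ℝ} (hf : XP G S f) (v : V) :
    0 ≤ f v ∧ f v ≤ 1 := by
  refine ⟨hf.2.2.1 v, ?_⟩
  rw [← hf.2.2.2]
  exact Finset.single_le_sum (f := f) (fun i _ => hf.2.2.1 i) (mem_univ v)

lemma XP.norm_le {G : SimpleGraph V} {S : Finset V} {f : V → ℝ} (hf : XP G S f) : ‖f‖ ≤ 1 := by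
  rw [pi_norm_le_iff_of_nonneg zero_le_one]
  intro v
  rw [Real.norm_eq_abs, abs_le]
  exact ⟨le_trans (by norm_num) (hf.bounds v).1, (hf.bounds v).2⟩

/-- the octahedron model of the sphere S^{k-1} -/
def Oct (k : ℕ) : Type := {x : EuclideanSpace ℝ (Fin k) // ∑ i, |x i| = 1}

noncomputable instance (k : ℕ) : TopologicalSpace (Oct k) := instTopologicalSpaceSubtype

lemma Oct.ne_zero {k : ℕ} (x : Oct k) : x.1 ≠ 0 := by
  intro h
  have := x.2
  rw [h] at this
  simp at this

lemma Oct.norm_le {k : ℕ} (x : Oct k) : ‖x.1‖ ≤ 1 := by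
  rw [EuclideanSpace.norm_eq]
  have h : ∑ i, ‖x.1 i‖ ^ 2 ≤ 1 := by
    calc ∑ i, ‖x.1 i‖ ^ 2 ≤ ∑ i, |x.1 i| := by
          apply Finset.sum_le_sum
          intro i _
          rw [Real.norm_eq_abs, sq]
          nlinarith [abs_nonneg (x.1 i), x.2, Finset.single_le_sum (f := fun i => |x.1 i|)
            (fun i _ => abs_nonneg _) (Finset.mem_univ i)]
      _ = 1 := x.2
  calc √(∑ i, ‖x.1 i‖ ^ 2) ≤ √1 := Real.sqrt_le_sqrt h
    _ = 1 := by simp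

lemma Oct.norm_pos {k : ℕ} (x : Oct k) : 0 < ‖x.1‖ := by
  simpa [norm_pos_iff] using Oct.ne_zero x

/-- octahedron is homeomorphic to the sphere -/
noncomputable def octHomeo (k : ℕ) : Oct k ≃ₜ Metric.sphere (0 : EuclideanSpace ℝ (Fin k)) 1 where
  toFun x := ⟨‖x.1‖⁻¹ • x.1, by
    rw [mem_sphere_zero_iff_norm, norm_smul, norm_inv, norm_norm,
      inv_mul_cancel₀ (Oct.norm_pos x).ne']⟩
  invFun y := ⟨(∑ i, |y.1 i|)⁻¹ • y.1, by
    have hy : y.1 ≠ 0 := by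
      intro h
      have := y.2
      rw [mem_sphere_zero_iff_norm, h] at this
      simp at this
    have hpos : 0 < ∑ i, |y.1 i| := by
      obtain ⟨i, hi⟩ : ∃ i, y.1 i ≠ 0 := by
        by_contra h
        push_neg at h
        exact hy (PiLp.ext h)
      exact lt_of_lt_of_le (abs_pos.2 hi)
        (Finset.single_le_sum (f := fun i => |y.1 i|) (fun i _ => abs_nonneg _) (mem_univ i))
    have : ∀ i, |((∑ i, |y.1 i|)⁻¹ • y.1) i| = (∑ i, |y.1 i|)⁻¹ * |y.1 i| := by
      intro i
      simp [abs_mul, abs_of_nonneg (inv_nonneg.2 hpos.le)]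
    rw [Finset.sum_congr rfl (fun i _ => this i), ← Finset.mul_sum,
      inv_mul_cancel₀ hpos.ne']⟩
  left_inv x := by
    apply Subtype.ext
    have h1 : ∀ i, |(‖x.1‖⁻¹ • x.1) i| = ‖x.1‖⁻¹ * |x.1 i| := by
      intro i
      simp [abs_mul, abs_of_nonneg (inv_nonneg.2 (Oct.norm_pos x).le)]
    simp only
    rw [Finset.sum_congr rfl (fun i _ => h1 i), ← Finset.mul_sum, x.2, mul_one, smul_smul,
      inv_inv, mul_inv_cancel₀ (Oct.norm_pos x).ne', one_smul]
  right_inv y := by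
    apply Subtype.ext
    have hy1 : ‖y.1‖ = 1 := mem_sphere_zero_iff_norm.1 y.2
    have hpos : 0 < ∑ i, |y.1 i| := by
      obtain ⟨i, hi⟩ : ∃ i, y.1 i ≠ 0 := by
        by_contra h
        push_neg at h
        have : y.1 = 0 := PiLp.ext h
        rw [this] at hy1; simp at hy1
      exact lt_of_lt_of_le (abs_pos.2 hi)
        (Finset.single_le_sum (f := fun i => |y.1 i|) (fun i _ => abs_nonneg _) (mem_univ i))
    simp only
    rw [norm_smul, norm_inv, Real.norm_eq_abs, abs_of_nonneg hpos.le, hy1, mul_one, smul_smul,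
      inv_inv, mul_inv_cancel₀ hpos.ne', one_smul]
  continuous_toFun := by
    apply Continuous.subtype_mk
    exact ((continuous_subtype_val.norm).inv₀ (fun x => (Oct.norm_pos x).ne')).smul
      continuous_subtype_val
  continuous_invFun := by
    apply Continuous.subtype_mk
    have hsum : Continuous fun y : Metric.sphere (0 : EuclideanSpace ℝ (Fin k)) 1 =>
        ∑ i, |y.1 i| := by
      apply continuous_finset_sum
      intro i _
      exact ((continuous_apply i).comp ((PiLp.continuous_ofLp 2 (fun _ : Fin k => ℝ)).comp
        continuous_subtype_val)).abs
    refine (hsum.inv₀ ?_).smul continuous_subtype_val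
    intro y
    have hy1 : ‖y.1‖ = 1 := mem_sphere_zero_iff_norm.1 y.2
    obtain ⟨i, hi⟩ : ∃ i, y.1 i ≠ 0 := by
      by_contra h
      push_neg at h
      have : y.1 = 0 := PiLp.ext h
      rw [this] at hy1; simp at hy1
    exact (lt_of_lt_of_le (abs_pos.2 hi)
      (Finset.single_le_sum (f := fun i => |y.1 i|) (fun i _ => abs_nonneg _) (mem_univ i))).ne'

/-- Continuity of cone maps: `c x • G x` extended by `0` where `c x = 0`. -/
theorem cone_cont {X : Type*} [TopologicalSpace X] {E : Type*} [NormedAddCommGroup E]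
    [NormedSpace ℝ E] {c : X → ℝ} (hc : Continuous c) (h0 : ∀ x, 0 ≤ c x)
    {F : {x : X // 0 < c x} → E} (hF : Continuous F)
    {M : ℝ} (hM : ∀ y, ‖F y‖ ≤ M) :
    Continuous (fun x => if h : 0 < c x then c x • F ⟨x, h⟩ else 0) := by
  set Φ := fun x => if h : 0 < c x then c x • F ⟨x, h⟩ else 0 with hΦ
  rw [continuous_iff_continuousAt]
  intro x
  by_cases hx : 0 < c x
  · have hU : IsOpen {y : X | 0 < c y} := isOpen_lt continuous_const hc
    apply ContinuousOn.continuousAt _ (hU.mem_nhds hx)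
    rw [continuousOn_iff_continuous_restrict]
    have : Set.domRestrict {y : X | 0 < c y} Φ = fun y => c y.1 • F ⟨y.1, y.2⟩ := by
      funext y
      exact dif_pos y.2
    rw [this]
    exact ((hc.comp continuous_subtype_val).smul (hF.comp (by
      exact Continuous.subtype_mk continuous_subtype_val _)))
  · have hcx : c x = 0 := le_antisymm (not_lt.1 hx) (h0 x)
    have hΦx : Φ x = 0 := by simp [hΦ, hx]
    unfold ContinuousAt
    rw [hΦx]
    apply squeeze_zero_norm (a := fun y => (max M 0) * c y)
    · intro y
      by_cases hy : 0 < c y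
      · simp only [hΦ, dif_pos hy]
        rw [norm_smul, Real.norm_eq_abs, abs_of_pos hy]
        calc c y * ‖F ⟨y, hy⟩‖ ≤ c y * M := by
              apply mul_le_mul_of_nonneg_left (hM _) hy.le
          _ ≤ c y * max M 0 := mul_le_mul_of_nonneg_left (le_max_left _ _) hy.le
          _ = max M 0 * c y := mul_comm _ _
      · simp only [hΦ, dif_neg hy, norm_zero]
        exact mul_nonneg (le_max_right _ _) (h0 y)
    · have h2 : Filter.Tendsto (fun y => max M 0 * c y) (nhds x) (nhds (max M 0 * c x)) :=
        ((continuous_const.mul hc).tendsto x)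
      rw [hcx, mul_zero] at h2
      exact h2

section Graph

variable {V : Type} [Fintype V] {G : SimpleGraph V}

/-- combination: mass `a` at `u`, `b` at `w`, plus `g` -/
noncomputable def spine (u w : V) (a b : ℝ) (g : V → ℝ) : V → ℝ := fun v =>
  (if v = u then a else 0) + (if v = w then b else 0) + g v

omit [Fintype V] in
lemma spine_apply_u {u w : V} (huw : u ≠ w) (a b : ℝ) {g : V → ℝ} (hg : g u = 0) :
    spine u w a b g u = a := by simp [spine, huw, hg]

omit [Fintype V] in
lemma spine_apply_w {u w : V} (huw : u ≠ w) (a b : ℝ) {g : V → ℝ} (hg : g w = 0) :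
    spine u w a b g w = b := by simp [spine, huw.symm, hg]

omit [Fintype V] in
lemma spine_apply_other {u w v : V} (hvu : v ≠ u) (hvw : v ≠ w) (a b : ℝ) (g : V → ℝ) :
    spine u w a b g v = g v := by simp [spine, hvu, hvw]

lemma sum_spine {u w : V} (huw : u ≠ w) (a b : ℝ) (g : V → ℝ) :
    ∑ v, spine u w a b g v = a + b + ∑ v, g v := by
  unfold spine
  rw [Finset.sum_add_distrib, Finset.sum_add_distrib, Finset.sum_ite_eq' Finset.univ u
    (fun _ => a), Finset.sum_ite_eq' Finset.univ w (fun _ => b)]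
  simp

/-- membership of spine points in the realization -/
lemma XP_spine {S : Finset V} {u w : V} (hu : u ∈ S) (hw : w ∈ S) (huw : G.Adj u w)
    (hNu : ∀ y ∈ S, G.Adj u y → y = w) (hNw : ∀ y ∈ S, G.Adj w y → y = u)
    {a b : ℝ} (ha : 0 ≤ a) (hb : 0 ≤ b) (hab : a = 0 ∨ b = 0)
    {g : V → ℝ} (hgsupp : ∀ v, g v ≠ 0 → v ∈ (S.erase u).erase w)
    (hgind : ∀ v₁ v₂, g v₁ ≠ 0 → g v₂ ≠ 0 → ¬ G.Adj v₁ v₂)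
    (hgnn : ∀ v, 0 ≤ g v) (hsum : a + b + ∑ v, g v = 1) :
    XP G S (spine u w a b g) := by
  have huw' : u ≠ w := huw.ne
  have hgu : g u = 0 := by
    by_contra h
    exact (Finset.notMem_erase u S) (Finset.mem_of_mem_erase (hgsupp u h))
  have hgw : g w = 0 := by
    by_contra h
    exact (Finset.notMem_erase w _) (hgsupp w h)
  -- possible support classification
  have hcases : ∀ v, spine u w a b g v ≠ 0 →
      (v = u ∧ a ≠ 0) ∨ (v = w ∧ b ≠ 0) ∨ (g v ≠ 0 ∧ v ≠ u ∧ v ≠ w) := by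
    intro v hv
    by_cases h1 : v = u
    · subst h1; rw [spine_apply_u huw' _ _ hgu] at hv; exact Or.inl ⟨rfl, hv⟩
    by_cases h2 : v = w
    · subst h2; rw [spine_apply_w huw' _ _ hgw] at hv; exact Or.inr (Or.inl ⟨rfl, hv⟩)
    · rw [spine_apply_other h1 h2] at hv; exact Or.inr (Or.inr ⟨hv, h1, h2⟩)
  have hginS : ∀ v, g v ≠ 0 → v ∈ S := fun v hv =>
    Finset.mem_of_mem_erase (Finset.mem_of_mem_erase (hgsupp v hv))
  refine ⟨?_, ?_, ?_, ?_⟩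
  · intro v hv
    rcases hcases v hv with ⟨h, _⟩ | ⟨h, _⟩ | ⟨h, _, _⟩
    · subst h; exact hu
    · subst h; exact hw
    · exact hginS v h
  · intro v₁ v₂ h1 h2 hadj
    rcases hcases v₁ h1 with ⟨e1, ha1⟩ | ⟨e1, hb1⟩ | ⟨hg1, hne1u, hne1w⟩ <;>
      rcases hcases v₂ h2 with ⟨e2, ha2⟩ | ⟨e2, hb2⟩ | ⟨hg2, hne2u, hne2w⟩
    · subst e1; subst e2; exact G.irrefl hadj
    · subst e1; subst e2; rcases hab with h | h; exact ha1 h; exact hb2 h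
    · subst e1
      exact hne2w (hNu v₂ (hginS v₂ hg2) hadj)
    · subst e1; subst e2; rcases hab with h | h; exact ha2 h; exact hb1 h
    · subst e1; subst e2; exact G.irrefl hadj
    · subst e1
      exact hne2u (hNw v₂ (hginS v₂ hg2) hadj)
    · subst e2
      exact hne1w (hNu v₁ (hginS v₁ hg1) hadj.symm)
    · subst e2
      exact hne1u (hNw v₁ (hginS v₁ hg1) hadj.symm)
    · exact hgind v₁ v₂ hg1 hg2 hadj
  · intro v
    unfold spine
    have := hgnn v
    positivity
  · rw [sum_spine huw', hsum]

/-- decomposition of a point of `Xsp G S` -/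
lemma XP_decomp {S : Finset V} {u w : V} (huw : G.Adj u w)
    {f : V → ℝ} (hf : XP G S f) :
    f u = 0 ∨ f w = 0 := by
  by_contra h
  push_neg at h
  exact hf.2.1 u w h.1 h.2 huw

/-- the rest of the mass -/
lemma XP_rest {S : Finset V} {u w : V} (huw : u ≠ w) {f : V → ℝ} (hf : XP G S f) :
    f u + f w + ∑ v ∈ (Finset.univ.erase u).erase w, f v = 1 := by
  have h1 : f w + ∑ v ∈ (Finset.univ.erase u).erase w, f v
      = ∑ v ∈ Finset.univ.erase u, f v := by
    apply Finset.add_sum_erase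
    exact Finset.mem_erase.2 ⟨huw.symm, Finset.mem_univ w⟩
  have h2 : f u + ∑ v ∈ Finset.univ.erase u, f v = ∑ v, f v :=
    Finset.add_sum_erase _ _ (Finset.mem_univ u)
  rw [add_assoc, h1, h2, hf.2.2.2]

lemma XP_spine_decomp {S : Finset V} {u w : V} (huw : u ≠ w) {f : V → ℝ} (_ : XP G S f) :
    spine u w (f u) (f w) (fun v => if v = u then 0 else if v = w then 0 else f v) = f := by
  funext v
  by_cases h1 : v = u
  · subst h1; simp [spine, huw]
  by_cases h2 : v = w
  · subst h2; simp [spine, huw.symm]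
  · simp [spine, h1, h2]

end Graph
section Empties

lemma xsp_empty_isEmpty {V : Type} [Fintype V] (G : SimpleGraph V) :
    IsEmpty (Xsp G (∅ : Finset V)) := by
  constructor
  intro f
  have h0 : ∀ v, f.1 v = 0 := by
    intro v
    by_contra h
    exact absurd (f.2.1 v h) (Finset.notMem_empty v)
  have := f.2.2.2.2
  rw [Finset.sum_congr rfl (fun v _ => h0 v)] at this
  simp at this

lemma oct_zero_isEmpty : IsEmpty (Oct 0) := by
  constructor
  intro x
  have := x.2
  simp at this

lemma continuous_of_isEmpty {X Y : Type*} [TopologicalSpace X] [TopologicalSpace Y]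
    [IsEmpty X] (f : X → Y) : Continuous f := by
  rw [continuous_def]
  intro s _
  convert isOpen_empty
  exact Set.eq_empty_of_isEmpty _

noncomputable def hequivOfIsEmpty (X Y : Type*) [TopologicalSpace X] [TopologicalSpace Y]
    [IsEmpty X] [IsEmpty Y] : ContinuousMap.HomotopyEquiv X Y where
  toFun := ⟨fun x => isEmptyElim x, continuous_of_isEmpty _⟩
  invFun := ⟨fun y => isEmptyElim y, continuous_of_isEmpty _⟩
  left_inv := by
    have : ((⟨fun y => isEmptyElim y, continuous_of_isEmpty _⟩ : C(Y, X)).comp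
        ⟨fun x => isEmptyElim x, continuous_of_isEmpty _⟩) = ContinuousMap.id X := by
      ext x; exact isEmptyElim x
    rw [this]
  right_inv := by
    have : ((⟨fun x => isEmptyElim x, continuous_of_isEmpty _⟩ : C(X, Y)).comp
        ⟨fun y => isEmptyElim y, continuous_of_isEmpty _⟩) = ContinuousMap.id Y := by
      ext y; exact isEmptyElim y
    rw [this]

end Empties

section CaseB

variable {V : Type} [Fintype V] {G : SimpleGraph V}

lemma contractible_of_isolated {S : Finset V} {v : V} (hv : v ∈ S)
    (hiso : ∀ y ∈ S, ¬ G.Adj v y) : ContractibleSpace (Xsp G S) := by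
  rw [contractible_iff_id_nullhomotopic]
  have hδ : XP G S (fun w => if w = v then 1 else 0) := by
    refine ⟨?_, ?_, ?_, ?_⟩
    · intro w hw
      by_cases h : w = v
      · subst h; exact hv
      · simp [h] at hw
    · intro v₁ v₂ h1 h2
      have e1 : v₁ = v := by by_contra h; simp [h] at h1
      have e2 : v₂ = v := by by_contra h; simp [h] at h2
      subst e1; subst e2; exact G.irrefl
    · intro w; by_cases h : w = v <;> simp [h]
    · rw [Finset.sum_ite_eq' Finset.univ v (fun _ => (1:ℝ))]; simp
  refine ⟨⟨_, hδ⟩, ⟨?_⟩⟩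
  have mem : ∀ (p : unitInterval × Xsp G S),
      XP G S (fun w => (1 - p.1.1) * p.2.1 w + p.1.1 * (if w = v then 1 else 0)) := by
    rintro ⟨t, f⟩
    refine ⟨?_, ?_, ?_, ?_⟩
    · intro w hw
      by_cases h : w = v
      · subst h; exact hv
      · simp only [h, if_false, mul_zero, add_zero] at hw
        exact f.2.1 w (by intro h'; rw [h'] at hw; simp at hw)
    · intro v₁ v₂ h1 h2 hadj
      have key : ∀ w, ((1 - t.1) * f.1 w + t.1 * (if w = v then 1 else 0)) ≠ 0 →
          f.1 w ≠ 0 ∨ w = v := by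
        intro w hw
        by_cases h : w = v
        · exact Or.inr h
        · simp only [h, if_false, mul_zero, add_zero] at hw
          exact Or.inl (by intro h'; rw [h'] at hw; simp at hw)
      rcases key v₁ h1 with h1' | h1' <;> rcases key v₂ h2 with h2' | h2'
      · exact f.2.2.1 v₁ v₂ h1' h2' hadj
      · subst h2'; exact hiso v₁ (f.2.1 v₁ h1') hadj.symm
      · subst h1'; exact hiso v₂ (f.2.1 v₂ h2') hadj
      · subst h1'; subst h2'; exact G.irrefl hadj
    · intro w
      have := f.2.2.2.1 w
      have h1 : (0:ℝ) ≤ 1 - t.1 := by linarith [t.2.2]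
      have h2 : (0:ℝ) ≤ t.1 := t.2.1
      by_cases h : w = v
      · show 0 ≤ (1 - t.1) * f.1 w + t.1 * if w = v then (1:ℝ) else 0
        rw [if_pos h, mul_one]
        nlinarith
      · simp only [h, if_false, mul_zero, add_zero]
        positivity
    · rw [Finset.sum_add_distrib, ← Finset.mul_sum, ← Finset.mul_sum, f.2.2.2.2,
        Finset.sum_ite_eq' Finset.univ v (fun _ => (1:ℝ))]
      simp
  refine { toFun := fun p => ⟨_, mem p⟩, continuous_toFun := ?_, map_zero_left := ?_,
           map_one_left := ?_ }
  · apply Continuous.subtype_mk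
    apply continuous_pi
    intro w
    have h1 : Continuous fun p : unitInterval × Xsp G S => p.1.1 :=
      continuous_subtype_val.comp continuous_fst
    have h2 : Continuous fun p : unitInterval × Xsp G S => p.2.1 w :=
      (continuous_apply w).comp (continuous_subtype_val.comp continuous_snd)
    exact ((continuous_const.sub h1).mul h2).add (h1.mul continuous_const)
  · intro f; apply Subtype.ext; funext w; simp
  · intro f; apply Subtype.ext; funext w; simp; rfl

end CaseB

section Fold

variable {V : Type} [Fintype V] {G : SimpleGraph V}

lemma fold_hequiv {S : Finset V} {u w x : V} (hu : u ∈ S) (hx : x ∈ S)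
    (hwx : G.Adj w x) (hxu : x ≠ u) (hNu : ∀ y ∈ S, G.Adj u y → y = w) :
    Nonempty (ContinuousMap.HomotopyEquiv (Xsp G S) (Xsp G (S.erase x))) := by
  have hux : ¬ G.Adj u x := by
    intro h
    have := hNu x hx h
    subst this
    exact G.irrefl hwx
  -- the deformation, at time t
  set Φ : ℝ → Xsp G S → V → ℝ := fun t f v =>
    f.1 v + t * f.1 x * ((if v = u then 1 else 0) - (if v = x then 1 else 0)) with hΦ
  have Φu : ∀ t f, Φ t f u = f.1 u + t * f.1 x := by
    intro t f; simp [hΦ, hxu.symm]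
  have Φx : ∀ t f, Φ t f x = f.1 x - t * f.1 x := by
    intro t f; simp [hΦ, hxu]; ring
  have Φo : ∀ t f v, v ≠ u → v ≠ x → Φ t f v = f.1 v := by
    intro t f v h1 h2; simp [hΦ, h1, h2]
  have key : ∀ (t : ℝ), 0 ≤ t → t ≤ 1 → ∀ f : Xsp G S, XP G S (Φ t f) := by
    intro t ht0 ht1 f
    have hclass : ∀ v, Φ t f v ≠ 0 → (v = u ∧ (f.1 u ≠ 0 ∨ f.1 x ≠ 0)) ∨ (v ≠ u ∧ f.1 v ≠ 0) := by
      intro v hv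
      by_cases h1 : v = u
      · rw [h1, Φu] at hv
        refine Or.inl ⟨h1, ?_⟩
        by_contra hcon
        push_neg at hcon
        rw [hcon.1, hcon.2] at hv
        simp at hv
      by_cases h2 : v = x
      · rw [h2, Φx] at hv
        refine Or.inr ⟨h1, ?_⟩
        rw [h2]
        intro h'
        rw [h'] at hv
        simp at hv
      · rw [Φo t f v h1 h2] at hv
        exact Or.inr ⟨h1, hv⟩
    refine ⟨?_, ?_, ?_, ?_⟩
    · intro v hv
      rcases hclass v hv with ⟨e, _⟩ | ⟨_, h⟩
      · subst e; exact hu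
      · exact f.2.1 v h
    · intro v₁ v₂ h1 h2 hadj
      rcases hclass v₁ h1 with ⟨e1, h1'⟩ | ⟨ne1, h1'⟩ <;>
        rcases hclass v₂ h2 with ⟨e2, h2'⟩ | ⟨ne2, h2'⟩
      · rw [e1, e2] at hadj; exact G.irrefl hadj
      · rw [e1] at hadj
        have hv2w : v₂ = w := hNu v₂ (f.2.1 v₂ h2') hadj
        rcases h1' with h | h
        · exact f.2.2.1 u v₂ h h2' hadj
        · exact f.2.2.1 v₂ x h2' h (hv2w ▸ hwx)
      · rw [e2] at hadj
        have hv1w : v₁ = w := hNu v₁ (f.2.1 v₁ h1') hadj.symm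
        rcases h2' with h | h
        · exact f.2.2.1 u v₁ h h1' hadj.symm
        · exact f.2.2.1 v₁ x h1' h (hv1w ▸ hwx)
      · exact f.2.2.1 v₁ v₂ h1' h2' hadj
    · intro v
      by_cases h1 : v = u
      · rw [h1, Φu]
        have hfu := f.2.2.2.1 u
        have hfx := f.2.2.2.1 x
        positivity
      by_cases h2 : v = x
      · rw [h2, Φx]
        have hfx := f.2.2.2.1 x
        nlinarith
      · rw [Φo t f v h1 h2]
        exact f.2.2.2.1 v
    · simp only [hΦ]
      rw [Finset.sum_add_distrib, f.2.2.2.2, ← Finset.mul_sum, Finset.sum_sub_distrib,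
        Finset.sum_ite_eq' Finset.univ u (fun _ => (1:ℝ)),
        Finset.sum_ite_eq' Finset.univ x (fun _ => (1:ℝ))]
      simp
  have keyr : ∀ f : Xsp G S, XP G (S.erase x) (Φ 1 f) := by
    intro f
    obtain ⟨c1, c2, c3, c4⟩ := key 1 zero_le_one le_rfl f
    refine ⟨?_, c2, c3, c4⟩
    intro v hv
    have hvx : v ≠ x := by
      intro h
      subst h
      rw [Φx] at hv
      simp at hv
    exact Finset.mem_erase.2 ⟨hvx, c1 v hv⟩
  have contΦ : ∀ (F : Xsp G S → ℝ) (hF : Continuous F) (hr : ∀ f, 0 ≤ F f ∧ F f ≤ 1),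
      Continuous fun f : Xsp G S => Φ (F f) f := by
    intro F hF _
    apply continuous_pi
    intro v
    have h2 : Continuous fun f : Xsp G S => f.1 v := (continuous_apply v).comp continuous_subtype_val
    have h3 : Continuous fun f : Xsp G S => f.1 x := (continuous_apply x).comp continuous_subtype_val
    exact h2.add ((hF.mul h3).mul continuous_const)
  -- the retraction map
  set r : C(Xsp G S, Xsp G (S.erase x)) :=
    ⟨fun f => ⟨Φ 1 f, keyr f⟩, by
      apply Continuous.subtype_mk
      exact contΦ (fun _ => 1) continuous_const (fun _ => ⟨zero_le_one, le_rfl⟩)⟩ with hr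
  set ι : C(Xsp G (S.erase x), Xsp G S) :=
    ⟨fun f => ⟨f.1, ⟨fun v hv => Finset.mem_of_mem_erase (f.2.1 v hv), f.2.2⟩⟩, by
      exact Continuous.subtype_mk continuous_subtype_val _⟩ with hι
  refine ⟨{ toFun := r, invFun := ι, left_inv := ⟨?_⟩, right_inv := ?_ }⟩
  · -- homotopy from ι ∘ r to id
    apply ContinuousMap.Homotopy.symm
    refine { toFun := fun p => ⟨Φ p.1.1 p.2, key p.1.1 p.1.2.1 p.1.2.2 p.2⟩,
             continuous_toFun := ?_, map_zero_left := ?_, map_one_left := ?_ }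
    · apply Continuous.subtype_mk
      apply continuous_pi
      intro v
      have h1 : Continuous fun p : unitInterval × Xsp G S => p.1.1 :=
        continuous_subtype_val.comp continuous_fst
      have h2 : Continuous fun p : unitInterval × Xsp G S => p.2.1 v :=
        (continuous_apply v).comp (continuous_subtype_val.comp continuous_snd)
      have h3 : Continuous fun p : unitInterval × Xsp G S => p.2.1 x :=
        (continuous_apply x).comp (continuous_subtype_val.comp continuous_snd)
      exact h2.add ((h1.mul h3).mul continuous_const)
    · intro f
      apply Subtype.ext
      funext v
      simp [hΦ]
    · intro f
      apply Subtype.ext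
      rfl
  · -- r ∘ ι = id
    have : r.comp ι = ContinuousMap.id _ := by
      ext f
      apply Subtype.ext
      funext v
      have hfx : f.1 x = 0 := by
        by_contra h
        exact (Finset.notMem_erase x S) (f.2.1 x h)
      show Φ 1 (ι f) v = f.1 v
      have hval : (ι f).1 = f.1 := rfl
      simp [hΦ, hval, hfx]
    rw [this]

end Fold
section Leaf

variable {V : Type} [Fintype V] {G : SimpleGraph V}

omit [Fintype V] in
lemma exists_leaf (hG : G.IsAcyclic) {S : Finset V} (hS : S.Nonempty) :
    ∃ u ∈ S, ∀ x ∈ S, ∀ y ∈ S, G.Adj u x → G.Adj u y → x = y := by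
  classical
  set P : ℕ → Prop := fun n => ∃ (a b : V) (p : G.Walk a b), p.IsPath ∧
    (∀ v ∈ p.support, v ∈ S) ∧ p.length = n with hP
  have hbound : ∀ n, P n → n + 1 ≤ S.card := by
    rintro n ⟨a, b, p, hp, hpS, hlen⟩
    have h1 : p.support.toFinset ⊆ S := fun v hv => hpS v (List.mem_toFinset.1 hv)
    have h2 : p.support.toFinset.card = p.support.length :=
      List.toFinset_card_of_nodup hp.support_nodup
    have := Finset.card_le_card h1
    rw [h2, SimpleGraph.Walk.length_support, hlen] at this
    exact this
  obtain ⟨a₀, ha₀⟩ := hS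
  have hP0 : P 0 := ⟨a₀, a₀, SimpleGraph.Walk.nil, SimpleGraph.Walk.IsPath.nil,
    by simp [ha₀], rfl⟩
  set n := Nat.findGreatest P S.card with hn
  have hPn : P n := Nat.findGreatest_spec (Nat.zero_le _) hP0
  have hmax : ∀ m, P m → m ≤ n := fun m hm =>
    Nat.le_findGreatest (le_trans (Nat.le_succ m) (hbound m hm)) hm
  obtain ⟨a, b, p, hp, hpS, hlen⟩ := hPn
  refine ⟨b, hpS b p.end_mem_support, ?_⟩
  -- every S-neighbor of b is in the support of q := p.reverse
  set q := p.reverse with hq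
  have hqp : q.IsPath := hp.reverse
  have hqS : ∀ v ∈ q.support, v ∈ S := by
    intro v hv
    rw [hq, SimpleGraph.Walk.support_reverse] at hv
    exact hpS v (List.mem_reverse.1 hv)
  have hstep1 : ∀ z ∈ S, G.Adj b z → z ∈ q.support := by
    intro z hz hadj
    by_contra hzq
    have hext : (SimpleGraph.Walk.cons hadj.symm q).IsPath := hqp.cons hzq
    have : P (n + 1) := by
      refine ⟨z, a, SimpleGraph.Walk.cons hadj.symm q, hext, ?_, ?_⟩
      · intro v hv
        rw [SimpleGraph.Walk.support_cons] at hv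
        rcases List.mem_cons.1 hv with h | h
        · rwa [h]
        · exact hqS v h
      · rw [SimpleGraph.Walk.length_cons, hq, SimpleGraph.Walk.length_reverse, hlen]
    exact absurd (hmax _ this) (by omega)
  -- analyze q
  rcases hq' : q with _ | ⟨hadj₀, q'⟩
  · -- q is nil : b has no neighbors in S
    intro x hx y hy hbx _
    have : x ∈ q.support := hstep1 x hx hbx
    rw [hq'] at this
    simp [SimpleGraph.Walk.support_nil] at this
    rw [this] at hbx
    exact absurd hbx (G.irrefl)
  · -- q = cons hadj₀ q', second vertex is the unique neighbor
    rename_i v₀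
    have huniq : ∀ z ∈ S, G.Adj b z → z = v₀ := by
      intro z hz hadj
      have hzq : z ∈ q.support := hstep1 z hz hadj
      have htake : (q.takeUntil z hzq).IsPath := hqp.takeUntil hzq
      have hsingle : (SimpleGraph.Walk.cons hadj (SimpleGraph.Walk.nil)).IsPath := by
        rw [SimpleGraph.Walk.isPath_def]
        simp [SimpleGraph.Walk.support_cons, hadj.ne]
      have hequal : q.takeUntil z hzq = SimpleGraph.Walk.cons hadj SimpleGraph.Walk.nil := by
        have := SimpleGraph.isAcyclic_iff_path_unique.1 hG
          (⟨q.takeUntil z hzq, htake⟩ : G.Path b z)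
          (⟨SimpleGraph.Walk.cons hadj SimpleGraph.Walk.nil, hsingle⟩ : G.Path b z)
        exact congrArg Subtype.val this
      have hspec := q.take_spec hzq
      rw [hequal] at hspec
      rw [SimpleGraph.Walk.cons_append, SimpleGraph.Walk.nil_append] at hspec
      -- hspec : cons hadj (dropUntil ...) = q = cons hadj₀ q'
      have hspec2 := hspec.trans hq'
      rw [SimpleGraph.Walk.cons.injEq] at hspec2
      exact hspec2.1
    intro x hx y hy hbx hby
    rw [huniq x hx hbx, huniq y hy hby]

end Leaf
section Susp

variable {V : Type} [Fintype V] {G : SimpleGraph V}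

lemma XP_mono {S T : Finset V} (hST : S ⊆ T) {f : V → ℝ} (hf : XP G S f) : XP G T f :=
  ⟨fun v hv => hST (hf.1 v hv), hf.2⟩

lemma sum_split {u w : V} (huw : u ≠ w) (g : V → ℝ) :
    ∑ v, g v = g u + g w + ∑ v ∈ (Finset.univ.erase u).erase w, g v := by
  have h1 : g w + ∑ v ∈ (Finset.univ.erase u).erase w, g v = ∑ v ∈ Finset.univ.erase u, g v :=
    Finset.add_sum_erase _ _ (Finset.mem_erase.2 ⟨huw.symm, Finset.mem_univ w⟩)
  have h2 : g u + ∑ v ∈ Finset.univ.erase u, g v = ∑ v, g v :=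
    Finset.add_sum_erase _ _ (Finset.mem_univ u)
  rw [add_assoc, h1, h2]

variable {S : Finset V} {u w : V}

/-- the "rest" mass of `f` outside `u, w` -/
noncomputable def ccm (u w : V) (f : Xsp G S) : ℝ :=
  ∑ v ∈ (Finset.univ.erase u).erase w, f.1 v

noncomputable def restf (u w : V) (f : Xsp G S) : V → ℝ :=
  fun v => if v = u then 0 else if v = w then 0 else f.1 v

lemma ccm_nonneg (f : Xsp G S) : 0 ≤ ccm (G := G) u w f :=
  Finset.sum_nonneg fun v _ => f.2.2.2.1 v

lemma ccm_eq (huw : u ≠ w) (f : Xsp G S) : f.1 u + f.1 w + ccm u w f = 1 := by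
  rw [ccm, ← sum_split huw, f.2.2.2.2]

lemma sum_restf (huw : u ≠ w) (f : Xsp G S) : ∑ v, restf u w f v = ccm u w f := by
  rw [sum_split huw (restf u w f), ccm]
  have h1 : restf u w f u = 0 := by simp [restf]
  have h2 : restf u w f w = 0 := by simp [restf, huw.symm]
  have h3 : ∀ v ∈ (Finset.univ.erase u).erase w, restf u w f v = f.1 v := by
    intro v hv
    have hvw : v ≠ w := (Finset.mem_erase.1 hv).1
    have hvu : v ≠ u := (Finset.mem_erase.1 (Finset.mem_of_mem_erase hv)).1
    simp [restf, hvu, hvw]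
  rw [h1, h2, Finset.sum_congr rfl h3]
  ring

lemma restf_apply_mem {v : V} (hvu : v ≠ u) (hvw : v ≠ w) (f : Xsp G S) :
    restf u w f v = f.1 v := by simp [restf, hvu, hvw]

lemma restf_eq_zero_of_ccm_eq_zero (huw : u ≠ w) (f : Xsp G S) (hc : ccm u w f = 0) :
    restf u w f = 0 := by
  funext v
  by_cases h1 : v = u
  · simp [restf, h1]
  by_cases h2 : v = w
  · simp [restf, h1, h2]
  rw [restf_apply_mem h1 h2]
  have := Finset.sum_eq_zero_iff_of_nonneg (fun v _ => f.2.2.2.1 v) |>.1 hc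
  apply this
  exact Finset.mem_erase.2 ⟨h2, Finset.mem_erase.2 ⟨h1, Finset.mem_univ v⟩⟩

/-- spine decomposition of `f` -/
lemma spine_restf (huw : u ≠ w) (f : Xsp G S) :
    spine u w (f.1 u) (f.1 w) (restf u w f) = f.1 := XP_spine_decomp huw f.2

/-- the normalized part of `f` beyond `u` and `w` -/
noncomputable def ghat (u w : V) (huw0 : u ≠ w) (f : Xsp G S)
    (hc : 0 < ccm (G := G) u w f) : Xsp G ((S.erase u).erase w) := by
  refine ⟨(ccm u w f)⁻¹ • restf u w f, ?_, ?_, ?_, ?_⟩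
  · intro v hv
    have hne : restf u w f v ≠ 0 := by
      intro h
      rw [Pi.smul_apply, h, smul_zero] at hv
      exact hv rfl
    have hvu : v ≠ u := by intro h; rw [h] at hne; simp [restf] at hne
    have hvw : v ≠ w := by intro h; rw [h] at hne; simp [restf] at hne
    rw [restf_apply_mem hvu hvw] at hne
    exact Finset.mem_erase.2 ⟨hvw, Finset.mem_erase.2 ⟨hvu, f.2.1 v hne⟩⟩
  · intro v₁ v₂ h1 h2
    have k1 : f.1 v₁ ≠ 0 := by
      intro h
      apply h1
      rw [Pi.smul_apply]
      by_cases e1 : v₁ = u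
      · simp [restf, e1]
      by_cases e2 : v₁ = w
      · simp [restf, e1, e2]
      · rw [restf_apply_mem e1 e2, h, smul_zero]
    have k2 : f.1 v₂ ≠ 0 := by
      intro h
      apply h2
      rw [Pi.smul_apply]
      by_cases e1 : v₂ = u
      · simp [restf, e1]
      by_cases e2 : v₂ = w
      · simp [restf, e1, e2]
      · rw [restf_apply_mem e1 e2, h, smul_zero]
    exact f.2.2.1 v₁ v₂ k1 k2
  · intro v
    rw [Pi.smul_apply]
    apply mul_nonneg (inv_nonneg.2 hc.le)
    by_cases e1 : v = u
    · simp [restf, e1]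
    by_cases e2 : v = w
    · simp [restf, e1, e2]
    · rw [restf_apply_mem e1 e2]; exact f.2.2.2.1 v
  · have : ∑ v, ((ccm u w f)⁻¹ • restf u w f) v = (ccm u w f)⁻¹ * ∑ v, restf u w f v := by
      rw [Finset.mul_sum]
      exact Finset.sum_congr rfl fun v _ => Pi.smul_apply _ _ _
    rw [this, sum_restf huw0, inv_mul_cancel₀ hc.ne']

end Susp
section HatA

variable {V : Type} [Fintype V] {G : SimpleGraph V} {S : Finset V} {u w : V}

/-- suspension of a self-map of the link -/
noncomputable def hatF (huw0 : u ≠ w)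
    (k : Xsp G ((S.erase u).erase w) → Xsp G ((S.erase u).erase w)) (f : Xsp G S) : V → ℝ :=
  spine u w (f.1 u) (f.1 w)
    (if h : 0 < ccm u w f then ccm u w f • (k (ghat u w huw0 f h)).1 else 0)

lemma XP_hatF (hu : u ∈ S) (hw : w ∈ S) (huw : G.Adj u w)
    (hNu : ∀ y ∈ S, G.Adj u y → y = w) (hNw : ∀ y ∈ S, G.Adj w y → y = u)
    (k : Xsp G ((S.erase u).erase w) → Xsp G ((S.erase u).erase w)) (f : Xsp G S) :
    XP G S (hatF huw.ne k f) := by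
  apply XP_spine hu hw huw hNu hNw (f.2.2.2.1 u) (f.2.2.2.1 w) (XP_decomp huw f.2)
  · intro v hv
    by_cases h : 0 < ccm u w f
    · rw [dif_pos h] at hv
      have : (k (ghat u w huw.ne f h)).1 v ≠ 0 := by
        intro hz
        rw [Pi.smul_apply, hz, smul_zero] at hv
        exact hv rfl
      exact (k (ghat u w huw.ne f h)).2.1 v this
    · rw [dif_neg h] at hv
      exact absurd rfl hv
  · intro v₁ v₂ h1 h2
    by_cases h : 0 < ccm u w f
    · rw [dif_pos h] at h1 h2
      have k1 : (k (ghat u w huw.ne f h)).1 v₁ ≠ 0 := by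
        intro hz; rw [Pi.smul_apply, hz, smul_zero] at h1; exact h1 rfl
      have k2 : (k (ghat u w huw.ne f h)).1 v₂ ≠ 0 := by
        intro hz; rw [Pi.smul_apply, hz, smul_zero] at h2; exact h2 rfl
      exact (k (ghat u w huw.ne f h)).2.2.1 v₁ v₂ k1 k2
    · rw [dif_neg h] at h1
      exact absurd rfl h1
  · intro v
    by_cases h : 0 < ccm u w f
    · rw [dif_pos h, Pi.smul_apply]
      exact mul_nonneg h.le ((k (ghat u w huw.ne f h)).2.2.2.1 v)
    · rw [dif_neg h]
      exact le_rfl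
  · by_cases h : 0 < ccm u w f
    · rw [dif_pos h]
      have : ∑ v, (ccm u w f • (k (ghat u w huw.ne f h)).1) v = ccm u w f := by
        have : ∀ v, (ccm u w f • (k (ghat u w huw.ne f h)).1) v
            = ccm u w f * (k (ghat u w huw.ne f h)).1 v := fun v => rfl
        rw [Finset.sum_congr rfl fun v _ => this v, ← Finset.mul_sum,
          (k (ghat u w huw.ne f h)).2.2.2.2, mul_one]
      rw [this]
      exact ccm_eq huw.ne f
    · rw [dif_neg h]
      have hc0 : ccm u w f = 0 := le_antisymm (not_lt.1 h) (ccm_nonneg f)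
      have := ccm_eq huw.ne f
      rw [hc0] at this
      simpa using this

lemma cont_ccm : Continuous fun f : Xsp G S => ccm u w f := by
  unfold ccm
  exact continuous_finset_sum _ fun v _ => (continuous_apply v).comp continuous_subtype_val

lemma cont_restf_coord (v : V) : Continuous fun f : Xsp G S => restf u w f v := by
  have he : (fun f : Xsp G S => restf u w f v)
      = (fun f : Xsp G S => if v = u then (0:ℝ) else if v = w then (0:ℝ) else f.1 v) := rfl
  rw [he]
  by_cases h1 : v = u
  · simp only [if_pos h1]; exact continuous_const
  · simp only [if_neg h1]
    by_cases h2 : v = w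
    · simp only [if_pos h2]; exact continuous_const
    · simp only [if_neg h2]; exact (continuous_apply v).comp continuous_subtype_val

lemma cont_ghat' (huw0 : u ≠ w) {X : Type*} [TopologicalSpace X] {q : X → Xsp G S}
    (hq : Continuous q) :
    Continuous fun y : {x : X // 0 < ccm u w (q x)} => ghat u w huw0 (q y.1) y.2 := by
  apply Continuous.subtype_mk
  apply continuous_pi
  intro v
  have hc : Continuous fun y : {x : X // 0 < ccm u w (q x)} => ccm u w (q y.1) :=
    cont_ccm.comp (hq.comp continuous_subtype_val)
  have hcinv : Continuous fun y : {x : X // 0 < ccm u w (q x)} => (ccm u w (q y.1))⁻¹ :=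
    hc.inv₀ fun y => y.2.ne'
  have hrest : Continuous fun y : {x : X // 0 < ccm u w (q x)} => restf u w (q y.1) v :=
    (cont_restf_coord v).comp (hq.comp continuous_subtype_val)
  exact hcinv.mul hrest

lemma cont_hatF (huw0 : u ≠ w) {X : Type*} [TopologicalSpace X] {q : X → Xsp G S}
    (hq : Continuous q) {m : {x : X // 0 < ccm u w (q x)} → Xsp G ((S.erase u).erase w)}
    (hm : Continuous m) :
    Continuous fun x => spine u w ((q x).1 u) ((q x).1 w)
      (if h : 0 < ccm u w (q x) then ccm u w (q x) • (m ⟨x, h⟩).1 else 0) := by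
  have cdite : Continuous fun x =>
      (if h : 0 < ccm u w (q x) then ccm u w (q x) • (m ⟨x, h⟩).1 else (0 : V → ℝ)) := by
    apply cone_cont (c := fun x => ccm u w (q x)) (cont_ccm.comp hq)
      (fun x => ccm_nonneg (q x)) (F := fun y => (m y).1)
      (continuous_subtype_val.comp hm) (M := 1)
    intro y
    exact XP.norm_le (m y).2
  apply continuous_pi
  intro v
  have ca : Continuous fun x => (q x).1 u := (continuous_apply u).comp
    (continuous_subtype_val.comp hq)
  have cb : Continuous fun x => (q x).1 w := (continuous_apply w).comp
    (continuous_subtype_val.comp hq)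
  have cd : Continuous fun x =>
      (if h : 0 < ccm u w (q x) then ccm u w (q x) • (m ⟨x, h⟩).1 else (0 : V → ℝ)) v :=
    (continuous_apply v).comp cdite
  unfold spine
  have c1 : Continuous fun x => (if v = u then (q x).1 u else (0:ℝ)) := by
    by_cases h : v = u
    · simp only [h, if_pos rfl]; exact ca
    · simp only [h, if_false]; exact continuous_const
  have c2 : Continuous fun x => (if v = w then (q x).1 w else (0:ℝ)) := by
    by_cases h : v = w
    · simp only [h, if_pos rfl]; exact cb
    · simp only [h, if_false]; exact continuous_const
  have goal : Continuous fun x => (if v = u then (q x).1 u else (0:ℝ))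
      + (if v = w then (q x).1 w else (0:ℝ))
      + (if h : 0 < ccm u w (q x) then ccm u w (q x) • (m ⟨x, h⟩).1 else (0 : V → ℝ)) v :=
    (c1.add c2).add cd
  exact goal

/-- the suspended continuous self-map on `Xsp G S` -/
noncomputable def hatC (hu : u ∈ S) (hw : w ∈ S) (huw : G.Adj u w)
    (hNu : ∀ y ∈ S, G.Adj u y → y = w) (hNw : ∀ y ∈ S, G.Adj w y → y = u)
    (k : C(Xsp G ((S.erase u).erase w), Xsp G ((S.erase u).erase w))) :
    C(Xsp G S, Xsp G S) :=
  ⟨fun f => ⟨hatF huw.ne k f, XP_hatF hu hw huw hNu hNw k f⟩, by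
    apply Continuous.subtype_mk
    exact cont_hatF huw.ne (q := id) continuous_id
      (m := fun y => k (ghat u w huw.ne y.1 y.2))
      (k.continuous.comp (cont_ghat' huw.ne continuous_id))⟩

lemma hatC_id (hu : u ∈ S) (hw : w ∈ S) (huw : G.Adj u w)
    (hNu : ∀ y ∈ S, G.Adj u y → y = w) (hNw : ∀ y ∈ S, G.Adj w y → y = u) :
    hatC hu hw huw hNu hNw (ContinuousMap.id _) = ContinuousMap.id (Xsp G S) := by
  ext f
  apply Subtype.ext
  have hkey : (if h : 0 < ccm u w f then ccm u w f • (ghat u w huw.ne f h).1 else 0)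
      = restf u w f := by
    by_cases h : 0 < ccm u w f
    · rw [dif_pos h]
      show ccm u w f • (ccm u w f)⁻¹ • restf u w f = restf u w f
      rw [smul_smul, mul_inv_cancel₀ h.ne', one_smul]
    · rw [dif_neg h]
      exact (restf_eq_zero_of_ccm_eq_zero huw.ne f
        (le_antisymm (not_lt.1 h) (ccm_nonneg f))).symm
  change hatF huw.ne (⇑(ContinuousMap.id _)) f = f.1
  unfold hatF
  simp only [ContinuousMap.id_apply]
  rw [hkey]
  exact spine_restf huw.ne f

/-- suspension of a homotopy between self-maps of the link -/
noncomputable def hatHomotopy (hu : u ∈ S) (hw : w ∈ S) (huw : G.Adj u w)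
    (hNu : ∀ y ∈ S, G.Adj u y → y = w) (hNw : ∀ y ∈ S, G.Adj w y → y = u)
    {k₀ k₁ : C(Xsp G ((S.erase u).erase w), Xsp G ((S.erase u).erase w))}
    (K : ContinuousMap.Homotopy k₀ k₁) :
    ContinuousMap.Homotopy (hatC hu hw huw hNu hNw k₀) (hatC hu hw huw hNu hNw k₁) where
  toFun p := ⟨hatF huw.ne (fun g => K (p.1, g)) p.2,
    XP_hatF hu hw huw hNu hNw (fun g => K (p.1, g)) p.2⟩
  continuous_toFun := by
    apply Continuous.subtype_mk
    have hmc : Continuous fun y : {p : unitInterval × Xsp G S // 0 < ccm u w p.2} =>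
        K (y.1.1, ghat u w huw.ne y.1.2 y.2) := by
      apply K.continuous.comp
      apply Continuous.prodMk
      · exact continuous_fst.comp continuous_subtype_val
      · exact cont_ghat' huw.ne (q := fun p : unitInterval × Xsp G S => p.2) continuous_snd
    have hres := cont_hatF (G := G) huw.ne (X := unitInterval × Xsp G S)
      (q := fun p => p.2) continuous_snd
      (m := fun y => K (y.1.1, ghat u w huw.ne y.1.2 y.2)) hmc
    unfold hatF
    exact hres
  map_zero_left f := by
    apply Subtype.ext
    show hatF huw.ne (fun g => K (0, g)) f = hatF huw.ne k₀ f
    unfold hatF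
    by_cases h : 0 < ccm u w f
    · simp only [dif_pos h, ContinuousMap.Homotopy.apply_zero]
    · simp only [dif_neg h]
  map_one_left f := by
    apply Subtype.ext
    show hatF huw.ne (fun g => K (1, g)) f = hatF huw.ne k₁ f
    unfold hatF
    by_cases h : 0 < ccm u w f
    · simp only [dif_pos h, ContinuousMap.Homotopy.apply_one]
    · simp only [dif_neg h]

end HatA
section SuspContr

variable {V : Type} [Fintype V] {G : SimpleGraph V} {S : Finset V} {u w : V}

lemma susp_contr (hu : u ∈ S) (hw : w ∈ S) (huw : G.Adj u w)
    (hNu : ∀ y ∈ S, G.Adj u y → y = w) (hNw : ∀ y ∈ S, G.Adj w y → y = u)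
    (hctr : ContractibleSpace (Xsp G ((S.erase u).erase w))) :
    ContractibleSpace (Xsp G S) := by
  obtain ⟨e⟩ := ContractibleSpace.hequiv_unit (Xsp G ((S.erase u).erase w))
  set k₁ : C(Xsp G ((S.erase u).erase w), Xsp G ((S.erase u).erase w)) :=
    e.invFun.comp e.toFun with hk₁
  obtain ⟨K⟩ := e.left_inv
  have H1 : ContinuousMap.Homotopy (hatC hu hw huw hNu hNw k₁) (ContinuousMap.id _) := by
    have h := hatHomotopy hu hw huw hNu hNw K
    rwa [hatC_id hu hw huw hNu hNw] at h
  set g₀ : Xsp G ((S.erase u).erase w) := e.invFun () with hg₀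
  have hS'S : (S.erase u).erase w ⊆ S := fun v hv =>
    Finset.mem_of_mem_erase (Finset.mem_of_mem_erase hv)
  set pt : Xsp G S := ⟨g₀.1, XP_mono hS'S g₀.2⟩ with hpt
  -- the second homotopy: contract the diamond onto g₀
  have memH2 : ∀ (p : unitInterval × Xsp G S),
      XP G S (spine u w ((1 - p.1.1) * p.2.1 u) ((1 - p.1.1) * p.2.1 w)
        ((1 - (1 - p.1.1) * (p.2.1 u + p.2.1 w)) • g₀.1)) := by
    rintro ⟨t, f⟩
    have ht0 : (0:ℝ) ≤ t.1 := t.2.1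
    have ht1 : t.1 ≤ 1 := t.2.2
    have hau : (0:ℝ) ≤ f.1 u := f.2.2.2.1 u
    have haw : (0:ℝ) ≤ f.1 w := f.2.2.2.1 w
    have habl : f.1 u + f.1 w ≤ 1 := by
      have h1 := ccm_eq huw.ne f
      have h2 := ccm_nonneg (u := u) (w := w) f
      linarith
    have hc' : (0:ℝ) ≤ 1 - (1 - t.1) * (f.1 u + f.1 w) := by nlinarith
    apply XP_spine hu hw huw hNu hNw
    · exact mul_nonneg (by linarith) hau
    · exact mul_nonneg (by linarith) haw
    · rcases XP_decomp huw f.2 with h | h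
      · left; rw [h, mul_zero]
      · right; rw [h, mul_zero]
    · intro v hv
      apply g₀.2.1 v
      intro h
      rw [Pi.smul_apply, h, smul_zero] at hv
      exact hv rfl
    · intro v₁ v₂ h1 h2
      apply g₀.2.2.1 v₁ v₂
      · intro h; rw [Pi.smul_apply, h, smul_zero] at h1; exact h1 rfl
      · intro h; rw [Pi.smul_apply, h, smul_zero] at h2; exact h2 rfl
    · intro v
      exact mul_nonneg hc' (g₀.2.2.2.1 v)
    · have hsum : ∑ v, ((1 - (1 - t.1) * (f.1 u + f.1 w)) • g₀.1) v
          = 1 - (1 - t.1) * (f.1 u + f.1 w) := by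
        have : ∀ v, ((1 - (1 - t.1) * (f.1 u + f.1 w)) • g₀.1) v
            = (1 - (1 - t.1) * (f.1 u + f.1 w)) * g₀.1 v := fun v => rfl
        rw [Finset.sum_congr rfl fun v _ => this v, ← Finset.mul_sum, g₀.2.2.2.2, mul_one]
      rw [hsum]
      ring
  have H2 : ContinuousMap.Homotopy (hatC hu hw huw hNu hNw k₁)
      (ContinuousMap.const (Xsp G S) pt) := by
    refine { toFun := fun p => ⟨_, memH2 p⟩, continuous_toFun := ?_,
             map_zero_left := ?_, map_one_left := ?_ }
    · apply Continuous.subtype_mk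
      apply continuous_pi
      intro v
      have ct : Continuous fun p : unitInterval × Xsp G S => p.1.1 :=
        continuous_subtype_val.comp continuous_fst
      have cu : Continuous fun p : unitInterval × Xsp G S => p.2.1 u :=
        (continuous_apply u).comp (continuous_subtype_val.comp continuous_snd)
      have cw : Continuous fun p : unitInterval × Xsp G S => p.2.1 w :=
        (continuous_apply w).comp (continuous_subtype_val.comp continuous_snd)
      have c1 : Continuous fun p : unitInterval × Xsp G S =>
          (if v = u then (1 - p.1.1) * p.2.1 u else (0:ℝ)) := by
        by_cases h : v = u
        · simp only [if_pos h]; exact (continuous_const.sub ct).mul cu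
        · simp only [if_neg h]; exact continuous_const
      have c2 : Continuous fun p : unitInterval × Xsp G S =>
          (if v = w then (1 - p.1.1) * p.2.1 w else (0:ℝ)) := by
        by_cases h : v = w
        · simp only [if_pos h]; exact (continuous_const.sub ct).mul cw
        · simp only [if_neg h]; exact continuous_const
      have c3 : Continuous fun p : unitInterval × Xsp G S =>
          (1 - (1 - p.1.1) * (p.2.1 u + p.2.1 w)) * g₀.1 v :=
        (continuous_const.sub ((continuous_const.sub ct).mul (cu.add cw))).mul continuous_const
      exact (c1.add c2).add c3
    · intro f
      apply Subtype.ext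
      have e1 : (1 - ((0 : unitInterval) : ℝ)) * f.1 u = f.1 u := by norm_num
      have e2 : (1 - ((0 : unitInterval) : ℝ)) * f.1 w = f.1 w := by norm_num
      have hcc : 1 - (1 - ((0 : unitInterval) : ℝ)) * (f.1 u + f.1 w) = ccm u w f := by
        have := ccm_eq huw.ne f
        norm_num
        linarith
      have e3 : (1 - (1 - ((0 : unitInterval) : ℝ)) * (f.1 u + f.1 w)) • g₀.1
          = (if h : 0 < ccm u w f then ccm u w f • (k₁ (ghat u w huw.ne f h)).1 else 0) := by
        by_cases h : 0 < ccm u w f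
        · rw [dif_pos h, hcc]
          rfl
        · rw [dif_neg h]
          rw [hcc, le_antisymm (not_lt.1 h) (ccm_nonneg f), zero_smul]
      show spine u w ((1 - ((0 : unitInterval) : ℝ)) * f.1 u)
          ((1 - ((0 : unitInterval) : ℝ)) * f.1 w)
          ((1 - (1 - ((0 : unitInterval) : ℝ)) * (f.1 u + f.1 w)) • g₀.1)
          = hatF huw.ne (⇑k₁) f
      rw [e1, e2, e3]
      rfl
    · intro f
      apply Subtype.ext
      funext v
      show spine u w ((1 - ((1 : unitInterval) : ℝ)) * f.1 u)
          ((1 - ((1 : unitInterval) : ℝ)) * f.1 w)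
          ((1 - (1 - ((1 : unitInterval) : ℝ)) * (f.1 u + f.1 w)) • g₀.1) v = g₀.1 v
      simp [spine]
  rw [contractible_iff_id_nullhomotopic]
  exact ⟨pt, ⟨(H1.symm.trans H2)⟩⟩

end SuspContr
section OctSide

open Finset

noncomputable def lastc {k : ℕ} (y : Oct (k+1)) : ℝ := y.1 (Fin.last k)

noncomputable def cy {k : ℕ} (y : Oct (k+1)) : ℝ := ∑ j : Fin k, |y.1 j.castSucc|

lemma cy_nonneg {k : ℕ} (y : Oct (k+1)) : 0 ≤ cy y :=
  Finset.sum_nonneg fun j _ => abs_nonneg _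

lemma cy_add_abs {k : ℕ} (y : Oct (k+1)) : cy y + |lastc y| = 1 := by
  have := y.2
  rw [Fin.sum_univ_castSucc (f := fun i => |y.1 i|)] at this
  exact this

lemma max_sub_max (β : ℝ) : max β 0 - max (-β) 0 = β := by
  rcases le_total 0 β with h | h
  · rw [max_eq_left h, max_eq_right (by linarith)]; ring
  · rw [max_eq_right h, max_eq_left (by linarith)]; ring

lemma max_add_max (β : ℝ) : max β 0 + max (-β) 0 = |β| := by
  rcases le_total 0 β with h | h
  · rw [max_eq_left h, max_eq_right (by linarith), abs_of_nonneg h]; ring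
  · rw [max_eq_right h, max_eq_left (by linarith), abs_of_nonpos h]; ring

lemma max_or_zero (β : ℝ) : max β 0 = 0 ∨ max (-β) 0 = 0 := by
  rcases le_total 0 β with h | h
  · right; exact max_eq_right (by linarith)
  · left; exact max_eq_right h

lemma cont_lastc {k : ℕ} : Continuous fun y : Oct (k+1) => lastc y :=
  (continuous_apply (Fin.last k)).comp ((PiLp.continuous_ofLp 2 (fun _ : Fin (k+1) => ℝ)).comp
    continuous_subtype_val)

lemma cont_cy {k : ℕ} : Continuous fun y : Oct (k+1) => cy y := by
  unfold cy
  exact continuous_finset_sum _ fun j _ =>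
    ((continuous_apply j.castSucc).comp ((PiLp.continuous_ofLp 2 (fun _ : Fin (k+1) => ℝ)).comp
      continuous_subtype_val)).abs

/-- the normalized front part of an octahedron point -/
noncomputable def yhat {k : ℕ} (y : Oct (k+1)) (h : 0 < cy y) : Oct k := by
  refine ⟨WithLp.toLp 2 ((cy y)⁻¹ • (fun j : Fin k => y.1 j.castSucc)), ?_⟩
  have habs : ∀ j : Fin k, |((cy y)⁻¹ • (fun j => y.1 j.castSucc) : Fin k → ℝ) j|
      = (cy y)⁻¹ * |y.1 j.castSucc| := by
    intro j
    show |(cy y)⁻¹ * y.1 j.castSucc| = _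
    rw [abs_mul, abs_of_nonneg (inv_nonneg.2 h.le)]
  show ∑ j : Fin k, |((cy y)⁻¹ • (fun j => y.1 j.castSucc) : Fin k → ℝ) j| = 1
  rw [Finset.sum_congr rfl fun j _ => habs j, ← Finset.mul_sum]
  exact inv_mul_cancel₀ h.ne'

lemma cont_yhat' {k : ℕ} {X : Type*} [TopologicalSpace X] {q : X → Oct (k+1)}
    (hq : Continuous q) :
    Continuous fun y : {x : X // 0 < cy (q x)} => yhat (q y.1) y.2 := by
  apply Continuous.subtype_mk
  apply (PiLp.continuous_toLp 2 (fun _ : Fin k => ℝ)).comp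
  apply continuous_pi
  intro j
  have hc : Continuous fun y : {x : X // 0 < cy (q x)} => cy (q y.1) :=
    cont_cy.comp (hq.comp continuous_subtype_val)
  exact (hc.inv₀ fun y => y.2.ne').mul
    ((continuous_apply j.castSucc).comp ((PiLp.continuous_ofLp 2 (fun _ : Fin (k+1) => ℝ)).comp
      (continuous_subtype_val.comp (hq.comp continuous_subtype_val))))

/-- suspension of a self map of Oct k -/
noncomputable def octHatF {k : ℕ} (m : Oct k → Oct k) (y : Oct (k+1)) : Fin (k+1) → ℝ :=
  Fin.snoc (if h : 0 < cy y then cy y • (m (yhat y h)).1 else 0) (lastc y)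

lemma sum_abs_smul_oct {k : ℕ} (c : ℝ) (hc : 0 ≤ c) (z : Oct k) :
    ∑ j, |(c • z.1 : Fin k → ℝ) j| = c := by
  have habs : ∀ j : Fin k, |(c • z.1 : Fin k → ℝ) j| = c * |z.1 j| := by
    intro j
    show |c * z.1 j| = _
    rw [abs_mul, abs_of_nonneg hc]
  rw [Finset.sum_congr rfl fun j _ => habs j, ← Finset.mul_sum, z.2, mul_one]

lemma octHatF_mem {k : ℕ} (m : Oct k → Oct k) (y : Oct (k+1)) :
    ∑ i, |octHatF m y i| = 1 := by
  unfold octHatF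
  rw [Fin.sum_univ_castSucc (f := fun i => |(Fin.snoc
    (if h : 0 < cy y then cy y • (m (yhat y h)).1 else 0) (lastc y) : Fin (k+1) → ℝ) i|)]
  simp only [Fin.snoc_castSucc, Fin.snoc_last]
  by_cases h : 0 < cy y
  · rw [dif_pos h]
    rw [sum_abs_smul_oct (cy y) h.le (m (yhat y h))]
    exact cy_add_abs y
  · rw [dif_neg h]
    have hc0 : cy y = 0 := le_antisymm (not_lt.1 h) (cy_nonneg y)
    have := cy_add_abs y
    rw [hc0] at this
    simpa using this

lemma cont_octHatF {k : ℕ} {X : Type*} [TopologicalSpace X] {q : X → Oct (k+1)}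
    (hq : Continuous q) {m : {x : X // 0 < cy (q x)} → Oct k} (hm : Continuous m) :
    Continuous fun x => (Fin.snoc
      (if h : 0 < cy (q x) then cy (q x) • (m ⟨x, h⟩).1 else 0) (lastc (q x))
      : Fin (k+1) → ℝ) := by
  have cdite : Continuous fun x =>
      (if h : 0 < cy (q x) then cy (q x) • (m ⟨x, h⟩).1 else (0 : EuclideanSpace ℝ (Fin k))) := by
    apply cone_cont (c := fun x => cy (q x)) (cont_cy.comp hq) (fun x => cy_nonneg (q x))
      (F := fun y => (m y).1) (continuous_subtype_val.comp hm) (M := 1)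
    intro y
    exact Oct.norm_le (m y)
  apply continuous_pi
  intro i
  refine Fin.lastCases ?_ ?_ i
  · have : (fun x => (Fin.snoc
        (if h : 0 < cy (q x) then cy (q x) • (m ⟨x, h⟩).1 else 0) (lastc (q x))
        : Fin (k+1) → ℝ) (Fin.last k)) = fun x => lastc (q x) := by
      funext x
      exact Fin.snoc_last _ _
    rw [this]
    exact cont_lastc.comp hq
  · intro j
    have : (fun x => (Fin.snoc
        (if h : 0 < cy (q x) then cy (q x) • (m ⟨x, h⟩).1 else 0) (lastc (q x))
        : Fin (k+1) → ℝ) j.castSucc) = fun x =>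
          (if h : 0 < cy (q x) then cy (q x) • (m ⟨x, h⟩).1
            else (0 : EuclideanSpace ℝ (Fin k))) j := by
      funext x
      rw [Fin.snoc_castSucc]; split_ifs <;> rfl
    rw [this]
    exact (continuous_apply j).comp ((PiLp.continuous_ofLp 2 (fun _ : Fin k => ℝ)).comp cdite)

noncomputable def octHatC {k : ℕ} (m : C(Oct k, Oct k)) : C(Oct (k+1), Oct (k+1)) :=
  ⟨fun y => ⟨WithLp.toLp 2 (octHatF m y), octHatF_mem m y⟩, by
    apply Continuous.subtype_mk
    exact (PiLp.continuous_toLp 2 (fun _ : Fin (k+1) => ℝ)).comp <| cont_octHatF (q := id) continuous_id (m := fun y => m (yhat y.1 y.2))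
      (m.continuous.comp (cont_yhat' continuous_id))⟩

lemma octHatC_id {k : ℕ} : octHatC (ContinuousMap.id (Oct k)) = ContinuousMap.id (Oct (k+1)) := by
  ext y
  apply Subtype.ext
  apply WithLp.ofLp_injective 2
  show octHatF (⇑(ContinuousMap.id (Oct k))) y = y.1.ofLp
  unfold octHatF
  simp only [ContinuousMap.id_apply]
  funext i
  refine Fin.lastCases ?_ ?_ i
  · rw [Fin.snoc_last]
    rfl
  · intro j
    rw [Fin.snoc_castSucc]
    by_cases h : 0 < cy y
    · rw [dif_pos h]
      show cy y * ((cy y)⁻¹ * y.1 j.castSucc) = _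
      rw [← mul_assoc, mul_inv_cancel₀ h.ne', one_mul]
    · rw [dif_neg h]
      have hc0 : cy y = 0 := le_antisymm (not_lt.1 h) (cy_nonneg y)
      have : |y.1 j.castSucc| = 0 := by
        have := (Finset.sum_eq_zero_iff_of_nonneg
          (fun j (_ : j ∈ Finset.univ) => abs_nonneg (y.1 (Fin.castSucc j)))).1 hc0
        exact this j (Finset.mem_univ j)
      have h0 : y.1 j.castSucc = 0 := abs_eq_zero.1 this
      rw [h0]
      rfl

noncomputable def octHatHomotopy {k : ℕ} {m₀ m₁ : C(Oct k, Oct k)}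
    (K : ContinuousMap.Homotopy m₀ m₁) :
    ContinuousMap.Homotopy (octHatC m₀) (octHatC m₁) where
  toFun p := ⟨WithLp.toLp 2 (octHatF (fun z => K (p.1, z)) p.2), octHatF_mem (fun z => K (p.1, z)) p.2⟩
  continuous_toFun := by
    apply Continuous.subtype_mk
    have hmc : Continuous fun y : {p : unitInterval × Oct (k+1) // 0 < cy p.2} =>
        K (y.1.1, yhat y.1.2 y.2) := by
      apply K.continuous.comp
      apply Continuous.prodMk
      · exact continuous_fst.comp continuous_subtype_val
      · exact cont_yhat' (q := fun p : unitInterval × Oct (k+1) => p.2) continuous_snd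
    have hres := cont_octHatF (X := unitInterval × Oct (k+1)) (q := fun p => p.2)
      continuous_snd (m := fun y => K (y.1.1, yhat y.1.2 y.2)) hmc
    unfold octHatF
    exact (PiLp.continuous_toLp 2 (fun _ : Fin (k+1) => ℝ)).comp hres
  map_zero_left y := by
    apply Subtype.ext
    apply WithLp.ofLp_injective 2
    show octHatF (fun z => K (0, z)) y = octHatF (⇑m₀) y
    unfold octHatF
    by_cases h : 0 < cy y
    · simp only [dif_pos h, ContinuousMap.Homotopy.apply_zero]
    · simp only [dif_neg h]
  map_one_left y := by
    apply Subtype.ext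
    apply WithLp.ofLp_injective 2
    show octHatF (fun z => K (1, z)) y = octHatF (⇑m₁) y
    unfold octHatF
    by_cases h : 0 < cy y
    · simp only [dif_pos h, ContinuousMap.Homotopy.apply_one]
    · simp only [dif_neg h]

end OctSide
section PsiMaps

variable {V : Type} [Fintype V] {G : SimpleGraph V} {S : Finset V} {u w : V}

lemma link_val_u (g : Xsp G ((S.erase u).erase w)) : g.1 u = 0 := by
  by_contra h
  exact (Finset.notMem_erase u S) (Finset.mem_of_mem_erase (g.2.1 u h))

lemma link_val_w (g : Xsp G ((S.erase u).erase w)) : g.1 w = 0 := by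
  by_contra h
  exact (Finset.notMem_erase w (S.erase u)) (g.2.1 w h)

/-- generic continuity of spine-cone maps -/
lemma cont_spine_cone (huw0 : u ≠ w) {X : Type*} [TopologicalSpace X]
    {A B : X → ℝ} (hA : Continuous A) (hB : Continuous B)
    {c : X → ℝ} (hc : Continuous c) (h0 : ∀ x, 0 ≤ c x)
    {m : {x : X // 0 < c x} → Xsp G ((S.erase u).erase w)} (hm : Continuous m) :
    Continuous fun x => spine u w (A x) (B x)
      (if h : 0 < c x then c x • (m ⟨x, h⟩).1 else 0) := by
  have cdite : Continuous fun x =>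
      (if h : 0 < c x then c x • (m ⟨x, h⟩).1 else (0 : V → ℝ)) := by
    apply cone_cont hc h0 (F := fun y => (m y).1) (continuous_subtype_val.comp hm) (M := 1)
    intro y
    exact XP.norm_le (m y).2
  apply continuous_pi
  intro v
  have cd : Continuous fun x =>
      (if h : 0 < c x then c x • (m ⟨x, h⟩).1 else (0 : V → ℝ)) v :=
    (continuous_apply v).comp cdite
  unfold spine
  have c1 : Continuous fun x => (if v = u then A x else (0:ℝ)) := by
    by_cases h : v = u
    · simp only [if_pos h]; exact hA
    · simp only [if_neg h]; exact continuous_const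
  have c2 : Continuous fun x => (if v = w then B x else (0:ℝ)) := by
    by_cases h : v = w
    · simp only [if_pos h]; exact hB
    · simp only [if_neg h]; exact continuous_const
  exact (c1.add c2).add cd

variable {k : ℕ}

lemma cont_snoc_cone {X : Type*} [TopologicalSpace X] {c : X → ℝ} (hc : Continuous c)
    (h0 : ∀ x, 0 ≤ c x) {m : {x : X // 0 < c x} → Oct k} (hm : Continuous m)
    {β : X → ℝ} (hβ : Continuous β) :
    Continuous fun x => (Fin.snoc
      (if h : 0 < c x then c x • (m ⟨x, h⟩).1 else 0) (β x) : Fin (k+1) → ℝ) := by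
  have cdite : Continuous fun x =>
      (if h : 0 < c x then c x • (m ⟨x, h⟩).1 else (0 : EuclideanSpace ℝ (Fin k))) := by
    apply cone_cont hc h0 (F := fun y => (m y).1) (continuous_subtype_val.comp hm) (M := 1)
    intro y
    exact Oct.norm_le (m y)
  apply continuous_pi
  intro i
  refine Fin.lastCases ?_ ?_ i
  · have he : (fun x => (Fin.snoc
        (if h : 0 < c x then c x • (m ⟨x, h⟩).1 else 0) (β x)
        : Fin (k+1) → ℝ) (Fin.last k)) = fun x => β x := by
      funext x
      exact Fin.snoc_last _ _
    rw [he]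
    exact hβ
  · intro j
    have he : (fun x => (Fin.snoc
        (if h : 0 < c x then c x • (m ⟨x, h⟩).1 else 0) (β x)
        : Fin (k+1) → ℝ) j.castSucc) = fun x =>
          (if h : 0 < c x then c x • (m ⟨x, h⟩).1
            else (0 : EuclideanSpace ℝ (Fin k))) j := by
      funext x
      rw [Fin.snoc_castSucc]; split_ifs <;> rfl
    rw [he]
    exact (continuous_apply j).comp ((PiLp.continuous_ofLp 2 (fun _ : Fin k => ℝ)).comp cdite)

/-- the suspension map to the octahedron -/
noncomputable def PsiF (huw0 : u ≠ w) (φ : Xsp G ((S.erase u).erase w) → Oct k)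
    (f : Xsp G S) : Fin (k+1) → ℝ :=
  Fin.snoc (if h : 0 < ccm u w f then ccm u w f • (φ (ghat u w huw0 f h)).1 else 0)
    (f.1 u - f.1 w)

lemma abs_sub_eq_add (huw : G.Adj u w) (f : Xsp G S) : |f.1 u - f.1 w| = f.1 u + f.1 w := by
  have hau : (0:ℝ) ≤ f.1 u := f.2.2.2.1 u
  have haw : (0:ℝ) ≤ f.1 w := f.2.2.2.1 w
  rcases XP_decomp huw f.2 with h | h
  · rw [h, abs_of_nonpos (by linarith)]; ring
  · rw [h, abs_of_nonneg (by linarith)]; ring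

lemma PsiF_mem (huw : G.Adj u w) (φ : Xsp G ((S.erase u).erase w) → Oct k) (f : Xsp G S) :
    ∑ i, |PsiF huw.ne φ f i| = 1 := by
  unfold PsiF
  rw [Fin.sum_univ_castSucc (f := fun i => |(Fin.snoc
    (if h : 0 < ccm u w f then ccm u w f • (φ (ghat u w huw.ne f h)).1 else 0)
    (f.1 u - f.1 w) : Fin (k+1) → ℝ) i|)]
  simp only [Fin.snoc_castSucc, Fin.snoc_last]
  rw [abs_sub_eq_add huw f]
  have hsum := ccm_eq huw.ne f
  by_cases h : 0 < ccm u w f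
  · rw [dif_pos h, sum_abs_smul_oct _ h.le (φ (ghat u w huw.ne f h))]
    linarith
  · rw [dif_neg h]
    have hc0 : ccm u w f = 0 := le_antisymm (not_lt.1 h) (ccm_nonneg f)
    simp only [Pi.zero_apply, abs_zero, Finset.sum_const_zero]
    linarith

noncomputable def PsiC (huw : G.Adj u w) (φ : C(Xsp G ((S.erase u).erase w), Oct k)) :
    C(Xsp G S, Oct (k+1)) :=
  ⟨fun f => ⟨WithLp.toLp 2 (PsiF huw.ne φ f), PsiF_mem huw φ f⟩, by
    apply Continuous.subtype_mk
    have hres := cont_snoc_cone (X := Xsp G S) (c := fun f => ccm u w f) cont_ccm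
      (fun f => ccm_nonneg f) (m := fun y => φ (ghat u w huw.ne y.1 y.2))
      (φ.continuous.comp (cont_ghat' huw.ne continuous_id))
      (β := fun f => f.1 u - f.1 w)
      (((continuous_apply u).comp continuous_subtype_val).sub
        ((continuous_apply w).comp continuous_subtype_val))
    unfold PsiF
    exact (PiLp.continuous_toLp 2 (fun _ : Fin (k+1) => ℝ)).comp hres⟩

/-- the inverse suspension map from the octahedron -/
noncomputable def PsiInvF (huw0 : u ≠ w) (ψ : Oct k → Xsp G ((S.erase u).erase w))
    (y : Oct (k+1)) : V → ℝ :=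
  spine u w (max (lastc y) 0) (max (-lastc y) 0)
    (if h : 0 < cy y then cy y • (ψ (yhat y h)).1 else 0)

lemma PsiInvF_mem (hu : u ∈ S) (hw : w ∈ S) (huw : G.Adj u w)
    (hNu : ∀ y ∈ S, G.Adj u y → y = w) (hNw : ∀ y ∈ S, G.Adj w y → y = u)
    (ψ : Oct k → Xsp G ((S.erase u).erase w)) (y : Oct (k+1)) :
    XP G S (PsiInvF huw.ne ψ y) := by
  apply XP_spine hu hw huw hNu hNw (le_max_right _ _) (le_max_right _ _) (max_or_zero _)
  · intro v hv
    by_cases h : 0 < cy y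
    · rw [dif_pos h] at hv
      apply (ψ (yhat y h)).2.1 v
      intro hz
      rw [Pi.smul_apply, hz, smul_zero] at hv
      exact hv rfl
    · rw [dif_neg h] at hv
      exact absurd rfl hv
  · intro v₁ v₂ h1 h2
    by_cases h : 0 < cy y
    · rw [dif_pos h] at h1 h2
      apply (ψ (yhat y h)).2.2.1 v₁ v₂
      · intro hz; rw [Pi.smul_apply, hz, smul_zero] at h1; exact h1 rfl
      · intro hz; rw [Pi.smul_apply, hz, smul_zero] at h2; exact h2 rfl
    · rw [dif_neg h] at h1
      exact absurd rfl h1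
  · intro v
    by_cases h : 0 < cy y
    · rw [dif_pos h, Pi.smul_apply]
      exact mul_nonneg h.le ((ψ (yhat y h)).2.2.2.1 v)
    · rw [dif_neg h]; exact le_rfl
  · have habs := cy_add_abs y
    by_cases h : 0 < cy y
    · rw [dif_pos h]
      have : ∑ v, (cy y • (ψ (yhat y h)).1) v = cy y := by
        have heq : ∀ v, (cy y • (ψ (yhat y h)).1) v = cy y * (ψ (yhat y h)).1 v := fun v => rfl
        rw [Finset.sum_congr rfl fun v _ => heq v, ← Finset.mul_sum,
          (ψ (yhat y h)).2.2.2.2, mul_one]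
      rw [this, max_add_max]
      linarith
    · rw [dif_neg h]
      have hc0 : cy y = 0 := le_antisymm (not_lt.1 h) (cy_nonneg y)
      simp only [Pi.zero_apply, Finset.sum_const_zero]
      rw [add_zero, max_add_max]
      linarith

noncomputable def PsiInvC (hu : u ∈ S) (hw : w ∈ S) (huw : G.Adj u w)
    (hNu : ∀ y ∈ S, G.Adj u y → y = w) (hNw : ∀ y ∈ S, G.Adj w y → y = u)
    (ψ : C(Oct k, Xsp G ((S.erase u).erase w))) : C(Oct (k+1), Xsp G S) :=
  ⟨fun y => ⟨PsiInvF huw.ne ψ y, PsiInvF_mem hu hw huw hNu hNw ψ y⟩, by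
    apply Continuous.subtype_mk
    have hres := cont_spine_cone (G := G) huw.ne (X := Oct (k+1))
      (A := fun y => max (lastc y) 0) (B := fun y => max (-lastc y) 0)
      (cont_lastc.max continuous_const) ((cont_lastc.neg).max continuous_const)
      (c := fun y => cy y) cont_cy (fun y => cy_nonneg y)
      (m := fun p => ψ (yhat p.1 p.2)) (ψ.continuous.comp (cont_yhat' continuous_id))
    unfold PsiInvF
    exact hres⟩

/-- first composite identity -/
lemma comp_PsiInv_Psi (hu : u ∈ S) (hw : w ∈ S) (huw : G.Adj u w)
    (hNu : ∀ y ∈ S, G.Adj u y → y = w) (hNw : ∀ y ∈ S, G.Adj w y → y = u)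
    (φ : C(Xsp G ((S.erase u).erase w), Oct k)) (ψ : C(Oct k, Xsp G ((S.erase u).erase w))) :
    (PsiInvC hu hw huw hNu hNw ψ).comp (PsiC huw φ) = hatC hu hw huw hNu hNw (ψ.comp φ) := by
  ext f
  apply Subtype.ext
  set Y : Oct (k+1) := (PsiC huw φ) f with hY
  show PsiInvF huw.ne ψ Y = hatF huw.ne (ψ.comp φ) f
  have hau : (0:ℝ) ≤ f.1 u := f.2.2.2.1 u
  have haw : (0:ℝ) ≤ f.1 w := f.2.2.2.1 w
  have hYval : Y.1.ofLp = (Fin.snoc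
      (if h : 0 < ccm u w f then ccm u w f • (φ (ghat u w huw.ne f h)).1 else 0)
      (f.1 u - f.1 w) : Fin (k+1) → ℝ) := rfl
  have l1 : lastc Y = f.1 u - f.1 w := by
    show Y.1 (Fin.last k) = _
    rw [hYval]
    exact Fin.snoc_last _ _
  have l2 : cy Y = ccm u w f := by
    unfold cy
    have hcast : ∀ j : Fin k, Y.1 j.castSucc
        = (if h : 0 < ccm u w f then ccm u w f • (φ (ghat u w huw.ne f h)).1 else 0) j := by
      intro j
      rw [hYval]
      rw [Fin.snoc_castSucc]; split_ifs <;> rfl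
    by_cases h : 0 < ccm u w f
    · have hz : ∀ j : Fin k, |Y.1 j.castSucc|
          = |(ccm u w f • (φ (ghat u w huw.ne f h)).1 : Fin k → ℝ) j| := by
        intro j; rw [hcast j, dif_pos h]; rfl
      rw [Finset.sum_congr rfl fun j _ => hz j]
      exact sum_abs_smul_oct _ h.le (φ (ghat u w huw.ne f h))
    · have hz : ∀ j : Fin k, |Y.1 j.castSucc| = (0:ℝ) := by
        intro j; rw [hcast j, dif_neg h]; simp
      rw [Finset.sum_congr rfl fun j _ => hz j, Finset.sum_const_zero]
      exact (le_antisymm (not_lt.1 h) (ccm_nonneg f)).symm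
  have l3a : max (lastc Y) 0 = f.1 u := by
    rw [l1]
    rcases XP_decomp huw f.2 with h | h
    · rw [h]; rw [max_eq_right (by linarith)]
    · rw [h]; rw [max_eq_left (by linarith)]; ring
  have l3b : max (-lastc Y) 0 = f.1 w := by
    rw [l1]
    rcases XP_decomp huw f.2 with h | h
    · rw [h]; rw [max_eq_left (by linarith)]; ring
    · rw [h]; rw [max_eq_right (by linarith)]
  unfold PsiInvF hatF
  rw [l3a, l3b]
  congr 1
  by_cases h : 0 < ccm u w f
  · have hcy : 0 < cy Y := by rw [l2]; exact h
    rw [dif_pos hcy, dif_pos h]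
    have hyhat : yhat Y hcy = φ (ghat u w huw.ne f h) := by
      apply Subtype.ext
      ext j
      show (cy Y)⁻¹ * Y.1 j.castSucc = _
      have hcast : Y.1 j.castSucc
          = (if h' : 0 < ccm u w f then ccm u w f • (φ (ghat u w huw.ne f h')).1 else 0) j := by
        rw [hYval]
        rw [Fin.snoc_castSucc]; split_ifs <;> rfl
      rw [hcast, dif_pos h, l2]
      show (ccm u w f)⁻¹ * (ccm u w f * (φ (ghat u w huw.ne f h)).1 j) = _
      rw [← mul_assoc, inv_mul_cancel₀ h.ne', one_mul]
    rw [l2, hyhat]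
    rfl
  · have hcy : ¬ 0 < cy Y := by rw [l2]; exact h
    rw [dif_neg hcy, dif_neg h]

/-- second composite identity -/
lemma comp_Psi_PsiInv (hu : u ∈ S) (hw : w ∈ S) (huw : G.Adj u w)
    (hNu : ∀ y ∈ S, G.Adj u y → y = w) (hNw : ∀ y ∈ S, G.Adj w y → y = u)
    (φ : C(Xsp G ((S.erase u).erase w), Oct k)) (ψ : C(Oct k, Xsp G ((S.erase u).erase w))) :
    (PsiC huw φ).comp (PsiInvC hu hw huw hNu hNw ψ) = octHatC (φ.comp ψ) := by
  ext y
  apply Subtype.ext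
  apply WithLp.ofLp_injective 2
  set F : Xsp G S := (PsiInvC hu hw huw hNu hNw ψ) y with hF
  show PsiF huw.ne φ F = octHatF (φ.comp ψ) y
  have hdu : (if h : 0 < cy y then cy y • (ψ (yhat y h)).1 else 0) u = 0 := by
    by_cases h : 0 < cy y
    · rw [dif_pos h, Pi.smul_apply, link_val_u (ψ (yhat y h)), smul_zero]
    · rw [dif_neg h]; rfl
  have hdw : (if h : 0 < cy y then cy y • (ψ (yhat y h)).1 else 0) w = 0 := by
    by_cases h : 0 < cy y
    · rw [dif_pos h, Pi.smul_apply, link_val_w (ψ (yhat y h)), smul_zero]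
    · rw [dif_neg h]; rfl
  have m1 : F.1 u = max (lastc y) 0 := by
    show PsiInvF huw.ne ψ y u = _
    unfold PsiInvF
    exact spine_apply_u huw.ne _ _ hdu
  have m2 : F.1 w = max (-lastc y) 0 := by
    show PsiInvF huw.ne ψ y w = _
    unfold PsiInvF
    exact spine_apply_w huw.ne _ _ hdw
  have m3 : ccm u w F = cy y := by
    have h1 := ccm_eq huw.ne F
    have h2 := cy_add_abs y
    rw [m1, m2, max_add_max] at h1
    linarith
  unfold PsiF octHatF
  rw [m1, m2, max_sub_max]
  congr 1
  by_cases h : 0 < cy y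
  · have hccm : 0 < ccm u w F := by rw [m3]; exact h
    rw [dif_pos hccm, dif_pos h]
    have hghat : ghat u w huw.ne F hccm = ψ (yhat y h) := by
      apply Subtype.ext
      funext v
      show (ccm u w F)⁻¹ * restf u w F v = (ψ (yhat y h)).1 v
      by_cases e1 : v = u
      · rw [e1]
        have hr : restf u w F u = 0 := by simp [restf]
        rw [hr, mul_zero, link_val_u (ψ (yhat y h))]
      by_cases e2 : v = w
      · rw [e2]
        have hr : restf u w F w = 0 := by simp [restf, huw.ne.symm]
        rw [hr, mul_zero, link_val_w (ψ (yhat y h))]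
      · rw [restf_apply_mem e1 e2]
        have hFv : F.1 v = cy y * (ψ (yhat y h)).1 v := by
          show PsiInvF huw.ne ψ y v = _
          unfold PsiInvF
          rw [spine_apply_other e1 e2]
          rw [dif_pos h]
          rfl
        rw [hFv, m3, ← mul_assoc, inv_mul_cancel₀ h.ne', one_mul]
    rw [m3, hghat]
    rfl
  · have hccm : ¬ 0 < ccm u w F := by rw [m3]; exact h
    rw [dif_neg hccm, dif_neg h]

/-- THE suspension lemma, sphere case -/
lemma susp_sphere (hu : u ∈ S) (hw : w ∈ S) (huw : G.Adj u w)
    (hNu : ∀ y ∈ S, G.Adj u y → y = w) (hNw : ∀ y ∈ S, G.Adj w y → y = u)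
    (e : ContinuousMap.HomotopyEquiv (Xsp G ((S.erase u).erase w)) (Oct k)) :
    Nonempty (ContinuousMap.HomotopyEquiv (Xsp G S) (Oct (k+1))) := by
  obtain ⟨KL⟩ := e.left_inv
  obtain ⟨KR⟩ := e.right_inv
  refine ⟨{ toFun := PsiC huw e.toFun, invFun := PsiInvC hu hw huw hNu hNw e.invFun,
            left_inv := ?_, right_inv := ?_ }⟩
  · rw [comp_PsiInv_Psi hu hw huw hNu hNw e.toFun e.invFun]
    have h := hatHomotopy hu hw huw hNu hNw KL
    rw [hatC_id hu hw huw hNu hNw] at h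
    exact ⟨h⟩
  · rw [comp_Psi_PsiInv hu hw huw hNu hNw e.toFun e.invFun]
    have h := octHatHomotopy KR
    rw [octHatC_id] at h
    exact ⟨h⟩

end PsiMaps
section Main

lemma main_induction {V : Type} [Fintype V] (G : SimpleGraph V) (hG : G.IsAcyclic)
    (S : Finset V) :
    ContractibleSpace (Xsp G S) ∨
      ∃ k : ℕ, Nonempty (ContinuousMap.HomotopyEquiv (Xsp G S) (Oct k)) := by
  induction S using Finset.strongInduction with
  | _ S ih =>
    by_cases hS : S.Nonempty
    · by_cases hiso : ∃ v ∈ S, ∀ y ∈ S, ¬ G.Adj v y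
      · obtain ⟨v, hv, hvi⟩ := hiso
        exact Or.inl (contractible_of_isolated hv hvi)
      · push_neg at hiso
        obtain ⟨u, hu, hle⟩ := exists_leaf hG hS
        obtain ⟨w, hw, huw⟩ := hiso u hu
        have hNu : ∀ y ∈ S, G.Adj u y → y = w := fun y hy hy2 => hle y hy w hw hy2 huw
        by_cases hsec : ∃ x ∈ S, G.Adj w x ∧ x ≠ u
        · obtain ⟨x, hx, hwx, hxu⟩ := hsec
          obtain ⟨E⟩ := fold_hequiv hu hx hwx hxu hNu
          have hsub : S.erase x ⊂ S := Finset.erase_ssubset hx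
          rcases ih (S.erase x) hsub with hctr | ⟨k, ⟨e⟩⟩
          · haveI := hctr
            exact Or.inl E.contractibleSpace
          · exact Or.inr ⟨k, ⟨E.trans e⟩⟩
        · push_neg at hsec
          have hNw : ∀ y ∈ S, G.Adj w y → y = u := fun y hy hy2 => hsec y hy hy2
          have hsub : (S.erase u).erase w ⊂ S := by
            have h1 : (S.erase u).erase w ⊆ S := fun v hv =>
              Finset.mem_of_mem_erase (Finset.mem_of_mem_erase hv)
            rw [Finset.ssubset_iff_of_subset h1]
            refine ⟨u, hu, ?_⟩
            intro hcon
            exact (Finset.notMem_erase u S) (Finset.mem_of_mem_erase hcon)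
          rcases ih _ hsub with hctr | ⟨k, ⟨e⟩⟩
          · exact Or.inl (susp_contr hu hw huw hNu hNw hctr)
          · exact Or.inr ⟨k+1, susp_sphere hu hw huw hNu hNw e⟩
    · rw [Finset.not_nonempty_iff_eq_empty] at hS
      subst hS
      right
      haveI h1 := xsp_empty_isEmpty G
      haveI h2 := oct_zero_isEmpty
      exact ⟨0, ⟨hequivOfIsEmpty _ _⟩⟩

end Main

end AuxProof

/-- The independence complex of a forest is contractible or homotopy
equivalent to a sphere (the sphere `S^{k-1}` in `ℝ^k`; `k = 0` gives `S^{-1} = ∅`). -/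
theorem statement9 {V : Type} [Fintype V] (G : SimpleGraph V) (hG : G.IsAcyclic) :
    ContractibleSpace G.indepComplex.space ∨
    ∃ k : ℕ, Nonempty (ContinuousMap.HomotopyEquiv G.indepComplex.space
      (Metric.sphere (0 : EuclideanSpace ℝ (Fin k)) 1)) := by
  have key : ∀ f : V → ℝ,
      ((∃ s ∈ G.indepComplex.faces, ∀ v, f v ≠ 0 → v ∈ s) ∧ (∀ v, 0 ≤ f v) ∧ ∑ v, f v = 1)
      ↔ XP G Finset.univ f := by
    intro f
    constructor
    · rintro ⟨⟨s, hs, hsupp⟩, hnn, hsum⟩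
      exact ⟨fun v _ => Finset.mem_univ v,
        fun v w hv hw => hs.2 v (hsupp v hv) w (hsupp w hw), hnn, hsum⟩
    · rintro ⟨_, hind, hnn, hsum⟩
      refine ⟨⟨Finset.univ.filter (fun v => f v ≠ 0), ⟨?_, ?_⟩, ?_⟩, hnn, hsum⟩
      · obtain ⟨v, _, hv⟩ := Finset.exists_ne_zero_of_sum_ne_zero
          (show ∑ v, f v ≠ 0 by rw [hsum]; norm_num)
        exact ⟨v, Finset.mem_filter.2 ⟨Finset.mem_univ v, hv⟩⟩
      · intro v hv w hw
        exact hind v w (Finset.mem_filter.1 hv).2 (Finset.mem_filter.1 hw).2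
      · intro v hv
        exact Finset.mem_filter.2 ⟨Finset.mem_univ v, hv⟩
  have hom : G.indepComplex.space ≃ₜ Xsp G Finset.univ :=
    { toFun := fun f => ⟨f.1, (key f.1).1 f.2⟩
      invFun := fun f => ⟨f.1, (key f.1).2 f.2⟩
      left_inv := fun f => Subtype.ext rfl
      right_inv := fun f => Subtype.ext rfl
      continuous_toFun := Continuous.subtype_mk continuous_subtype_val _
      continuous_invFun := Continuous.subtype_mk continuous_subtype_val _ }
  rcases main_induction G hG Finset.univ with hctr | ⟨k, ⟨e⟩⟩
  · left
    haveI := hctr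
    exact hom.toHomotopyEquiv.contractibleSpace
  · right
    exact ⟨k, ⟨(hom.toHomotopyEquiv.trans e).trans (octHomeo k).toHomotopyEquiv⟩⟩
end

section
/- Let P be a finite partially ordered set such that there exists a chain C of P intersecting every maximal chain of P. Then the order complex of P (whose simplices are the nonempty chains of P) is contractible. -/
attribute [local instance] Classical.propDecidable

namespace Aux14
open Finset

variable {V : Type} [Fintype V]

noncomputable def Rf (φ : V → V) (f : V → ℝ) : V → ℝ :=
  fun v => ∑ u ∈ Finset.univ.filter (fun u => φ u = v), f u

lemma Rf_sum (φ : V → V) (f : V → ℝ) : ∑ v, Rf φ f v = ∑ u, f u :=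
  Finset.sum_fiberwise_of_maps_to (fun i _ => Finset.mem_univ (φ i)) f

lemma Rf_nonneg (φ : V → V) (f : V → ℝ) (h : ∀ v, 0 ≤ f v) (v : V) : 0 ≤ Rf φ f v :=
  Finset.sum_nonneg fun u _ => h u

lemma Rf_support (φ : V → V) (f : V → ℝ) (v : V) (h : Rf φ f v ≠ 0) :
    ∃ u, φ u = v ∧ f u ≠ 0 := by
  by_contra hc
  push_neg at hc
  exact h (Finset.sum_eq_zero fun u hu => hc u (Finset.mem_filter.mp hu).2)

lemma Rf_cont (φ : V → V) : Continuous (Rf φ) := by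
  apply continuous_pi
  intro v
  exact continuous_finset_sum _ fun u _ => continuous_apply u

lemma Rf_fixed (φ : V → V) (f : V → ℝ) (hfix : ∀ u, f u ≠ 0 → φ u = u) (v : V) :
    Rf φ f v = f v := by
  unfold Rf
  rw [Finset.sum_filter]
  have h1 : ∀ u ∈ Finset.univ, (if φ u = v then f u else 0) = if u = v then f u else 0 := by
    intro u _
    by_cases hu : f u = 0
    · simp [hu]
    · rw [hfix u hu]
  rw [Finset.sum_congr rfl h1, Finset.sum_ite_eq' Finset.univ v f, if_pos (Finset.mem_univ v)]

end Aux14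

namespace Aux14
open Finset ContinuousMap

variable {V : Type} [Fintype V]

noncomputable def rmap (K L : ASC V) (φ : V → V)
    (h1 : ∀ s ∈ K.faces, s.image φ ∈ L.faces) : C(K.space, L.space) where
  toFun f := ⟨Rf φ f.1, by
    obtain ⟨s, hs, hsupp⟩ := f.2.1
    refine ⟨s.image φ, h1 s hs, fun v hv => ?_⟩
    obtain ⟨u, hu1, hu2⟩ := Rf_support φ f.1 v hv
    exact Finset.mem_image.mpr ⟨u, hsupp u hu2, hu1⟩,
    Rf_nonneg φ f.1 f.2.2.1, (Rf_sum φ f.1).trans f.2.2.2⟩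
  continuous_toFun := Continuous.subtype_mk ((Rf_cont φ).comp continuous_subtype_val) _

noncomputable def jmap (K L : ASC V) (h0 : L.faces ⊆ K.faces) : C(L.space, K.space) where
  toFun g := ⟨g.1, by obtain ⟨s, hs, hsupp⟩ := g.2.1; exact ⟨s, h0 hs, hsupp⟩, g.2.2⟩
  continuous_toFun := Continuous.subtype_mk continuous_subtype_val _

noncomputable def domEquiv (K L : ASC V) (φ : V → V)
    (h0 : L.faces ⊆ K.faces)
    (h1 : ∀ s ∈ K.faces, s.image φ ∈ L.faces)
    (h2 : ∀ s ∈ L.faces, ∀ v ∈ s, φ v = v)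
    (h3 : ∀ s ∈ K.faces, s ∪ s.image φ ∈ K.faces) :
    ContinuousMap.HomotopyEquiv K.space L.space where
  toFun := rmap K L φ h1
  invFun := jmap K L h0
  left_inv := by
    refine ⟨⟨⟨fun p => ⟨fun v => (1 - (p.1 : ℝ)) * Rf φ p.2.1 v + (p.1 : ℝ) * p.2.1 v,
        ?_, ?_, ?_⟩, ?_⟩, ?_, ?_⟩⟩
    · -- face condition
      obtain ⟨s, hs, hsupp⟩ := p.2.2.1
      refine ⟨s ∪ s.image φ, h3 s hs, fun v hv => ?_⟩
      rw [Finset.mem_union]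
      by_cases hfv : p.2.1 v = 0
      · have hRv : Rf φ p.2.1 v ≠ 0 := by
          intro h; apply hv; simp [h, hfv]
        obtain ⟨u, hu1, hu2⟩ := Rf_support φ p.2.1 v hRv
        exact Or.inr (Finset.mem_image.mpr ⟨u, hsupp u hu2, hu1⟩)
      · exact Or.inl (hsupp v hfv)
    · -- nonneg
      intro v
      have ht0 : (0:ℝ) ≤ (p.1 : ℝ) := p.1.2.1
      have ht1 : (p.1 : ℝ) ≤ 1 := p.1.2.2
      have := Rf_nonneg φ p.2.1 p.2.2.2.1 v
      have := p.2.2.2.1 v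
      show 0 ≤ (1 - (p.1:ℝ)) * Rf φ p.2.1 v + (p.1:ℝ) * p.2.1 v
      nlinarith
    · -- sum
      show ∑ v, ((1 - (p.1:ℝ)) * Rf φ p.2.1 v + (p.1:ℝ) * p.2.1 v) = 1
      rw [Finset.sum_add_distrib, ← Finset.mul_sum, ← Finset.mul_sum, Rf_sum, p.2.2.2.2]
      ring
    · -- continuity
      apply Continuous.subtype_mk
      apply continuous_pi
      intro v
      have hcoe : Continuous fun p : unitInterval × K.space => (p.1 : ℝ) :=
        continuous_subtype_val.comp continuous_fst
      have hf : Continuous fun p : unitInterval × K.space => p.2.1 :=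
        continuous_subtype_val.comp continuous_snd
      have hRv : Continuous fun p : unitInterval × K.space => Rf φ p.2.1 v :=
        (continuous_apply v).comp ((Rf_cont φ).comp hf)
      exact ((continuous_const.sub hcoe).mul hRv).add (hcoe.mul ((continuous_apply v).comp hf))
    · -- at 0
      intro f
      apply Subtype.ext
      funext v
      show (1 - ((0:unitInterval) : ℝ)) * Rf φ f.1 v + ((0:unitInterval) : ℝ) * f.1 v = _
      simp [ContinuousMap.comp_apply, jmap, rmap]
      rfl
    · -- at 1
      intro f
      apply Subtype.ext
      funext v
      show (1 - ((1:unitInterval) : ℝ)) * Rf φ f.1 v + ((1:unitInterval) : ℝ) * f.1 v = _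
      simp
  right_inv := by
    have : (rmap K L φ h1).comp (jmap K L h0) = ContinuousMap.id L.space := by
      apply ContinuousMap.ext
      intro g
      apply Subtype.ext
      funext v
      show Rf φ g.1 v = g.1 v
      obtain ⟨s, hs, hsupp⟩ := g.2.1
      exact Rf_fixed φ g.1 (fun u hu => h2 s hs u (hsupp u hu)) v
    rw [this]

end Aux14

namespace Aux14
open Finset

lemma contractible_of_subsingleton (X : Type) [TopologicalSpace X] [Subsingleton X]
    (hx : Nonempty X) : ContractibleSpace X := by
  obtain ⟨x0⟩ := hx
  refine ⟨⟨⟨ContinuousMap.const X (), ContinuousMap.const Unit x0, ?_, ?_⟩⟩⟩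
  · have : (ContinuousMap.const Unit x0).comp (ContinuousMap.const X ()) =
        ContinuousMap.id X := ContinuousMap.ext fun y => Subsingleton.elim _ _
    rw [this]
  · have : (ContinuousMap.const X ()).comp (ContinuousMap.const Unit x0) =
        ContinuousMap.id Unit := ContinuousMap.ext fun y => rfl
    rw [this]

variable {P : Type} [Fintype P] [PartialOrder P]

/-- comparable -/
def Cmp (a b : P) : Prop := a ≤ b ∨ b ≤ a

lemma cmp_refl (a : P) : Cmp a a := Or.inl le_rfl

lemma cmp_symm {a b : P} (h : Cmp a b) : Cmp b a := h.symm

lemma chain_cmp {s : Finset P} (h : IsChain (· ≤ ·) (↑s : Set P)) {a b : P}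
    (ha : a ∈ s) (hb : b ∈ s) : Cmp a b := by
  rcases eq_or_ne a b with rfl | hne
  · exact cmp_refl a
  · exact h (Finset.mem_coe.mpr ha) (Finset.mem_coe.mpr hb) hne

lemma chain_insert' {s : Finset P} (h : IsChain (· ≤ ·) (↑s : Set P)) {a : P}
    (ha : ∀ b ∈ s, Cmp a b) : IsChain (· ≤ ·) (↑(insert a s) : Set P) := by
  rw [Finset.coe_insert]
  exact h.insert fun b hb _ => ha b (Finset.mem_coe.mp hb)

/-- maximal chain in ambient finset A -/
def MaxCh (A M : Finset P) : Prop :=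
  M ⊆ A ∧ IsChain (· ≤ ·) (↑M : Set P) ∧
    ∀ N : Finset P, N ⊆ A → IsChain (· ≤ ·) (↑N : Set P) → M ⊆ N → N = M

lemma exists_maxch (A s : Finset P) (hsA : s ⊆ A) (hs : IsChain (· ≤ ·) (↑s : Set P)) :
    ∃ M, MaxCh A M ∧ s ⊆ M := by
  classical
  set T := A.powerset.filter (fun t => s ⊆ t ∧ IsChain (· ≤ ·) (↑t : Set P)) with hT
  have hsT : s ∈ T := by
    rw [hT, Finset.mem_filter, Finset.mem_powerset]
    exact ⟨hsA, Finset.Subset.refl s, hs⟩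
  obtain ⟨M, hM, hmax⟩ := T.exists_max_image Finset.card ⟨s, hsT⟩
  rw [hT, Finset.mem_filter, Finset.mem_powerset] at hM
  refine ⟨M, ⟨hM.1, hM.2.2, fun N hNA hNch hMN => ?_⟩, hM.2.1⟩
  have hNT : N ∈ T := by
    rw [hT, Finset.mem_filter, Finset.mem_powerset]
    exact ⟨hNA, hM.2.1.trans hMN, hNch⟩
  exact (Finset.eq_of_subset_of_card_le hMN (hmax N hNT)).symm

lemma maxch_nonempty {A M : Finset P} (hA : A.Nonempty) (hM : MaxCh A M) : M.Nonempty := by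
  rcases M.eq_empty_or_nonempty with rfl | h
  · obtain ⟨a, ha⟩ := hA
    have := hM.2.2 {a} (Finset.singleton_subset_iff.mpr ha)
      (by rw [Finset.coe_singleton]; exact Set.subsingleton_singleton.isChain)
      (Finset.empty_subset _)
    simp at this
  · exact h

lemma maxch_mem_of_cmp {A M : Finset P} (hM : MaxCh A M) {c : P} (hcA : c ∈ A)
    (hc : ∀ w ∈ M, Cmp c w) : c ∈ M := by
  have hch := chain_insert' hM.2.1 hc
  have hins : insert c M = M := hM.2.2 (insert c M)
    (Finset.insert_subset hcA hM.1) hch (Finset.subset_insert c M)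
  rw [← hins]
  exact Finset.mem_insert_self c M

/-- lifting maximal chains of `A.erase x` to maximal chains of `A`. -/
lemma maxch_erase_lift {A M : Finset P} (x : P) (hM : MaxCh (A.erase x) M) :
    ∃ M₂, MaxCh A M₂ ∧ M ⊆ M₂ ∧ M₂ ⊆ insert x M := by
  obtain ⟨M₂, hM₂, hMM₂⟩ := exists_maxch A M (hM.1.trans (A.erase_subset x)) hM.2.1
  refine ⟨M₂, hM₂, hMM₂, ?_⟩
  have hxM : x ∉ M := fun hx => (Finset.mem_erase.mp (hM.1 hx)).1 rfl
  have h1 : M ⊆ M₂.erase x := fun a ha =>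
    Finset.mem_erase.mpr ⟨fun he => hxM (he ▸ ha), hMM₂ ha⟩
  have h2 : M₂.erase x = M := hM.2.2 (M₂.erase x)
    (fun a ha => Finset.mem_erase.mpr ⟨(Finset.mem_erase.mp ha).1, hM₂.1 (Finset.mem_of_mem_erase ha)⟩)
    (hM₂.2.1.mono (by exact_mod_cast (M₂.erase_subset x))) h1
  intro a ha
  rcases eq_or_ne a x with rfl | hax
  · exact Finset.mem_insert_self _ _
  · exact Finset.mem_insert_of_mem (h2 ▸ Finset.mem_erase.mpr ⟨hax, ha⟩)

/-- greatest element of a nonempty finite chain -/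
lemma chain_greatest {s : Finset P} (hne : s.Nonempty) (hch : IsChain (· ≤ ·) (↑s : Set P)) :
    ∃ m ∈ s, ∀ b ∈ s, b ≤ m := by
  obtain ⟨m, hm, hmax⟩ := s.exists_maximal hne
  refine ⟨m, hm, fun b hb => ?_⟩
  rcases chain_cmp hch hb hm with h | h
  · exact h
  · rcases eq_or_lt_of_le h with rfl | hlt
    · exact le_rfl
    · exact (lt_irrefl m (lt_of_lt_of_le hlt (hmax hb hlt.le))).elim

end Aux14

namespace Aux14
open Finset

set_option linter.unusedSectionVars false

variable {P : Type} [Fintype P] [PartialOrder P]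

/-- Hypothesis: chain C meets all maximal chains of A. -/
def Meets (A C : Finset P) : Prop :=
  C ⊆ A ∧ IsChain (· ≤ ·) (↑C : Set P) ∧ ∀ M, MaxCh A M → (C ∩ M).Nonempty

lemma meets_erase_of_not_mem {A C : Finset P} (h : Meets A C) {x : P} (hx : x ∉ C) :
    Meets (A.erase x) C := by
  refine ⟨fun c hc => Finset.mem_erase.mpr ⟨fun he => hx (he ▸ hc), h.1 hc⟩, h.2.1, ?_⟩
  intro M hM
  obtain ⟨M₂, hM₂, hMM₂, hM₂M⟩ := maxch_erase_lift x hM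
  obtain ⟨c, hc⟩ := h.2.2 M₂ hM₂
  rw [Finset.mem_inter] at hc
  have hcx : c ≠ x := fun he => hx (he ▸ hc.1)
  have : c ∈ insert x M := hM₂M hc.2
  exact ⟨c, Finset.mem_inter.mpr ⟨hc.1, (Finset.mem_insert.mp this).resolve_left hcx⟩⟩

/-- KEY LEMMA: if `C` meets all maximal chains of `A` and `1 < |A|`, there is a dominated
vertex `x` with dominator `y`, such that the hypothesis persists on `A.erase x`. -/
lemma keyB : ∀ n : ℕ, ∀ A C : Finset P, C.card ≤ n → Meets A C → 1 < A.card →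
    ∃ x ∈ A, ∃ y ∈ A.erase x, (∀ z ∈ A, Cmp z x → Cmp z y) ∧
      ∃ C', Meets (A.erase x) C' := by
  intro n
  induction n with
  | zero =>
    intro A C hC hM hA
    -- C empty: but C meets the (nonempty) maximal chain of A, contradiction
    obtain ⟨M, hMax, -⟩ := exists_maxch A ∅ (Finset.empty_subset A)
      (by rw [Finset.coe_empty]; exact IsChain.empty)
    obtain ⟨c, hc⟩ := hM.2.2 M hMax
    rw [Nat.le_zero, Finset.card_eq_zero] at hC
    rw [hC] at hc
    simp at hc
  | succ n ih =>
    intro A C hCcard hM hA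
    by_cases hAC : A ⊆ C
    -- Case: A = C is a chain
    · have hAeq : A = C := Finset.Subset.antisymm hAC hM.1
      have hAch : IsChain (· ≤ ·) (↑A : Set P) := hAeq ▸ hM.2.1
      obtain ⟨x, hx, y, hy, hxy⟩ := Finset.one_lt_card.mp hA
      refine ⟨x, hx, y, Finset.mem_erase.mpr ⟨fun h => hxy h.symm, hy⟩,
        fun z hz _ => ?_, A.erase x, ?_⟩
      · exact chain_cmp hAch hz hy
      · refine ⟨Finset.Subset.refl _, hAch.mono (by exact_mod_cast A.erase_subset x), ?_⟩
        intro M hMx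
        have hMsub : M ⊆ A.erase x := hMx.1
        have : A.erase x ⊆ M := by
          intro a ha
          exact maxch_mem_of_cmp hMx ha fun w hw =>
            chain_cmp hAch (Finset.mem_of_mem_erase ha) (Finset.mem_of_mem_erase (hMsub hw))
        have hMeq : M = A.erase x := Finset.Subset.antisymm hMsub this
        have : (A.erase x).Nonempty :=
          ⟨y, Finset.mem_erase.mpr ⟨fun h => hxy h.symm, hy⟩⟩
        obtain ⟨a, ha⟩ := this
        exact ⟨a, Finset.mem_inter.mpr ⟨ha, hMeq ▸ ha⟩⟩
    -- Case: there is x₀ ∈ A \ C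
    · obtain ⟨x₀, hx₀A, hx₀C⟩ := Finset.not_subset.mp hAC
      have hCne : C.Nonempty := by
        obtain ⟨M, hMax, -⟩ := exists_maxch A ∅ (Finset.empty_subset A)
          (by rw [Finset.coe_empty]; exact IsChain.empty)
        obtain ⟨c, hc⟩ := hM.2.2 M hMax
        exact ⟨c, (Finset.mem_inter.mp hc).1⟩
      by_cases hC1 : C.card = 1
      -- |C| = 1 : the unique element of C is comparable to everything
      · obtain ⟨c, hc⟩ := Finset.card_eq_one.mp hC1
        have huniv : ∀ z ∈ A, Cmp z c := by
          intro z hz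
          obtain ⟨M, hMax, hzM⟩ := exists_maxch A {z} (Finset.singleton_subset_iff.mpr hz)
            (by rw [Finset.coe_singleton]; exact Set.subsingleton_singleton.isChain)
          obtain ⟨c', hc'⟩ := hM.2.2 M hMax
          rw [Finset.mem_inter, hc, Finset.mem_singleton] at hc'
          rw [← hc'.1]
          exact chain_cmp hMax.2.1 (hzM (Finset.mem_singleton_self z)) hc'.2
        have hcx : c ≠ x₀ := fun h => hx₀C (h ▸ hc ▸ Finset.mem_singleton_self c)
        refine ⟨x₀, hx₀A, c, Finset.mem_erase.mpr ⟨hcx, hM.1 (hc ▸ Finset.mem_singleton_self c)⟩,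
          fun z hz _ => huniv z hz, C, meets_erase_of_not_mem hM hx₀C⟩
      -- |C| ≥ 2
      · have hC2 : 1 < C.card := by
          have := Finset.Nonempty.card_pos hCne
          omega
        obtain ⟨cm, hcmC, hcmmax⟩ := chain_greatest hCne hM.2.1
        by_cases hcase : ∀ M, MaxCh A M → ((C.erase cm) ∩ M).Nonempty
        -- Case (i): C \ {cm} still meets everything; recurse
        · apply ih A (C.erase cm)
          · have := Finset.card_erase_of_mem hcmC
            omega
          · exact ⟨(C.erase_subset cm).trans hM.1,
              hM.2.1.mono (by exact_mod_cast C.erase_subset cm), hcase⟩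
          · exact hA
        -- Case (ii): some maximal chain M₀ meets C only at cm
        · push_neg at hcase
          obtain ⟨M₀, hM₀, hM₀cap⟩ := hcase
          have hcmM₀ : cm ∈ M₀ := by
            obtain ⟨c, hc⟩ := hM.2.2 M₀ hM₀
            rw [Finset.mem_inter] at hc
            rcases eq_or_ne c cm with rfl | hne
            · exact hc.2
            · exact absurd (Finset.mem_inter.mpr ⟨Finset.mem_erase.mpr ⟨hne, hc.1⟩, hc.2⟩)
                (by rw [hM₀cap]; exact Finset.notMem_empty c)
          set D := M₀.filter (fun w => w < cm) with hD
          have hCecm : (C.erase cm).Nonempty := by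
            rw [← Finset.card_pos, Finset.card_erase_of_mem hcmC]
            omega
          have hDne : D.Nonempty := by
            by_contra hDe
            rw [Finset.not_nonempty_iff_eq_empty] at hDe
            -- then cm is the bottom of M₀, and M₀ ∪ (C \ {cm}) is a bigger chain
            have hbot : ∀ w ∈ M₀, cm ≤ w := by
              intro w hw
              rcases chain_cmp hM₀.2.1 hw hcmM₀ with h | h
              · rcases eq_or_lt_of_le h with rfl | hlt
                · exact le_rfl
                · have hwD : w ∈ D := Finset.mem_filter.mpr ⟨hw, hlt⟩
                  rw [hDe] at hwD
                  exact absurd hwD (Finset.notMem_empty w)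
              · exact h
            set N := M₀ ∪ C.erase cm with hN
            have hNch : IsChain (· ≤ ·) (↑N : Set P) := by
              intro a ha b hb hab
              rw [hN] at ha hb
              simp only [Finset.coe_union, Set.mem_union, Finset.mem_coe] at ha hb
              rcases ha with ha | ha <;> rcases hb with hb | hb
              · exact chain_cmp hM₀.2.1 ha hb
              · exact Or.inr (((hcmmax b (Finset.mem_of_mem_erase hb)).trans (hbot a ha)))
              · exact Or.inl (((hcmmax a (Finset.mem_of_mem_erase ha)).trans (hbot b hb)))
              · exact chain_cmp hM.2.1 (Finset.mem_of_mem_erase ha) (Finset.mem_of_mem_erase hb)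
            have hNA : N ⊆ A := Finset.union_subset hM₀.1 ((C.erase_subset cm).trans hM.1)
            have hNeq : N = M₀ := hM₀.2.2 N hNA hNch (Finset.subset_union_left)
            obtain ⟨c, hc⟩ := hCecm
            have : c ∈ M₀ := hNeq ▸ (Finset.mem_union_right M₀ hc)
            exact absurd (Finset.mem_inter.mpr ⟨hc, this⟩)
              (by rw [hM₀cap]; exact Finset.notMem_empty c)
          -- x = greatest element of D
          have hDch : IsChain (· ≤ ·) (↑D : Set P) :=
            hM₀.2.1.mono (by exact_mod_cast M₀.filter_subset _)
          obtain ⟨x, hxD, hxmax⟩ := chain_greatest hDne hDch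
          have hxM₀ : x ∈ M₀ := (Finset.mem_filter.mp hxD).1
          have hxcm : x < cm := (Finset.mem_filter.mp hxD).2
          have hxC : x ∉ C := by
            intro hxC
            exact absurd (Finset.mem_inter.mpr
              ⟨Finset.mem_erase.mpr ⟨ne_of_lt hxcm, hxC⟩, hxM₀⟩)
              (by rw [hM₀cap]; exact Finset.notMem_empty x)
          refine ⟨x, hM₀.1 hxM₀, cm, Finset.mem_erase.mpr ⟨(ne_of_lt hxcm).symm, hM.1 hcmC⟩,
            ?_, C, meets_erase_of_not_mem hM hxC⟩
          -- domination: any z comparable to x is comparable to cm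
          intro z hzA hzx
          rcases hzx with hzx | hzx
          · exact Or.inl (le_of_lt (lt_of_le_of_lt hzx hxcm))
          · -- x ≤ z; suppose z not comparable to cm
            by_contra hzcm
            have hzne : z ≠ cm := fun h => hzcm (h ▸ cmp_refl z)
            -- the chain D ∪ {z} extends to a maximal chain M₁ which meets C at some c
            have hSch : IsChain (· ≤ ·) (↑(insert z D) : Set P) :=
              chain_insert' hDch fun b hb => Or.inr ((hxmax b hb).trans hzx)
            have hSA : insert z D ⊆ A :=
              Finset.insert_subset hzA ((M₀.filter_subset _).trans hM₀.1)
            obtain ⟨M₁, hM₁, hSM₁⟩ := exists_maxch A _ hSA hSch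
            obtain ⟨c, hc⟩ := hM.2.2 M₁ hM₁
            rw [Finset.mem_inter] at hc
            have hccm : c ≠ cm := by
              intro h
              apply hzcm
              exact cmp_symm (chain_cmp hM₁.2.1 (h ▸ hc.2)
                (hSM₁ (Finset.mem_insert_self z D)))
            -- c is comparable to everything in M₀, hence in M₀: contradiction
            have hcM₀ : c ∈ M₀ := by
              apply maxch_mem_of_cmp hM₀ (hM.1 hc.1)
              intro w hw
              rcases chain_cmp hM₀.2.1 hw hcmM₀ with hwcm | hwcm
              · rcases eq_or_lt_of_le hwcm with rfl | hlt
                · exact Or.inl (hcmmax c hc.1)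
                · -- w < cm so w ∈ D ⊆ M₁, and c ∈ M₁
                  have hwD : w ∈ D := Finset.mem_filter.mpr ⟨hw, hlt⟩
                  exact cmp_symm (chain_cmp hM₁.2.1
                    (hSM₁ (Finset.mem_insert_of_mem hwD)) hc.2)
              · exact Or.inl ((hcmmax c hc.1).trans hwcm)
            exact absurd (Finset.mem_inter.mpr ⟨Finset.mem_erase.mpr ⟨hccm, hc.1⟩, hcM₀⟩)
              (by rw [hM₀cap]; exact Finset.notMem_empty c)

end Aux14

namespace Aux14
open Finset

set_option linter.unusedSectionVars false

variable {P : Type} [Fintype P] [PartialOrder P]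

/-- The order complex restricted to a sub-finset `A`. -/
def KA (A : Finset P) : ASC P where
  faces := {s | s.Nonempty ∧ s ⊆ A ∧ IsChain (· ≤ ·) (↑s : Set P)}
  nonempty_of_mem s hs := hs.1
  down_closed s hs t hts htne :=
    ⟨htne, hts.trans hs.2.1, hs.2.2.mono (Finset.coe_subset.mpr hts)⟩

lemma contractKA : ∀ n : ℕ, ∀ A : Finset P, A.card ≤ n → A.Nonempty →
    (∃ C, Meets A C) → ContractibleSpace (KA A).space := by
  intro n
  induction n with
  | zero =>
    intro A hcard hne _
    rw [Nat.le_zero, Finset.card_eq_zero] at hcard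
    exact absurd hcard (Finset.nonempty_iff_ne_empty.mp hne)
  | succ n ih =>
    intro A hcard hne hC
    rcases Nat.lt_or_ge 1 A.card with hA2 | hA1
    -- inductive step: delete a dominated vertex
    · obtain ⟨C, hC⟩ := hC
      obtain ⟨x, hxA, y, hy, hdom, C', hC'⟩ := keyB C.card A C le_rfl hC hA2
      have hyx : y ≠ x := (Finset.mem_erase.mp hy).1
      have hyA : y ∈ A := (Finset.mem_erase.mp hy).2
      set φ : P → P := fun v => if v = x then y else v with hφ
      -- h0
      have h0 : (KA (A.erase x)).faces ⊆ (KA A).faces := by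
        intro s hs
        exact ⟨hs.1, hs.2.1.trans (A.erase_subset x), hs.2.2⟩
      -- image lemma: if x ∉ s then image φ s = s
      have himid : ∀ s : Finset P, x ∉ s → s.image φ = s := by
        intro s hxs
        rw [show s.image φ = s.image id from Finset.image_congr
          (fun v hv => by
            simp only [hφ, id_eq]
            exact if_neg (fun h : v = x => hxs (h ▸ hv))),
          Finset.image_id]
      have hsubins : ∀ s : Finset P, s.image φ ⊆ insert y s := by
        intro s w hw
        obtain ⟨v, hv, rfl⟩ := Finset.mem_image.mp hw
        by_cases hvx : v = x
        · simp [hφ, hvx]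
        · simp only [hφ, if_neg hvx]
          exact Finset.mem_insert_of_mem hv
      have hinschain : ∀ s ∈ (KA A).faces, x ∈ s →
          IsChain (· ≤ ·) (↑(insert y s) : Set P) := by
        intro s hs hxs
        apply chain_insert' hs.2.2
        intro b hb
        exact cmp_symm (hdom b (hs.2.1 hb) (chain_cmp hs.2.2 hb hxs))
      -- h1
      have h1 : ∀ s ∈ (KA A).faces, s.image φ ∈ (KA (A.erase x)).faces := by
        intro s hs
        refine ⟨hs.1.image φ, ?_, ?_⟩
        · intro w hw
          obtain ⟨v, hv, rfl⟩ := Finset.mem_image.mp hw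
          by_cases hvx : v = x
          · simpa [hφ, hvx] using hy
          · simp only [hφ, if_neg hvx]
            exact Finset.mem_erase.mpr ⟨hvx, hs.2.1 hv⟩
        · by_cases hxs : x ∈ s
          · exact (hinschain s hs hxs).mono (Finset.coe_subset.mpr (hsubins s))
          · rw [himid s hxs]; exact hs.2.2
      -- h2
      have h2 : ∀ s ∈ (KA (A.erase x)).faces, ∀ v ∈ s, φ v = v := by
        intro s hs v hv
        exact if_neg (Finset.mem_erase.mp (hs.2.1 hv)).1
      -- h3
      have h3 : ∀ s ∈ (KA A).faces, s ∪ s.image φ ∈ (KA A).faces := by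
        intro s hs
        by_cases hxs : x ∈ s
        · refine ⟨hs.1.mono Finset.subset_union_left, ?_, ?_⟩
          · apply Finset.union_subset hs.2.1
            intro w hw
            have := hsubins s hw
            rcases Finset.mem_insert.mp this with rfl | h
            · exact hyA
            · exact hs.2.1 h
          · refine IsChain.mono ?_ (hinschain s hs hxs)
            apply Finset.coe_subset.mpr
            apply Finset.union_subset (Finset.subset_insert y s) (hsubins s)
        · rw [himid s hxs, Finset.union_self]; exact hs
      have hrec : ContractibleSpace (KA (A.erase x)).space := by
        apply ih (A.erase x)
        · rw [Finset.card_erase_of_mem hxA]; omega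
        · exact ⟨y, hy⟩
        · exact ⟨C', hC'⟩
      exact (domEquiv (KA A) (KA (A.erase x)) φ h0 h1 h2 h3).contractibleSpace
    -- base case: A is a singleton
    · obtain ⟨v, rfl⟩ : ∃ v, A = {v} := by
        obtain ⟨v, hv⟩ := hne
        exact ⟨v, Finset.eq_singleton_iff_unique_mem.mpr
          ⟨hv, fun w hw => by
            by_contra hwv
            have : 1 < A.card := Finset.one_lt_card.mpr ⟨w, hw, v, hv, hwv⟩
            omega⟩⟩
      have hsub : ∀ f : (KA ({v} : Finset P)).space, ∀ w, w ≠ v → f.1 w = 0 := by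
        intro f w hw
        by_contra hfw
        obtain ⟨s, hs, hsupp⟩ := f.2.1
        have := hs.2.1 (hsupp w hfw)
        rw [Finset.mem_singleton] at this
        exact hw this
      have hval : ∀ f : (KA ({v} : Finset P)).space, f.1 v = 1 := by
        intro f
        have hsum := f.2.2.2
        rw [Finset.sum_eq_single_of_mem v (Finset.mem_univ v)
          (fun w _ hwv => hsub f w hwv)] at hsum
        exact hsum
      have : Subsingleton (KA ({v} : Finset P)).space := by
        constructor
        intro f g
        apply Subtype.ext
        funext w
        rcases eq_or_ne w v with rfl | hwv
        · rw [hval f, hval g]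
        · rw [hsub f w hwv, hsub g w hwv]
      have hne' : Nonempty (KA ({v} : Finset P)).space := by
        refine ⟨⟨fun w => if w = v then 1 else 0, ⟨{v}, ⟨Finset.singleton_nonempty v,
          Finset.Subset.refl _, by rw [Finset.coe_singleton]
                                   exact Set.subsingleton_singleton.isChain⟩,
          fun w hw => by
            rw [Finset.mem_singleton]
            by_contra hwv
            exact hw (if_neg hwv)⟩, ?_, ?_⟩⟩
        · intro w
          by_cases hwv : w = v <;> simp [hwv]
        · rw [Finset.sum_ite_eq' Finset.univ v (fun _ => (1:ℝ)), if_pos (Finset.mem_univ v)]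
      exact contractible_of_subsingleton _ hne'

end Aux14

namespace Aux14

lemma ASC_ext_faces {V : Type} {K L : ASC V} (h : K.faces = L.faces) : K = L := by
  cases K; cases L; cases h; rfl

end Aux14


/-- If a finite poset has a chain meeting every maximal chain, then its
order complex is contractible. -/
theorem statement14 {P : Type} [Fintype P] [PartialOrder P]
    (C : Set P) (hC : IsChain (· ≤ ·) C)
    (hmeet : ∀ M : Set P, IsMaxChain (· ≤ ·) M → (C ∩ M).Nonempty) :
    ContractibleSpace (ASC.space
      { faces := {s : Finset P | s.Nonempty ∧ IsChain (· ≤ ·) (↑s : Set P)}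
        nonempty_of_mem := fun s hs => hs.1
        down_closed := fun s hs t hts htne =>
          ⟨htne, hs.2.mono (Finset.coe_subset.mpr hts)⟩ }) := by
  classical
  cases isEmpty_or_nonempty P with
  | inl hemp =>
    exfalso
    have hmax : IsMaxChain (· ≤ ·) (∅ : Set P) := by
      constructor
      · exact IsChain.empty
      · intro t _ _
        ext a
        exact (hemp.false a).elim
    obtain ⟨c, -⟩ := hmeet ∅ hmax
    exact hemp.false c
  | inr hne =>
    haveI := hne
    have hKeq : (⟨{s : Finset P | s.Nonempty ∧ IsChain (· ≤ ·) (↑s : Set P)},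
        fun s hs => hs.1,
        fun s hs t hts htne =>
          ⟨htne, hs.2.mono (Finset.coe_subset.mpr hts)⟩⟩ : ASC P)
        = Aux14.KA (Finset.univ : Finset P) := by
      apply Aux14.ASC_ext_faces
      ext s
      simp only [Aux14.KA, Set.mem_setOf_eq, Finset.subset_univ, true_and]
    rw [hKeq]
    apply Aux14.contractKA (Fintype.card P) Finset.univ (le_of_eq Finset.card_univ)
      Finset.univ_nonempty
    refine ⟨(Set.toFinite C).toFinset, Finset.subset_univ _, ?_, ?_⟩
    · rw [Set.Finite.coe_toFinset]
      exact hC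
    · intro M hM
      have hMmax : IsMaxChain (· ≤ ·) (↑M : Set P) := by
        refine ⟨hM.2.1, fun N hNch hsub => ?_⟩
        have hNfin : N.Finite := Set.toFinite N
        have hNcoe : (↑hNfin.toFinset : Set P) = N := hNfin.coe_toFinset
        have hMN : M ⊆ hNfin.toFinset := by
          intro a ha
          rw [Set.Finite.mem_toFinset]
          exact hsub (Finset.mem_coe.mpr ha)
        have := hM.2.2 hNfin.toFinset (Finset.subset_univ _)
          (by rw [hNcoe]; exact hNch) hMN
        rw [← hNcoe, this]
      obtain ⟨c, hcC, hcM⟩ := hmeet (↑M) hMmax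
      exact ⟨c, Finset.mem_inter.mpr ⟨(Set.Finite.mem_toFinset _).mpr hcC,
        Finset.mem_coe.mp hcM⟩⟩
end
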